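/- arXiv:math/0001184 — 7 statements merged into one kernel-verified Lean document; each statement's English description precedes it below -/
import Mathlib

section
/- Let g be a simple complex Lie algebra, α, β ∈ Δ roots with α ≠ ±β, and let S = S(α,β) = {j ∈ ℤ : β + jα ∈ Δ} be the α-string through β. Then in the universal enveloping algebra U(g), Σ_{j∈S} [e_α, e_{β+jα} e_{-β-jα}] = 0. -/
attribute [local instance 100] LieRing.ofAssociativeRing

/-!
STATEMENT 1. `g` is a simple complex Lie algebra with (finite) root system `Δ`,
root vectors `e γ` normalized by `B (e γ) (e (-γ)) = 1` for the invariant symmetric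
form `B`, structure constants `N` (so `⁅e γ, e δ⁆ = N γ δ • e (γ+δ)` when `γ+δ ∈ Δ`,
and the bracket vanishes when `γ+δ` is neither a root nor `0`).  For roots
`α ≠ ±β` the root string `S = {j : ℤ | β + jα ∈ Δ}` is a finite interval of
consecutive integers.  Then in `U(g)`, `∑ _{j∈S} [e_α, e_{β+jα} e_{-β-jα}] = 0`. -/
theorem root_string_sum_bracket_eplus
    {R : Type*} [AddCommGroup R] {L : Type*} [LieRing L] [LieAlgebra ℂ L]
    (Δ : Finset R) (e : R → L) (B : L →ₗ[ℂ] L →ₗ[ℂ] ℂ)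
    (hBsymm : ∀ x y : L, B x y = B y x)
    (hBinv : ∀ x y z : L, B ⁅x, y⁆ z = B x ⁅y, z⁆)
    (hnegmem : ∀ γ ∈ Δ, -γ ∈ Δ)
    (hnorm : ∀ γ ∈ Δ, B (e γ) (e (-γ)) = 1)
    (N : R → R → ℂ)
    (hbr : ∀ γ ∈ Δ, ∀ δ ∈ Δ, γ + δ ∈ Δ → ⁅e γ, e δ⁆ = N γ δ • e (γ + δ))
    (hvanish : ∀ γ ∈ Δ, ∀ δ ∈ Δ, γ + δ ≠ 0 → γ + δ ∉ Δ → ⁅e γ, e δ⁆ = 0)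
    {α β : R} (hα : α ∈ Δ) (hβ : β ∈ Δ) (h1 : β ≠ α) (h2 : β ≠ -α)
    (S : Finset ℤ) (hS : ∀ j : ℤ, j ∈ S ↔ β + j • α ∈ Δ)
    (hstring : ∃ p q : ℤ, (S : Set ℤ) = Set.Icc p q) :
    ∑ j ∈ S,
      ⁅(UniversalEnvelopingAlgebra.ι ℂ : L →ₗ⁅ℂ⁆ _) (e α),
        (UniversalEnvelopingAlgebra.ι ℂ : L →ₗ⁅ℂ⁆ _) (e (β + j • α)) *
          (UniversalEnvelopingAlgebra.ι ℂ : L →ₗ⁅ℂ⁆ _) (e (-(β + j • α)))⁆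
      = (0 : UniversalEnvelopingAlgebra ℂ L) := by
  obtain ⟨p, q, hpq⟩ := hstring
  have hmemIcc : ∀ j : ℤ, j ∈ S ↔ p ≤ j ∧ j ≤ q := by
    intro j
    rw [← Finset.mem_coe, hpq, Set.mem_Icc]
  -- if β + k•α = 0, then k ∈ S (interval argument)
  have hzero : ∀ k : ℤ, β + k • α = 0 → k ∈ S := by
    intro k hk
    by_contra hkS
    have h0 : (0:ℤ) ∈ S := by rw [hS]; simpa using hβ
    have hka : k • α = -β := eq_neg_of_add_eq_zero_right hk
    have h2k : (2*k) ∈ S := by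
      rw [hS]
      have h2 : β + (2*k) • α = -β := by
        rw [two_mul, add_smul, ← add_assoc, hk, zero_add, hka]
      rw [h2]; exact hnegmem β hβ
    rw [hmemIcc] at h0 h2k hkS
    omega
  -- arithmetic helpers
  have harith1 : ∀ j : ℤ, α + (β + j • α) = β + (j+1) • α := by
    intro j; rw [add_smul, one_smul]; abel
  have harith2 : ∀ j : ℤ, α + -(β + j • α) = -(β + (j-1) • α) := by
    intro j; rw [sub_smul, one_smul]; abel
  -- sign lemma
  have key : ∀ j : ℤ, j ∈ S → (j+1) ∈ S →
      N α (-(β + (j+1) • α)) = -(N α (β + j • α)) := by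
    intro j hj hj1
    set γ := β + j • α with hγdef
    set δ := β + (j+1) • α with hδdef
    have hγ : γ ∈ Δ := (hS j).mp hj
    have hδ : δ ∈ Δ := (hS _).mp hj1
    have hαγ : α + γ = δ := harith1 j
    have hsum1 : γ + -δ = -α := by rw [← hαγ]; abel
    have hsum2 : α + -δ = -γ := by rw [← hαγ]; abel
    have hnδ : -δ ∈ Δ := hnegmem δ hδ
    have e1 : ⁅e α, e γ⁆ = N α γ • e δ := by
      have := hbr α hα γ hγ (by rw [hαγ]; exact hδ); rwa [hαγ] at this
    have e2 : ⁅e α, e (-δ)⁆ = N α (-δ) • e (-γ) := by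
      have := hbr α hα (-δ) hnδ (by rw [hsum2]; exact hnegmem γ hγ)
      rwa [hsum2] at this
    have e3 : ⁅e γ, e (-δ)⁆ = N γ (-δ) • e (-α) := by
      have := hbr γ hγ (-δ) hnδ (by rw [hsum1]; exact hnegmem α hα)
      rwa [hsum1] at this
    have X1 : B ⁅e α, e γ⁆ (e (-δ)) = N α γ := by
      rw [e1, map_smul, LinearMap.smul_apply, hnorm δ hδ, smul_eq_mul, mul_one]
    have X2 : B (e α) ⁅e γ, e (-δ)⁆ = N γ (-δ) := by
      rw [e3, map_smul, hnorm α hα, smul_eq_mul, mul_one]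
    have hX : N α γ = N γ (-δ) := by rw [← X1, ← X2, hBinv]
    have Y1 : B ⁅e α, e (-δ)⁆ (e γ) = N α (-δ) := by
      rw [e2, map_smul, LinearMap.smul_apply, hBsymm, hnorm γ hγ, smul_eq_mul, mul_one]
    have e4 : ⁅e (-δ), e γ⁆ = -(N γ (-δ) • e (-α)) := by
      rw [← e3, ← lie_skew]
    have Y2 : B (e α) ⁅e (-δ), e γ⁆ = -(N γ (-δ)) := by
      rw [e4, map_neg, map_smul, hnorm α hα, smul_eq_mul, mul_one]
    rw [← hδdef] at *
    rw [show N α (-δ) = -(N γ (-δ)) from by rw [← Y1, ← Y2, hBinv], ← hX]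
  set ι' := (UniversalEnvelopingAlgebra.ι ℂ : L →ₗ⁅ℂ⁆ UniversalEnvelopingAlgebra ℂ L) with hι'
  set G : ℤ → UniversalEnvelopingAlgebra ℂ L := fun j =>
    if j ∈ S ∧ j + 1 ∈ S then
      N α (β + j • α) • (ι' (e (β + (j+1) • α)) * ι' (e (-(β + j • α)))) else 0
    with hG
  have lie_mul' : ∀ x a b : UniversalEnvelopingAlgebra ℂ L,
      ⁅x, a * b⁆ = ⁅x, a⁆ * b + a * ⁅x, b⁆ := by
    intro x a b
    simp only [LieRing.of_associative_ring_bracket]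
    noncomm_ring
  have hterm : ∀ j ∈ S,
      ⁅ι' (e α), ι' (e (β + j • α)) * ι' (e (-(β + j • α)))⁆ = G j - G (j-1) := by
    intro j hj
    have hjΔ : β + j • α ∈ Δ := (hS j).mp hj
    rw [lie_mul', ← LieHom.map_lie, ← LieHom.map_lie]
    have TA : ι' ⁅e α, e (β + j • α)⁆ * ι' (e (-(β + j • α))) = G j := by
      by_cases hj1 : j + 1 ∈ S
      · have hbrx := hbr α hα (β + j • α) hjΔ
          (by rw [harith1]; exact (hS _).mp hj1)
        rw [harith1] at hbrx
        rw [hbrx, map_smul, smul_mul_assoc, hG]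
        simp only [if_pos (And.intro hj hj1)]
      · have hne : α + (β + j • α) ≠ 0 := by
          rw [harith1]
          intro h; exact hj1 (hzero _ h)
        have hnΔ : α + (β + j • α) ∉ Δ := by
          rw [harith1]; intro h; exact hj1 ((hS _).mpr h)
        rw [hvanish α hα (β + j • α) hjΔ hne hnΔ, map_zero, zero_mul, hG]
        simp only [if_neg (show ¬(j ∈ S ∧ j + 1 ∈ S) from fun h => hj1 h.2)]
    have TB : ι' (e (β + j • α)) * ι' ⁅e α, e (-(β + j • α))⁆ = -(G (j-1)) := by
      have hnjΔ : -(β + j • α) ∈ Δ := hnegmem _ hjΔ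
      by_cases hj0 : j - 1 ∈ S
      · have hj0Δ : β + (j-1) • α ∈ Δ := (hS _).mp hj0
        have hbrx := hbr α hα (-(β + j • α)) hnjΔ
          (by rw [harith2]; exact hnegmem _ hj0Δ)
        rw [harith2] at hbrx
        have hj' : (j - 1) + 1 ∈ S := by rw [sub_add_cancel]; exact hj
        have hkey := key (j-1) hj0 hj'
        rw [sub_add_cancel] at hkey
        rw [hbrx, hkey, map_smul, mul_smul_comm, hG]
        simp only [if_pos (And.intro hj0 hj'), sub_add_cancel, neg_smul]
        simp only [if_pos (show j - 1 ∈ S ∧ j ∈ S from ⟨hj0, hj⟩)]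
      · have hne : α + -(β + j • α) ≠ 0 := by
          rw [harith2, neg_ne_zero]
          intro h; exact hj0 (hzero _ h)
        have hnΔ : α + -(β + j • α) ∉ Δ := by
          rw [harith2]; intro h
          have := hnegmem _ h
          rw [neg_neg] at this
          exact hj0 ((hS _).mpr this)
        rw [hvanish α hα (-(β + j • α)) hnjΔ hne hnΔ, map_zero, mul_zero, hG]
        simp only [if_neg (show ¬((j-1) ∈ S ∧ (j-1)+1 ∈ S) from fun h => hj0 h.1), neg_zero]
    rw [TA, TB, ← sub_eq_add_neg]
  rw [Finset.sum_congr rfl hterm, Finset.sum_sub_distrib]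
  have hshift : ∑ j ∈ S, G (j - 1) = ∑ j ∈ S.image (fun x => x - 1), G j :=
    (Finset.sum_image (fun a _ b _ h => by omega)).symm
  have hGS : ∀ j, G j ≠ 0 → (j ∈ S ∧ j + 1 ∈ S) := by
    intro j h
    by_contra hc
    exact h (by rw [hG]; simp only [if_neg hc])
  have h1' : ∑ j ∈ S.image (fun x => x - 1), G j = ∑ j ∈ S ∩ S.image (fun x => x - 1), G j := by
    refine (Finset.sum_subset Finset.inter_subset_right ?_).symm
    intro j hjT hjn
    by_contra h
    obtain ⟨hjS, _⟩ := hGS j h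
    exact hjn (Finset.mem_inter.mpr ⟨hjS, hjT⟩)
  have h2' : ∑ j ∈ S, G j = ∑ j ∈ S ∩ S.image (fun x => x - 1), G j := by
    refine (Finset.sum_subset Finset.inter_subset_left ?_).symm
    intro j hjS hjn
    by_contra h
    obtain ⟨_, hj1⟩ := hGS j h
    refine hjn (Finset.mem_inter.mpr ⟨hjS, Finset.mem_image.mpr ⟨j+1, hj1, by omega⟩⟩)
  rw [hshift, h1', ← h2', sub_self]
end

section
/- Let g be a simple complex Lie algebra, α, β ∈ Δ with α ≠ ±β, S = S(α,β) the α-string through β. Then Σ_{j∈S} [e_{-α}, e_{β+jα} e_{-β-jα}] = 0 in U(g). -/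
/-!
STATEMENT 2. `g` is a simple complex Lie algebra with (finite) root system `Δ`,
root vectors `e γ` normalized by `B (e γ) (e (-γ)) = 1` for the invariant symmetric
form `B`, structure constants `N` (so `⁅e γ, e δ⁆ = N γ δ • e (γ+δ)` when `γ+δ ∈ Δ`,
and the bracket vanishes when `γ+δ` is neither a root nor `0`).  For roots
`α ≠ ±β` the root string `S = {j : ℤ | β + jα ∈ Δ}` is a finite interval of
consecutive integers.  Then in `U(g)`, `∑ _{j∈S} [e_{-α}, e_{β+jα} e_{-β-jα}] = 0`. -/
attribute [local instance 100] LieRing.ofAssociativeRing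

theorem root_string_sum_bracket_eminus
    {R : Type*} [AddCommGroup R] {L : Type*} [LieRing L] [LieAlgebra ℂ L]
    (Δ : Finset R) (e : R → L) (B : L →ₗ[ℂ] L →ₗ[ℂ] ℂ)
    (hBsymm : ∀ x y : L, B x y = B y x)
    (hBinv : ∀ x y z : L, B ⁅x, y⁆ z = B x ⁅y, z⁆)
    (hnegmem : ∀ γ ∈ Δ, -γ ∈ Δ)
    (hnorm : ∀ γ ∈ Δ, B (e γ) (e (-γ)) = 1)
    (N : R → R → ℂ)
    (hbr : ∀ γ ∈ Δ, ∀ δ ∈ Δ, γ + δ ∈ Δ → ⁅e γ, e δ⁆ = N γ δ • e (γ + δ))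
    (hvanish : ∀ γ ∈ Δ, ∀ δ ∈ Δ, γ + δ ≠ 0 → γ + δ ∉ Δ → ⁅e γ, e δ⁆ = 0)
    {α β : R} (hα : α ∈ Δ) (hβ : β ∈ Δ) (h1 : β ≠ α) (h2 : β ≠ -α)
    (S : Finset ℤ) (hS : ∀ j : ℤ, j ∈ S ↔ β + j • α ∈ Δ)
    (hstring : ∃ p q : ℤ, (S : Set ℤ) = Set.Icc p q) :
    ∑ j ∈ S,
      ⁅(UniversalEnvelopingAlgebra.ι ℂ : L →ₗ⁅ℂ⁆ _) (e (-α)),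
        (UniversalEnvelopingAlgebra.ι ℂ : L →ₗ⁅ℂ⁆ _) (e (β + j • α)) *
          (UniversalEnvelopingAlgebra.ι ℂ : L →ₗ⁅ℂ⁆ _) (e (-(β + j • α)))⁆
      = (0 : UniversalEnvelopingAlgebra ℂ L) := by
  classical
  obtain ⟨p, q, hpq⟩ := hstring
  have hmem : ∀ j : ℤ, j ∈ S ↔ p ≤ j ∧ j ≤ q := by
    intro j
    have := Set.ext_iff.mp hpq j
    simpa using this
  set ι : L →ₗ⁅ℂ⁆ UniversalEnvelopingAlgebra ℂ L := UniversalEnvelopingAlgebra.ι ℂ with hι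
  -- arithmetic in R
  have hγ1 : ∀ j : ℤ, -α + (β + j • α) = β + (j - 1) • α := by
    intro j; rw [sub_zsmul, one_zsmul]; abel
  have hγ2 : ∀ j : ℤ, -α + -(β + j • α) = -(β + (j + 1) • α) := by
    intro j; rw [add_zsmul, one_zsmul]; abel
  have hγ0 : ∀ j : ℤ, α + (β + j • α) = β + (j + 1) • α := by
    intro j; rw [add_zsmul, one_zsmul]; abel
  have hγ3 : ∀ j : ℤ, (β + (j + 1) • α) + -(β + j • α) = α := by
    intro j; rw [add_zsmul, one_zsmul]; abel
  -- nondegeneracy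
  have hnd1 : ∀ j : ℤ, j ∈ S → j - 1 ∉ S → β + (j - 1) • α ≠ 0 := by
    intro j hj hj1 h0
    apply hj1
    have h2m : β + (j - 2) • α = -α := by
      have hx : β + (j - 2) • α = -α + (β + (j - 1) • α) := by
        rw [hγ1 (j - 1), show (j - 1 - 1 : ℤ) = j - 2 from by ring]
      rw [hx, h0, add_zero]
    have hj2 : j - 2 ∈ S := (hS _).mpr (by rw [h2m]; exact hnegmem α hα)
    rw [hmem] at hj hj2 ⊢
    omega
  have hnd2 : ∀ j : ℤ, j ∈ S → j + 1 ∉ S → β + (j + 1) • α ≠ 0 := by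
    intro j hj hj1 h0
    apply hj1
    have h2m : β + (j + 2) • α = α := by
      have hx : β + (j + 2) • α = α + (β + (j + 1) • α) := by
        rw [hγ0 (j + 1), show (j + 1 + 1 : ℤ) = j + 2 from by ring]
      rw [hx, h0, add_zero]
    have hj2 : j + 2 ∈ S := (hS _).mpr (by rw [h2m]; exact hα)
    rw [hmem] at hj hj2 ⊢
    omega
  -- bracket formulas in L
  have hbr1 : ∀ j : ℤ, j ∈ S → ⁅e (-α), e (β + j • α)⁆ =
      if j - 1 ∈ S then N (-α) (β + j • α) • e (β + (j - 1) • α) else 0 := by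
    intro j hj
    by_cases hj1 : j - 1 ∈ S
    · rw [if_pos hj1]
      have := hbr (-α) (hnegmem α hα) (β + j • α) ((hS j).mp hj)
        (by rw [hγ1]; exact (hS _).mp hj1)
      rwa [hγ1] at this
    · rw [if_neg hj1]
      exact hvanish (-α) (hnegmem α hα) (β + j • α) ((hS j).mp hj)
        (by rw [hγ1]; exact hnd1 j hj hj1)
        (by rw [hγ1]; exact fun h => hj1 ((hS _).mpr h))
  have hbr2 : ∀ j : ℤ, j ∈ S → ⁅e (-α), e (-(β + j • α))⁆ =
      if j + 1 ∈ S then N (-α) (-(β + j • α)) • e (-(β + (j + 1) • α)) else 0 := by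
    intro j hj
    by_cases hj1 : j + 1 ∈ S
    · rw [if_pos hj1]
      have := hbr (-α) (hnegmem α hα) (-(β + j • α)) (hnegmem _ ((hS j).mp hj))
        (by rw [hγ2]; exact hnegmem _ ((hS _).mp hj1))
      rwa [hγ2] at this
    · rw [if_neg hj1]
      exact hvanish (-α) (hnegmem α hα) (-(β + j • α)) (hnegmem _ ((hS j).mp hj))
        (by rw [hγ2]; exact neg_ne_zero.mpr (hnd2 j hj hj1))
        (by rw [hγ2]; intro h; exact hj1 ((hS _).mpr (by simpa using hnegmem _ h)))
  -- the key coefficient identity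
  have hcoef : ∀ j : ℤ, j ∈ S → j + 1 ∈ S →
      N (-α) (-(β + j • α)) = - N (-α) (β + (j + 1) • α) := by
    intro j hj hj1
    have hγjΔ : β + j • α ∈ Δ := (hS j).mp hj
    have hγj1Δ : β + (j + 1) • α ∈ Δ := (hS _).mp hj1
    have hBα : B (e (-α)) (e α) = 1 := by
      have := hnorm (-α) (hnegmem α hα); rwa [neg_neg] at this
    have hbrmid : ⁅e (β + (j + 1) • α), e (-(β + j • α))⁆ =
        N (β + (j + 1) • α) (-(β + j • α)) • e α := by
      have := hbr (β + (j + 1) • α) hγj1Δ (-(β + j • α)) (hnegmem _ hγjΔ)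
        (by rw [hγ3]; exact hα)
      rwa [hγ3] at this
    have hA : ⁅e (-α), e (β + (j + 1) • α)⁆ =
        N (-α) (β + (j + 1) • α) • e (β + j • α) := by
      have := hbr1 (j + 1) hj1
      rw [if_pos (by rwa [show j + 1 - 1 = j from by ring]),
        show j + 1 - 1 = j from by ring] at this
      exact this
    have hc1 : B ⁅e (-α), e (β + (j + 1) • α)⁆ (e (-(β + j • α)))
        = N (-α) (β + (j + 1) • α) := by
      rw [hA, map_smul, LinearMap.smul_apply, hnorm _ hγjΔ, smul_eq_mul, mul_one]
    have hc2 : B ⁅e (-α), e (β + (j + 1) • α)⁆ (e (-(β + j • α)))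
        = N (β + (j + 1) • α) (-(β + j • α)) := by
      rw [hBinv, hbrmid, map_smul, hBα, smul_eq_mul, mul_one]
    have hD : ⁅e (-α), e (-(β + j • α))⁆ =
        N (-α) (-(β + j • α)) • e (-(β + (j + 1) • α)) := by
      have := hbr2 j hj
      rwa [if_pos hj1] at this
    have hd1 : B ⁅e (-α), e (-(β + j • α))⁆ (e (β + (j + 1) • α))
        = N (-α) (-(β + j • α)) := by
      rw [hD, map_smul, LinearMap.smul_apply, hBsymm, hnorm _ hγj1Δ, smul_eq_mul, mul_one]
    have hd2 : B ⁅e (-α), e (-(β + j • α))⁆ (e (β + (j + 1) • α))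
        = - N (β + (j + 1) • α) (-(β + j • α)) := by
      rw [hBinv, ← lie_skew, hbrmid]
      simp [hBα]
    rw [hd1.symm.trans hd2, hc1.symm.trans hc2]
  -- Leibniz rule in the enveloping algebra
  have leib : ∀ x a b : UniversalEnvelopingAlgebra ℂ L,
      ⁅x, a * b⁆ = ⁅x, a⁆ * b + a * ⁅x, b⁆ := by
    intro x a b; simp only [Ring.lie_def]; noncomm_ring
  -- the telescoping function
  set G : ℤ → UniversalEnvelopingAlgebra ℂ L := fun j =>
    if j ∈ S ∧ j - 1 ∈ S then
      N (-α) (β + j • α) • (ι (e (β + (j - 1) • α)) * ι (e (-(β + j • α)))) else 0 with hG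
  have step : ∀ j ∈ S,
      ⁅ι (e (-α)), ι (e (β + j • α)) * ι (e (-(β + j • α)))⁆ = G j - G (j + 1) := by
    intro j hj
    have hA : (ι ⁅e (-α), e (β + j • α)⁆) * ι (e (-(β + j • α))) = G j := by
      rw [hbr1 j hj]
      simp only [hG]
      by_cases h1 : j - 1 ∈ S
      · rw [if_pos h1, if_pos ⟨hj, h1⟩, map_smul ι, smul_mul_assoc]
      · rw [if_neg h1, if_neg fun h => h1 h.2, map_zero ι, zero_mul]
    have hB : ι (e (β + j • α)) * (ι ⁅e (-α), e (-(β + j • α))⁆) = - G (j + 1) := by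
      rw [hbr2 j hj]
      simp only [hG]
      rw [show j + 1 - 1 = j from by ring]
      by_cases h2 : j + 1 ∈ S
      · rw [if_pos h2, if_pos ⟨h2, hj⟩, hcoef j hj h2, map_smul ι, mul_smul_comm, neg_smul]
      · rw [if_neg h2, if_neg fun h => h2 h.1, map_zero ι, mul_zero, neg_zero]
    rw [leib, ← LieHom.map_lie, ← LieHom.map_lie, hA, hB, sub_eq_add_neg]
  have hGne : ∀ j : ℤ, G j ≠ 0 → j ∈ S ∧ j - 1 ∈ S := by
    intro j h
    by_contra hc
    exact h (by simp only [hG]; rw [if_neg hc])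
  have hsum : ∑ j ∈ S, (G j - G (j + 1)) = 0 := by
    rw [Finset.sum_sub_distrib, sub_eq_zero]
    rw [← Finset.sum_filter_of_ne (p := fun j => j - 1 ∈ S)
      (fun x _ h => (hGne x h).2)]
    rw [← Finset.sum_filter_of_ne (p := fun j => j + 1 ∈ S)
      (fun x _ h => (hGne (x + 1) h).1)]
    refine Finset.sum_nbij' (fun a => a - 1) (fun a => a + 1) ?_ ?_ ?_ ?_ ?_
    · intro a ha
      simp only [Finset.mem_filter] at ha ⊢
      constructor
      · exact ha.2
      · rw [show a - 1 + 1 = a from by ring]; exact ha.1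
    · intro a ha
      simp only [Finset.mem_filter] at ha ⊢
      constructor
      · exact ha.2
      · rw [show a + 1 - 1 = a from by ring]; exact ha.1
    · intro a _; ring
    · intro a _; ring
    · intro a _; rw [show a - 1 + 1 = a from by ring]
  calc ∑ j ∈ S, ⁅ι (e (-α)), ι (e (β + j • α)) * ι (e (-(β + j • α)))⁆
      = ∑ j ∈ S, (G j - G (j + 1)) := Finset.sum_congr rfl step
    _ = 0 := hsum
end

section
/- Let g be a simple complex Lie algebra with Cartan subalgebra h. For λ, μ ∈ h with μ regular (⟨α,μ⟩ ≠ 0 for all roots α), define T(λ,μ) = Σ_{α∈Δ} (⟨α,λ⟩/⟨α,μ⟩) e_{-α} e_α ∈ U(g). Then for all λ, ν ∈ h, T(λ,μ) and T(ν,μ) commute: T(λ,μ)T(ν,μ) = T(ν,μ)T(λ,μ). -/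
attribute [local instance 100] LieRing.ofAssociativeRing

open Finset


private lemma sum_reindex {ι M : Type*} [AddCommMonoid M] (P : Finset ι) (g g' : ι → ι)
    (hg : ∀ p ∈ P, g p ∈ P) (hg' : ∀ p ∈ P, g' p ∈ P)
    (h1 : ∀ p ∈ P, g' (g p) = p) (h2 : ∀ p ∈ P, g (g' p) = p)
    (F : ι → M) : ∑ p ∈ P, F p = ∑ p ∈ P, F (g p) :=
  Finset.sum_nbij' g' g hg' hg h2 h1 (fun p hp => by rw [h2 p hp])

private lemma sum_neg_self {M : Type*} [AddCommGroup M] [Module ℂ M] {a : M}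
    (h : a = -a) : a = 0 := by
  have h2 : (2 : ℂ) • a = 0 := by
    rw [two_smul]; nth_rewrite 1 [h]; exact neg_add_cancel a
  simpa using (smul_eq_zero.mp h2).resolve_left (by norm_num)

private lemma mul4_expand {R : Type*} [Ring R] (X Y Z W : R) :
    (X*Y)*(Z*W) - (Z*W)*(X*Y)
      = X*(Y*Z - Z*Y)*W + X*Z*(Y*W - W*Y) + (X*Z - Z*X)*W*Y + Z*(X*W - W*X)*Y := by
  noncomm_ring

private lemma cubic_id {U : Type*} [Ring U] [Algebra ℂ U] (u v w a b g : U) (N' f1 f2 : ℂ)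
    (hvw : v*w = w*v + N' • a) (huw : u*w = w*u + (-N') • b) (huv : u*v = v*u + N' • g) :
    f1 • (u*v*w) + f2 • (v*w*u) + (-(f1+f2)) • (w*u*v)
      = (N'*f1) • (u*a) - (N'*f1) • (b*v) + (N'*f2) • (a*u) - (N'*f2) • (w*g) := by
  have h1 : u*(v*w) = w*(u*v) + ((-N') • (b*v) + N' • (u*a)) := by
    rw [hvw, mul_add, mul_smul_comm, ← mul_assoc u w v, huw, add_mul, smul_mul_assoc, mul_assoc]
    abel
  have h2 : v*w*u = w*(u*v) + (N' • (a*u) - N' • (w*g)) := by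
    have hvu : v*u = u*v - N' • g := by rw [huv]; abel
    rw [hvw, add_mul, smul_mul_assoc, mul_assoc, hvu, mul_sub, mul_smul_comm]
    abel
  rw [show u*v*w = u*(v*w) from mul_assoc u v w, h1, h2,
    show w*u*v = w*(u*v) from mul_assoc w u v]
  module

private lemma aux_comm {D U : Type*} [AddCommGroup D] [Ring U] [Algebra ℂ U]
    (Δ : Finset D) (hneg : ∀ α ∈ Δ, -α ∈ Δ)
    (cc dd : D → ℂ) (hcev : ∀ α, cc (-α) = cc α) (hdev : ∀ α, dd (-α) = dd α)
    (hf3 : ∀ α ∈ Δ, ∀ β ∈ Δ, α + β ∈ Δ →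
      (cc α * dd β - cc β * dd α) + (cc β * dd (-(α+β)) - cc (-(α+β)) * dd β)
        + (cc (-(α+β)) * dd α - cc α * dd (-(α+β))) = 0)
    (N : D → D → ℂ)
    (hskew : ∀ α ∈ Δ, ∀ β ∈ Δ, α + β ∈ Δ → N α β = - N β α)
    (hcyc : ∀ α ∈ Δ, ∀ β ∈ Δ, α + β ∈ Δ → N α β = N β (-(α+β)))
    (E : D → U) (Hh : D → U)
    (hEE : ∀ α ∈ Δ, ∀ β ∈ Δ, α + β ∈ Δ → E α * E β = E β * E α + N α β • E (α+β))
    (hEv : ∀ α ∈ Δ, ∀ β ∈ Δ, α + β ≠ 0 → α + β ∉ Δ → E α * E β = E β * E α)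
    (hEH : ∀ α ∈ Δ, E α * E (-α) = E (-α) * E α + Hh α)
    (hAH : ∀ α ∈ Δ, (E (-α) * E α) * Hh α = Hh α * (E (-α) * E α))
    (hHodd : ∀ α ∈ Δ, Hh (-α) = - Hh α) :
    (∑ α ∈ Δ, cc α • (E (-α) * E α)) * (∑ α ∈ Δ, dd α • (E (-α) * E α))
      = (∑ α ∈ Δ, dd α • (E (-α) * E α)) * (∑ α ∈ Δ, cc α • (E (-α) * E α)) := by
  classical
  rw [← sub_eq_zero]
  have sumneg : ∀ (F : D → U), (∑ β ∈ Δ, F β) = ∑ β ∈ Δ, F (-β) := fun F =>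
    sum_reindex Δ (fun x => -x) (fun x => -x) (fun p hp => hneg p hp) (fun p hp => hneg p hp)
      (fun p _ => neg_neg p) (fun p _ => neg_neg p) F
  -- Step B
  have hB : (∑ α ∈ Δ, cc α • (E (-α) * E α)) * (∑ α ∈ Δ, dd α • (E (-α) * E α))
      - (∑ α ∈ Δ, dd α • (E (-α) * E α)) * (∑ α ∈ Δ, cc α • (E (-α) * E α))
      = ∑ α ∈ Δ, ∑ β ∈ Δ, (cc α * dd β) •
          ((E (-α) * E α) * (E (-β) * E β) - (E (-β) * E β) * (E (-α) * E α)) := by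
    rw [Finset.sum_mul_sum, Finset.sum_mul_sum]
    rw [Finset.sum_comm (s := Δ) (t := Δ)
      (f := fun i j => (dd i • (E (-i) * E i)) * (cc j • (E (-j) * E j)))]
    rw [← Finset.sum_sub_distrib]
    refine Finset.sum_congr rfl fun α _ => ?_
    rw [← Finset.sum_sub_distrib]
    refine Finset.sum_congr rfl fun β _ => ?_
    simp only [smul_mul_assoc, mul_smul_comm, smul_smul, smul_sub]
    module
  rw [hB]
  -- Step C : reduce to single-bracket form
  have hC : ∑ α ∈ Δ, ∑ β ∈ Δ, (cc α * dd β) •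
          ((E (-α) * E α) * (E (-β) * E β) - (E (-β) * E β) * (E (-α) * E α))
      = ∑ α ∈ Δ, ∑ β ∈ Δ,
          ((cc α * dd β) • (E (-α) * E (-β) * (E α * E β - E β * E α))
           - (cc β * dd α) • ((E α * E β - E β * E α) * (E (-α) * E (-β)))
           + (cc α * dd β - cc β * dd α) • (E (-α) * (E α * E β - E β * E α) * E (-β))) := by
    have expand : ∀ α β : D,
        (E (-α) * E α) * (E (-β) * E β) - (E (-β) * E β) * (E (-α) * E α)
        = E (-α) * (E α * E (-β) - E (-β) * E α) * E β
          + E (-α) * E (-β) * (E α * E β - E β * E α)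
          + (E (-α) * E (-β) - E (-β) * E (-α)) * E β * E α
          + E (-β) * (E (-α) * E β - E β * E (-α)) * E α := by
      intro α β
      have := mul4_expand (E (-α)) (E α) (E (-β)) (E β)
      linear_combination (norm := noncomm_ring) this
    calc ∑ α ∈ Δ, ∑ β ∈ Δ, (cc α * dd β) •
          ((E (-α) * E α) * (E (-β) * E β) - (E (-β) * E β) * (E (-α) * E α))
        = (∑ α ∈ Δ, ∑ β ∈ Δ, (cc α * dd β) • (E (-α) * (E α * E (-β) - E (-β) * E α) * E β))
          + (∑ α ∈ Δ, ∑ β ∈ Δ, (cc α * dd β) • (E (-α) * E (-β) * (E α * E β - E β * E α)))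
          + (∑ α ∈ Δ, ∑ β ∈ Δ, (cc α * dd β) • ((E (-α) * E (-β) - E (-β) * E (-α)) * E β * E α))
          + (∑ α ∈ Δ, ∑ β ∈ Δ, (cc α * dd β) • (E (-β) * (E (-α) * E β - E β * E (-α)) * E α)) := by
          simp only [← Finset.sum_add_distrib, ← smul_add]
          refine Finset.sum_congr rfl fun α _ => Finset.sum_congr rfl fun β _ => ?_
          rw [expand α β]
      _ = (∑ α ∈ Δ, ∑ β ∈ Δ, (cc α * dd β) • (E (-α) * (E α * E β - E β * E α) * E (-β)))
          + (∑ α ∈ Δ, ∑ β ∈ Δ, (cc α * dd β) • (E (-α) * E (-β) * (E α * E β - E β * E α)))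
          + (∑ α ∈ Δ, ∑ β ∈ Δ, (-(cc β * dd α)) • ((E α * E β - E β * E α) * (E (-α) * E (-β))))
          + (∑ α ∈ Δ, ∑ β ∈ Δ, (-(cc β * dd α)) • (E (-α) * (E α * E β - E β * E α) * E (-β))) := by
          congr 1
          · congr 1
            · congr 1
              -- first sum : reindex inner β ↦ -β
              refine Finset.sum_congr rfl fun α _ => ?_
              rw [sumneg (fun β => (cc α * dd β) • (E (-α) * (E α * E (-β) - E (-β) * E α) * E β))]
              refine Finset.sum_congr rfl fun β _ => ?_
              rw [neg_neg, hdev]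
            · -- third sum: negate both, swap
              rw [sumneg (fun α => ∑ β ∈ Δ, (cc α * dd β) •
                ((E (-α) * E (-β) - E (-β) * E (-α)) * E β * E α))]
              have step : ∀ α ∈ Δ, (∑ β ∈ Δ, (cc (-α) * dd β) •
                  ((E (- -α) * E (-β) - E (-β) * E (- -α)) * E β * E (-α)))
                  = ∑ β ∈ Δ, (cc α * dd β) • ((E α * E β - E β * E α) * E (-β) * E (-α)) := by
                intro α _
                rw [sumneg (fun β => (cc (-α) * dd β) •
                  ((E (- -α) * E (-β) - E (-β) * E (- -α)) * E β * E (-α)))]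
                refine Finset.sum_congr rfl fun β _ => ?_
                rw [neg_neg, neg_neg, hcev, hdev]
              rw [Finset.sum_congr rfl step, Finset.sum_comm]
              refine Finset.sum_congr rfl fun α _ => Finset.sum_congr rfl fun β _ => ?_
              simp only [sub_mul, mul_sub, mul_assoc, smul_sub, neg_smul, smul_neg]
              module
          · -- fourth sum: negate α, swap
            rw [sumneg (fun α => ∑ β ∈ Δ, (cc α * dd β) •
              (E (-β) * (E (-α) * E β - E β * E (-α)) * E α))]
            have step : ∀ α ∈ Δ, (∑ β ∈ Δ, (cc (-α) * dd β) •
                (E (-β) * (E (- -α) * E β - E β * E (- -α)) * E (-α)))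
                = ∑ β ∈ Δ, (cc α * dd β) • (E (-β) * (E α * E β - E β * E α) * E (-α)) := by
              intro α _
              refine Finset.sum_congr rfl fun β _ => ?_
              rw [neg_neg, hcev]
            rw [Finset.sum_congr rfl step, Finset.sum_comm]
            refine Finset.sum_congr rfl fun α _ => Finset.sum_congr rfl fun β _ => ?_
            simp only [sub_mul, mul_sub, mul_assoc, smul_sub, neg_smul, smul_neg]
            module
      _ = ∑ α ∈ Δ, ∑ β ∈ Δ,
          ((cc α * dd β) • (E (-α) * E (-β) * (E α * E β - E β * E α))
           - (cc β * dd α) • ((E α * E β - E β * E α) * (E (-α) * E (-β)))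
           + (cc α * dd β - cc β * dd α) • (E (-α) * (E α * E β - E β * E α) * E (-β))) := by
          simp only [← Finset.sum_add_distrib]
          refine Finset.sum_congr rfl fun α _ => Finset.sum_congr rfl fun β _ => ?_
          module
  rw [hC]
  set P := (Δ ×ˢ Δ).filter (fun p : D × D => p.1 + p.2 ∈ Δ) with hPdef
  have hPm : ∀ p : D × D, p ∈ P → p.1 ∈ Δ ∧ p.2 ∈ Δ ∧ p.1 + p.2 ∈ Δ := by
    intro p hp
    rw [hPdef, Finset.mem_filter, Finset.mem_product] at hp
    exact ⟨hp.1.1, hp.1.2, hp.2⟩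
  have hPm' : ∀ p : D × D, p.1 ∈ Δ → p.2 ∈ Δ → p.1 + p.2 ∈ Δ → p ∈ P := by
    intro p h1 h2 h3
    rw [hPdef, Finset.mem_filter, Finset.mem_product]
    exact ⟨⟨h1, h2⟩, h3⟩
  have hD : ∑ α ∈ Δ, ∑ β ∈ Δ,
          ((cc α * dd β) • (E (-α) * E (-β) * (E α * E β - E β * E α))
           - (cc β * dd α) • ((E α * E β - E β * E α) * (E (-α) * E (-β)))
           + (cc α * dd β - cc β * dd α) • (E (-α) * (E α * E β - E β * E α) * E (-β)))
      = ∑ p ∈ P,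
          ((cc p.1 * dd p.2) • (E (-p.1) * E (-p.2) * (E p.1 * E p.2 - E p.2 * E p.1))
           - (cc p.2 * dd p.1) • ((E p.1 * E p.2 - E p.2 * E p.1) * (E (-p.1) * E (-p.2)))
           + (cc p.1 * dd p.2 - cc p.2 * dd p.1) •
              (E (-p.1) * (E p.1 * E p.2 - E p.2 * E p.1) * E (-p.2))) := by
    rw [← Finset.sum_product']
    refine (Finset.sum_filter_of_ne ?_).symm
    intro p hp hne
    by_contra hsum
    apply hne
    obtain ⟨hp1, hp2⟩ := Finset.mem_product.mp hp
    by_cases h0' : p.1 + p.2 = 0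
    · have hb : p.2 = -p.1 := eq_neg_of_add_eq_zero_right h0'
      rw [hb]
      have hH : E p.1 * E (-p.1) - E (-p.1) * E p.1 = Hh p.1 := by
        rw [hEH p.1 hp1, add_sub_cancel_left]
      rw [neg_neg, hdev, hcev, hH, sub_self, zero_smul, add_zero, hAH p.1 hp1, sub_self]
    · have hG0 : E p.1 * E p.2 - E p.2 * E p.1 = 0 :=
        sub_eq_zero.mpr (hEv p.1 hp1 p.2 hp2 h0' hsum)
      rw [hG0]
      simp
  rw [hD]
  have hE : ∀ p ∈ P,
      ((cc p.1 * dd p.2) • (E (-p.1) * E (-p.2) * (E p.1 * E p.2 - E p.2 * E p.1))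
       - (cc p.2 * dd p.1) • ((E p.1 * E p.2 - E p.2 * E p.1) * (E (-p.1) * E (-p.2)))
       + (cc p.1 * dd p.2 - cc p.2 * dd p.1) •
          (E (-p.1) * (E p.1 * E p.2 - E p.2 * E p.1) * E (-p.2)))
      = (2 * N p.1 p.2 * (cc p.1 * dd p.2 - cc p.2 * dd p.1)) •
            (E (-p.1) * E (-p.2) * E (p.1 + p.2))
        + (N p.1 p.2 * (cc p.1 * dd p.2 - 2 * (cc p.2 * dd p.1)) * N (p.1 + p.2) (-p.2)) •
            (E (-p.1) * E p.1)
        + (-(N p.1 p.2 * (cc p.2 * dd p.1) * N (p.1 + p.2) (-p.1))) • (E p.2 * E (-p.2)) := by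
    rintro ⟨α, β⟩ hp
    obtain ⟨hα, hβ, hs⟩ := hPm _ hp
    simp only [] at hα hβ hs ⊢
    have hG1 : E α * E β - E β * E α = N α β • E (α + β) := by
      rw [hEE α hα β hβ hs, add_sub_cancel_left]
    have e1 : (α + β) + -α = β := by abel
    have e2 : (α + β) + -β = α := by abel
    have hc1 : E (α+β) * E (-α) = E (-α) * E (α+β) + N (α+β) (-α) • E β := by
      have h := hEE (α+β) hs (-α) (hneg α hα) (by rw [e1]; exact hβ)
      rwa [e1] at h
    have hc2 : E (α+β) * E (-β) = E (-β) * E (α+β) + N (α+β) (-β) • E α := by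
      have h := hEE (α+β) hs (-β) (hneg β hβ) (by rw [e2]; exact hα)
      rwa [e2] at h
    have key2 : E (-α) * (E (α+β) * E (-β))
        = E (-α) * (E (-β) * E (α+β)) + N (α+β) (-β) • (E (-α) * E α) := by
      rw [hc2, mul_add, mul_smul_comm, ← mul_assoc, mul_assoc]
    have key : E (α+β) * (E (-α) * E (-β))
        = E (-α) * (E (-β) * E (α+β)) + N (α+β) (-β) • (E (-α) * E α)
          + N (α+β) (-α) • (E β * E (-β)) := by
      rw [← mul_assoc, hc1, add_mul, smul_mul_assoc, mul_assoc, key2]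
    rw [hG1]
    simp only [smul_mul_assoc, mul_smul_comm, smul_smul, mul_assoc]
    rw [key, key2]
    module
  rw [Finset.sum_congr rfl hE]
  simp only [Finset.sum_add_distrib]
  -- basic membership helpers
  have hnn : ∀ p : D × D, p ∈ P → (-p.1) + (-p.2) ∈ Δ := fun p hp => by
    obtain ⟨h1,h2,h3⟩ := hPm _ hp
    rw [show -p.1 + -p.2 = -(p.1+p.2) by abel]; exact hneg _ h3
  have hsk2 : ∀ p ∈ P, N (-p.2) (-p.1) = - N (-p.1) (-p.2) := fun p hp => by
    obtain ⟨h1,h2,h3⟩ := hPm _ hp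
    rw [hskew (-p.1) (hneg _ h1) (-p.2) (hneg _ h2) (hnn p hp), neg_neg]
  have hsk1 : ∀ p ∈ P, N p.2 p.1 = - N p.1 p.2 := fun p hp => by
    obtain ⟨h1,h2,h3⟩ := hPm _ hp
    rw [hskew p.1 h1 p.2 h2 h3, neg_neg]
  have hNp : ∀ p ∈ P, N (p.1+p.2) (-p.2) = - N (-p.1) (-p.2) := fun p hp => by
    obtain ⟨h1,h2,h3⟩ := hPm _ hp
    have e2 : (p.1+p.2) + -p.2 = p.1 := by abel
    have h := hcyc (p.1+p.2) h3 (-p.2) (hneg _ h2) (by rw [e2]; exact h1)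
    rw [e2] at h
    rw [h, hsk2 p hp]
  have hNvw : ∀ p ∈ P, N (-p.2) (p.1+p.2) = N (-p.1) (-p.2) := fun p hp => by
    obtain ⟨h1,h2,h3⟩ := hPm _ hp
    have h := hcyc (-p.1) (hneg _ h1) (-p.2) (hneg _ h2) (hnn p hp)
    rw [show -(-p.1 + -p.2) = p.1 + p.2 by abel] at h
    exact h.symm
  have hNuw : ∀ p ∈ P, N (-p.1) (p.1+p.2) = - N (-p.1) (-p.2) := fun p hp => by
    obtain ⟨h1,h2,h3⟩ := hPm _ hp
    have hmm : (-p.2) + (-p.1) ∈ Δ := by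
      rw [show -p.2 + -p.1 = -(p.1+p.2) by abel]; exact hneg _ h3
    have h := hcyc (-p.2) (hneg _ h2) (-p.1) (hneg _ h1) hmm
    rw [show -(-p.2 + -p.1) = p.1 + p.2 by abel] at h
    rw [← h, hsk2 p hp]
  have hNq : ∀ p ∈ P, N p.2 (-(p.1+p.2)) = N p.1 p.2 := fun p hp => by
    obtain ⟨h1,h2,h3⟩ := hPm _ hp
    exact (hcyc p.1 h1 p.2 h2 h3).symm
  have hNg : ∀ p ∈ P, N p.1 (-(p.1+p.2)) = - N p.1 p.2 := fun p hp => by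
    obtain ⟨h1,h2,h3⟩ := hPm _ hp
    have hγ := hneg _ h3
    have hsum1 : p.2 + -(p.1+p.2) ∈ Δ := by
      rw [show p.2 + -(p.1+p.2) = -p.1 by abel]; exact hneg _ h1
    have ha := hcyc p.2 h2 (-(p.1+p.2)) hγ hsum1
    rw [show -(p.2 + -(p.1+p.2)) = p.1 by abel] at ha
    have hsum2 : -(p.1+p.2) + p.1 ∈ Δ := by
      rw [show -(p.1+p.2) + p.1 = -p.2 by abel]; exact hneg _ h2
    have hb := hskew (-(p.1+p.2)) hγ p.1 h1 hsum2
    have hcomb := (hcyc p.1 h1 p.2 h2 h3).trans (ha.trans hb)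
    rw [hcomb, neg_neg]
  -- maps
  have hswap_mem : ∀ p ∈ P, (p.2, p.1) ∈ P := fun p hp => by
    obtain ⟨h1,h2,h3⟩ := hPm _ hp
    exact hPm' _ h2 h1 (by rw [show p.2 + p.1 = p.1 + p.2 from add_comm _ _]; exact h3)
  have hτ_mem : ∀ p ∈ P, ((p.1, -(p.1+p.2)) : D × D) ∈ P := fun p hp => by
    obtain ⟨h1,h2,h3⟩ := hPm _ hp
    exact hPm' _ h1 (hneg _ h3)
      (by rw [show p.1 + -(p.1+p.2) = -p.2 by abel]; exact hneg _ h2)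
  have hν_mem : ∀ p ∈ P, ((-p.1, -p.2) : D × D) ∈ P := fun p hp => by
    obtain ⟨h1,h2,h3⟩ := hPm _ hp
    exact hPm' _ (hneg _ h1) (hneg _ h2) (hnn p hp)
  have hσ_mem : ∀ p ∈ P, ((p.2, -(p.1+p.2)) : D × D) ∈ P := fun p hp => by
    obtain ⟨h1,h2,h3⟩ := hPm _ hp
    exact hPm' _ h2 (hneg _ h3)
      (by rw [show p.2 + -(p.1+p.2) = -p.1 by abel]; exact hneg _ h1)
  have hσi_mem : ∀ p ∈ P, ((-(p.1+p.2), p.1) : D × D) ∈ P := fun p hp => by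
    obtain ⟨h1,h2,h3⟩ := hPm _ hp
    exact hPm' _ (hneg _ h3) h1
      (by rw [show -(p.1+p.2) + p.1 = -p.2 by abel]; exact hneg _ h2)
  -- Step F : third sum via swap reindex
  have hS3 : ∑ p ∈ P, (-(N p.1 p.2 * (cc p.2 * dd p.1) * N (p.1 + p.2) (-p.1))) •
        (E p.2 * E (-p.2))
      = (∑ p ∈ P, (N p.1 p.2 * (cc p.1 * dd p.2) * N (p.1 + p.2) (-p.2)) •
            (E (-p.1) * E p.1))
        + ∑ p ∈ P, (N p.1 p.2 * (cc p.1 * dd p.2) * N (p.1 + p.2) (-p.2)) • Hh p.1 := by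
    rw [sum_reindex P (fun p => (p.2, p.1)) (fun p => (p.2, p.1)) hswap_mem hswap_mem
      (fun p _ => rfl) (fun p _ => rfl), ← Finset.sum_add_distrib]
    refine Finset.sum_congr rfl fun p hp => ?_
    obtain ⟨h1,h2,h3⟩ := hPm _ hp
    simp only []
    rw [show p.2 + p.1 = p.1 + p.2 from add_comm _ _, hsk1 p hp, hEH p.1 h1]
    module
  rw [hS3]
  -- merge the two (E (-p.1) * E p.1)-sums and clean coefficients via hNp
  have hcomb : (∑ p ∈ P, (N p.1 p.2 * (cc p.1 * dd p.2 - 2 * (cc p.2 * dd p.1)) *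
          N (p.1 + p.2) (-p.2)) • (E (-p.1) * E p.1))
        + (∑ p ∈ P, (N p.1 p.2 * (cc p.1 * dd p.2) * N (p.1 + p.2) (-p.2)) •
            (E (-p.1) * E p.1))
      = ∑ p ∈ P, (-(2 * (N p.1 p.2 * N (-p.1) (-p.2)) *
          (cc p.1 * dd p.2 - cc p.2 * dd p.1))) • (E (-p.1) * E p.1) := by
    rw [← Finset.sum_add_distrib]
    refine Finset.sum_congr rfl fun p hp => ?_
    rw [hNp p hp]
    module
  have hSH : ∑ p ∈ P, (N p.1 p.2 * (cc p.1 * dd p.2) * N (p.1 + p.2) (-p.2)) • Hh p.1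
      = ∑ p ∈ P, (-((N p.1 p.2 * N (-p.1) (-p.2)) * (cc p.1 * dd p.2))) • Hh p.1 := by
    refine Finset.sum_congr rfl fun p hp => ?_
    rw [hNp p hp]
    module
  rw [hSH]
  have rearr : ∀ (a b c d : U), a + b + (c + d) = a + (b + c) + d := fun a b c d => by abel
  rw [rearr, hcomb]
  -- Now goal : SW + SA2 + SH2 = 0
  -- cubic sum reindexings
  have hσinv1 : ∀ p ∈ P, ((-((p.2, -(p.1+p.2)).1 + (p.2, -(p.1+p.2)).2), (p.2, -(p.1+p.2)).1) : D × D) = p :=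
    fun p _ => by
      refine Prod.ext_iff.mpr ⟨?_, rfl⟩
      show -(p.2 + -(p.1+p.2)) = p.1
      abel
  have hσinv2 : ∀ p ∈ P, (((-(p.1+p.2), p.1).2, -((-(p.1+p.2), p.1).1 + (-(p.1+p.2), p.1).2)) : D × D) = p :=
    fun p _ => by
      refine Prod.ext_iff.mpr ⟨rfl, ?_⟩
      show -(-(p.1+p.2) + p.1) = p.2
      abel
  have hWσ : ∑ p ∈ P, (2 * N p.1 p.2 * (cc p.1 * dd p.2 - cc p.2 * dd p.1)) •
        (E (-p.1) * E (-p.2) * E (p.1 + p.2))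
      = ∑ p ∈ P, (2 * N p.1 p.2 * (cc p.2 * dd (-(p.1+p.2)) - cc (-(p.1+p.2)) * dd p.2)) •
        (E (-p.2) * E (p.1+p.2) * E (-p.1)) := by
    rw [sum_reindex P (fun p => (p.2, -(p.1+p.2))) (fun p => (-(p.1+p.2), p.1)) hσ_mem hσi_mem
      hσinv1 hσinv2 (fun p => (2 * N p.1 p.2 * (cc p.1 * dd p.2 - cc p.2 * dd p.1)) •
        (E (-p.1) * E (-p.2) * E (p.1 + p.2)))]
    refine Finset.sum_congr rfl fun p hp => ?_
    simp only []
    rw [hNq p hp, neg_neg, show p.2 + -(p.1+p.2) = -p.1 by abel]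
  have hWσ2 : ∑ p ∈ P, (2 * N p.1 p.2 * (cc p.2 * dd (-(p.1+p.2)) - cc (-(p.1+p.2)) * dd p.2)) •
        (E (-p.2) * E (p.1+p.2) * E (-p.1))
      = ∑ p ∈ P, (2 * N p.1 p.2 * (-((cc p.1 * dd p.2 - cc p.2 * dd p.1)
          + (cc p.2 * dd (-(p.1+p.2)) - cc (-(p.1+p.2)) * dd p.2)))) •
        (E (p.1+p.2) * E (-p.1) * E (-p.2)) := by
    rw [sum_reindex P (fun p => (p.2, -(p.1+p.2))) (fun p => (-(p.1+p.2), p.1)) hσ_mem hσi_mem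
      hσinv1 hσinv2 (fun p => (2 * N p.1 p.2 * (cc p.2 * dd (-(p.1+p.2)) - cc (-(p.1+p.2)) * dd p.2)) •
        (E (-p.2) * E (p.1+p.2) * E (-p.1)))]
    refine Finset.sum_congr rfl fun p hp => ?_
    obtain ⟨h1,h2,h3⟩ := hPm _ hp
    simp only []
    rw [hNq p hp, show p.2 + -(p.1+p.2) = -p.1 by abel]
    simp only [neg_neg]
    congr 1
    have h := hf3 p.1 h1 p.2 h2 h3
    linear_combination (2 * N p.1 p.2) * h
  have hcubicpt : ∀ p ∈ P,
      (2 * N p.1 p.2 * (cc p.1 * dd p.2 - cc p.2 * dd p.1)) •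
          (E (-p.1) * E (-p.2) * E (p.1 + p.2))
        + (2 * N p.1 p.2 * (cc p.2 * dd (-(p.1+p.2)) - cc (-(p.1+p.2)) * dd p.2)) •
          (E (-p.2) * E (p.1+p.2) * E (-p.1))
        + (2 * N p.1 p.2 * (-((cc p.1 * dd p.2 - cc p.2 * dd p.1)
            + (cc p.2 * dd (-(p.1+p.2)) - cc (-(p.1+p.2)) * dd p.2)))) •
          (E (p.1+p.2) * E (-p.1) * E (-p.2))
      = (2 * (N p.1 p.2 * N (-p.1) (-p.2)) * ((cc p.1 * dd p.2 - cc p.2 * dd p.1)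
            + (cc p.2 * dd (-(p.1+p.2)) - cc (-(p.1+p.2)) * dd p.2))) • (E (-p.1) * E p.1)
        + (-(2 * (N p.1 p.2 * N (-p.1) (-p.2)) * (cc p.1 * dd p.2 - cc p.2 * dd p.1))) •
            (E (-p.2) * E p.2)
        + (-(2 * (N p.1 p.2 * N (-p.1) (-p.2)) * (cc p.1 * dd p.2 - cc p.2 * dd p.1))) • Hh p.2
        + (2 * (N p.1 p.2 * N (-p.1) (-p.2)) *
            (cc p.2 * dd (-(p.1+p.2)) - cc (-(p.1+p.2)) * dd p.2)) • Hh p.1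
        + (-(2 * (N p.1 p.2 * N (-p.1) (-p.2)) *
            (cc p.2 * dd (-(p.1+p.2)) - cc (-(p.1+p.2)) * dd p.2))) •
            (E (p.1+p.2) * E (-(p.1+p.2))) := by
    intro p hp
    obtain ⟨h1,h2,h3⟩ := hPm _ hp
    have hvw : E (-p.2) * E (p.1+p.2) = E (p.1+p.2) * E (-p.2) + N (-p.1) (-p.2) • E p.1 := by
      have e : -p.2 + (p.1+p.2) = p.1 := by abel
      have h := hEE (-p.2) (hneg _ h2) (p.1+p.2) h3 (by rw [e]; exact h1)
      rwa [e, hNvw p hp] at h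
    have huw : E (-p.1) * E (p.1+p.2) = E (p.1+p.2) * E (-p.1) + (-(N (-p.1) (-p.2))) • E p.2 := by
      have e : -p.1 + (p.1+p.2) = p.2 := by abel
      have h := hEE (-p.1) (hneg _ h1) (p.1+p.2) h3 (by rw [e]; exact h2)
      rwa [e, hNuw p hp] at h
    have huv : E (-p.1) * E (-p.2) = E (-p.2) * E (-p.1) + N (-p.1) (-p.2) • E (-(p.1+p.2)) := by
      have h := hEE (-p.1) (hneg _ h1) (-p.2) (hneg _ h2) (hnn p hp)
      rwa [show -p.1 + -p.2 = -(p.1+p.2) by abel] at h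
    have cid := cubic_id (E (-p.1)) (E (-p.2)) (E (p.1+p.2)) (E p.1) (E p.2) (E (-(p.1+p.2)))
      (N (-p.1) (-p.2)) (cc p.1 * dd p.2 - cc p.2 * dd p.1)
      (cc p.2 * dd (-(p.1+p.2)) - cc (-(p.1+p.2)) * dd p.2) hvw huw huv
    have hHa : Hh p.1 = E p.1 * E (-p.1) - E (-p.1) * E p.1 := by rw [hEH p.1 h1]; abel
    have hHb : Hh p.2 = E p.2 * E (-p.2) - E (-p.2) * E p.2 := by rw [hEH p.2 h2]; abel
    rw [hHa, hHb]
    calc _ = (2 * N p.1 p.2) • ((cc p.1 * dd p.2 - cc p.2 * dd p.1) •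
              (E (-p.1) * E (-p.2) * E (p.1+p.2))
            + (cc p.2 * dd (-(p.1+p.2)) - cc (-(p.1+p.2)) * dd p.2) •
              (E (-p.2) * E (p.1+p.2) * E (-p.1))
            + (-((cc p.1 * dd p.2 - cc p.2 * dd p.1)
                + (cc p.2 * dd (-(p.1+p.2)) - cc (-(p.1+p.2)) * dd p.2))) •
              (E (p.1+p.2) * E (-p.1) * E (-p.2))) := by module
      _ = _ := by rw [cid]; module
  -- reindexed versions of the three "bad" sums
  have hQA2 : ∑ p ∈ P, (-(2 * (N p.1 p.2 * N (-p.1) (-p.2)) *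
        (cc p.1 * dd p.2 - cc p.2 * dd p.1))) • (E (-p.2) * E p.2)
      = ∑ p ∈ P, (2 * (N p.1 p.2 * N (-p.1) (-p.2)) *
        (cc p.1 * dd p.2 - cc p.2 * dd p.1)) • (E (-p.1) * E p.1) := by
    rw [sum_reindex P (fun p => (p.2, p.1)) (fun p => (p.2, p.1)) hswap_mem hswap_mem
      (fun p _ => rfl) (fun p _ => rfl) (fun p => (-(2 * (N p.1 p.2 * N (-p.1) (-p.2)) *
        (cc p.1 * dd p.2 - cc p.2 * dd p.1))) • (E (-p.2) * E p.2))]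
    refine Finset.sum_congr rfl fun p hp => ?_
    simp only []
    rw [hsk1 p hp, hsk2 p hp]
    module
  have hQH2 : ∑ p ∈ P, (-(2 * (N p.1 p.2 * N (-p.1) (-p.2)) *
        (cc p.1 * dd p.2 - cc p.2 * dd p.1))) • Hh p.2
      = ∑ p ∈ P, (2 * (N p.1 p.2 * N (-p.1) (-p.2)) *
        (cc p.1 * dd p.2 - cc p.2 * dd p.1)) • Hh p.1 := by
    rw [sum_reindex P (fun p => (p.2, p.1)) (fun p => (p.2, p.1)) hswap_mem hswap_mem
      (fun p _ => rfl) (fun p _ => rfl) (fun p => (-(2 * (N p.1 p.2 * N (-p.1) (-p.2)) *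
        (cc p.1 * dd p.2 - cc p.2 * dd p.1))) • Hh p.2)]
    refine Finset.sum_congr rfl fun p hp => ?_
    simp only []
    rw [hsk1 p hp, hsk2 p hp]
    module
  have hQA3 : ∑ p ∈ P, (-(2 * (N p.1 p.2 * N (-p.1) (-p.2)) *
        (cc p.2 * dd (-(p.1+p.2)) - cc (-(p.1+p.2)) * dd p.2))) •
        (E (p.1+p.2) * E (-(p.1+p.2)))
      = ∑ p ∈ P, (2 * (N p.1 p.2 * N (-p.1) (-p.2)) *
        ((cc p.1 * dd p.2 - cc p.2 * dd p.1)
          + (cc p.2 * dd (-(p.1+p.2)) - cc (-(p.1+p.2)) * dd p.2))) • (E (-p.1) * E p.1) := by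
    rw [sum_reindex P (fun p => (p.2, -(p.1+p.2))) (fun p => (-(p.1+p.2), p.1)) hσ_mem hσi_mem
      hσinv1 hσinv2 (fun p => (-(2 * (N p.1 p.2 * N (-p.1) (-p.2)) *
        (cc p.2 * dd (-(p.1+p.2)) - cc (-(p.1+p.2)) * dd p.2))) •
        (E (p.1+p.2) * E (-(p.1+p.2))))]
    refine Finset.sum_congr rfl fun p hp => ?_
    obtain ⟨h1,h2,h3⟩ := hPm _ hp
    simp only []
    rw [hNq p hp, show p.2 + -(p.1+p.2) = -p.1 by abel]
    simp only [neg_neg]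
    rw [hNvw p hp]
    congr 1
    have h := hf3 p.1 h1 p.2 h2 h3
    linear_combination (-2 * (N p.1 p.2 * N (-p.1) (-p.2))) * h
  -- the triple of the cubic sum
  have hW3 : (∑ p ∈ P, (2 * N p.1 p.2 * (cc p.1 * dd p.2 - cc p.2 * dd p.1)) •
          (E (-p.1) * E (-p.2) * E (p.1 + p.2)))
        + (∑ p ∈ P, (2 * N p.1 p.2 * (cc p.1 * dd p.2 - cc p.2 * dd p.1)) •
          (E (-p.1) * E (-p.2) * E (p.1 + p.2)))
        + (∑ p ∈ P, (2 * N p.1 p.2 * (cc p.1 * dd p.2 - cc p.2 * dd p.1)) •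
          (E (-p.1) * E (-p.2) * E (p.1 + p.2)))
      = ∑ p ∈ P, ((2 * (N p.1 p.2 * N (-p.1) (-p.2)) *
            (3 * (cc p.1 * dd p.2 - cc p.2 * dd p.1)
              + 2 * (cc p.2 * dd (-(p.1+p.2)) - cc (-(p.1+p.2)) * dd p.2))) • (E (-p.1) * E p.1)
          + (2 * (N p.1 p.2 * N (-p.1) (-p.2)) *
            ((cc p.1 * dd p.2 - cc p.2 * dd p.1)
              + (cc p.2 * dd (-(p.1+p.2)) - cc (-(p.1+p.2)) * dd p.2))) • Hh p.1) := by
    nth_rewrite 3 [hWσ]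
    rw [hWσ2]
    nth_rewrite 2 [hWσ]
    rw [← Finset.sum_add_distrib, ← Finset.sum_add_distrib, Finset.sum_congr rfl hcubicpt]
    simp only [Finset.sum_add_distrib]
    rw [hQA2, hQH2, hQA3]
    simp only [← Finset.sum_add_distrib]
    refine Finset.sum_congr rfl fun p hp => ?_
    module
  -- the two final vanishing sums
  have hτinv : ∀ p ∈ P, ((((p.1, -(p.1+p.2)) : D × D).1,
      -((p.1, -(p.1+p.2)).1 + ((p.1, -(p.1+p.2)) : D × D).2)) : D × D) = p :=
    fun p _ => Prod.ext_iff.mpr ⟨rfl, show -(p.1 + -(p.1+p.2)) = p.2 by abel⟩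
  have hA0 : ∑ p ∈ P, (4 * (N p.1 p.2 * N (-p.1) (-p.2)) *
      (cc p.2 * dd (-(p.1+p.2)) - cc (-(p.1+p.2)) * dd p.2)) • (E (-p.1) * E p.1) = 0 := by
    refine sum_neg_self ?_
    have hre := sum_reindex P (fun p => (p.1, -(p.1+p.2))) (fun p => (p.1, -(p.1+p.2)))
      hτ_mem hτ_mem hτinv hτinv (fun p => (4 * (N p.1 p.2 * N (-p.1) (-p.2)) *
      (cc p.2 * dd (-(p.1+p.2)) - cc (-(p.1+p.2)) * dd p.2)) • (E (-p.1) * E p.1))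
    conv_lhs => rw [hre]
    rw [← Finset.sum_neg_distrib]
    refine Finset.sum_congr rfl fun p hp => ?_
    obtain ⟨h1,h2,h3⟩ := hPm _ hp
    simp only []
    rw [show -(p.1 + -(p.1+p.2)) = p.2 by abel]
    simp only [neg_neg]
    rw [hNg p hp, hNuw p hp]
    module
  have hνinv : ∀ p ∈ P, (((- -p.1 : D), (- -p.2 : D)) : D × D) = p :=
    fun p _ => Prod.ext_iff.mpr ⟨show -(-p.1) = p.1 from neg_neg _,
      show -(-p.2) = p.2 from neg_neg _⟩
  have hH0 : ∑ p ∈ P, ((N p.1 p.2 * N (-p.1) (-p.2)) *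
      (2 * (cc p.1 * dd p.2 - cc p.2 * dd p.1)
        + 2 * (cc p.2 * dd (-(p.1+p.2)) - cc (-(p.1+p.2)) * dd p.2)
        - 3 * (cc p.1 * dd p.2))) • Hh p.1 = 0 := by
    refine sum_neg_self ?_
    have hre := sum_reindex P (fun p => (-p.1, -p.2)) (fun p => (-p.1, -p.2))
      hν_mem hν_mem hνinv hνinv (fun p => ((N p.1 p.2 * N (-p.1) (-p.2)) *
      (2 * (cc p.1 * dd p.2 - cc p.2 * dd p.1)
        + 2 * (cc p.2 * dd (-(p.1+p.2)) - cc (-(p.1+p.2)) * dd p.2)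
        - 3 * (cc p.1 * dd p.2))) • Hh p.1)
    conv_lhs => rw [hre]
    rw [← Finset.sum_neg_distrib]
    refine Finset.sum_congr rfl fun p hp => ?_
    obtain ⟨h1,h2,h3⟩ := hPm _ hp
    simp only []
    rw [hHodd p.1 h1, show -p.1 + -p.2 = -(p.1+p.2) by abel]
    simp only [neg_neg, hcev, hdev]
    module
  -- conclusion
  have habc : ∀ (x : U), x + x + x = 0 → x = 0 := by
    intro x hx
    have h3 : (3:ℂ) • x = 0 := by rw [show (3:ℂ) • x = x + x + x by module, hx]
    exact (smul_eq_zero.mp h3).resolve_left (by norm_num)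
  apply habc
  have r2 : ∀ (x y z : U), x + y + z + (x + y + z) + (x + y + z)
      = (x + x + x) + ((y + y + y) + (z + z + z)) := fun x y z => by abel
  rw [r2, hW3]
  have tripleSum : ∀ (F : D × D → U), (∑ p ∈ P, F p) + (∑ p ∈ P, F p) + (∑ p ∈ P, F p)
      = ∑ p ∈ P, (F p + F p + F p) := fun F => by
    rw [← Finset.sum_add_distrib, ← Finset.sum_add_distrib]
  rw [tripleSum (fun p => (-(2 * (N p.1 p.2 * N (-p.1) (-p.2)) *
        (cc p.1 * dd p.2 - cc p.2 * dd p.1))) • (E (-p.1) * E p.1)),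
    tripleSum (fun p => (-(N p.1 p.2 * N (-p.1) (-p.2) * (cc p.1 * dd p.2))) • Hh p.1)]
  rw [Finset.sum_add_distrib]
  have r3 : ∀ (a b c d : U), (a + b) + (c + d) = (a + c) + (b + d) := fun a b c d => by abel
  rw [r3]
  have mergeA : (∑ p ∈ P, (2 * (N p.1 p.2 * N (-p.1) (-p.2)) *
        (3 * (cc p.1 * dd p.2 - cc p.2 * dd p.1)
          + 2 * (cc p.2 * dd (-(p.1+p.2)) - cc (-(p.1+p.2)) * dd p.2))) • (E (-p.1) * E p.1))
      + (∑ p ∈ P, ((-(2 * (N p.1 p.2 * N (-p.1) (-p.2)) *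
          (cc p.1 * dd p.2 - cc p.2 * dd p.1))) • (E (-p.1) * E p.1)
        + (-(2 * (N p.1 p.2 * N (-p.1) (-p.2)) *
          (cc p.1 * dd p.2 - cc p.2 * dd p.1))) • (E (-p.1) * E p.1)
        + (-(2 * (N p.1 p.2 * N (-p.1) (-p.2)) *
          (cc p.1 * dd p.2 - cc p.2 * dd p.1))) • (E (-p.1) * E p.1)))
      = ∑ p ∈ P, (4 * (N p.1 p.2 * N (-p.1) (-p.2)) *
          (cc p.2 * dd (-(p.1+p.2)) - cc (-(p.1+p.2)) * dd p.2)) • (E (-p.1) * E p.1) := by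
    rw [← Finset.sum_add_distrib]
    exact Finset.sum_congr rfl fun p hp => by module
  have mergeH : (∑ p ∈ P, (2 * (N p.1 p.2 * N (-p.1) (-p.2)) *
        ((cc p.1 * dd p.2 - cc p.2 * dd p.1)
          + (cc p.2 * dd (-(p.1+p.2)) - cc (-(p.1+p.2)) * dd p.2))) • Hh p.1)
      + (∑ p ∈ P, ((-(N p.1 p.2 * N (-p.1) (-p.2) * (cc p.1 * dd p.2))) • Hh p.1
        + (-(N p.1 p.2 * N (-p.1) (-p.2) * (cc p.1 * dd p.2))) • Hh p.1
        + (-(N p.1 p.2 * N (-p.1) (-p.2) * (cc p.1 * dd p.2))) • Hh p.1))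
      = ∑ p ∈ P, ((N p.1 p.2 * N (-p.1) (-p.2)) *
          (2 * (cc p.1 * dd p.2 - cc p.2 * dd p.1)
            + 2 * (cc p.2 * dd (-(p.1+p.2)) - cc (-(p.1+p.2)) * dd p.2)
            - 3 * (cc p.1 * dd p.2))) • Hh p.1 := by
    rw [← Finset.sum_add_distrib]
    exact Finset.sum_congr rfl fun p hp => by module
  rw [mergeA, mergeH, hA0, hH0, add_zero]


/-!
STATEMENT 3. `g` is a simple complex Lie algebra with Cartan subalgebra `h`
(embedded via `hc : H →ₗ[ℂ] L`), root system `Δ ⊆ h*`, root vectors `e α`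
normalized by `B (e α) (e (-α)) = 1` for the invariant symmetric form `B`.
For `μ ∈ h` regular (`α μ ≠ 0` for all roots `α`) and `lam ∈ h` set
`T lam = ∑ _{α∈Δ} (⟨α,lam⟩/⟨α,μ⟩) e_{-α} e_α ∈ U(g)`.
Then `T lam` and `T ν` commute for all `lam, ν ∈ h`. -/
theorem T_operators_commute
    {H : Type*} [AddCommGroup H] [Module ℂ H]
    {L : Type*} [LieRing L] [LieAlgebra ℂ L]
    (Δ : Finset (Module.Dual ℂ H)) (e : Module.Dual ℂ H → L) (hc : H →ₗ[ℂ] L)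
    (B : L →ₗ[ℂ] L →ₗ[ℂ] ℂ)
    (hBsymm : ∀ x y : L, B x y = B y x)
    (hBinv : ∀ x y z : L, B ⁅x, y⁆ z = B x ⁅y, z⁆)
    (hnegmem : ∀ α ∈ Δ, -α ∈ Δ) (h0 : (0 : Module.Dual ℂ H) ∉ Δ)
    (hnorm : ∀ α ∈ Δ, B (e α) (e (-α)) = 1)
    (N : Module.Dual ℂ H → Module.Dual ℂ H → ℂ)
    (hbr : ∀ α ∈ Δ, ∀ β ∈ Δ, α + β ∈ Δ → ⁅e α, e β⁆ = N α β • e (α + β))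
    (hvanish : ∀ α ∈ Δ, ∀ β ∈ Δ, α + β ≠ 0 → α + β ∉ Δ → ⁅e α, e β⁆ = 0)
    (t : Module.Dual ℂ H → H)
    (hcartan : ∀ α ∈ Δ, ⁅e α, e (-α)⁆ = hc (t α))
    (hweight : ∀ α ∈ Δ, ∀ x : H, ⁅hc x, e α⁆ = α x • e α)
    (μ : H) (hreg : ∀ α ∈ Δ, α μ ≠ 0) (lam ν : H) :
    (∑ α ∈ Δ, (α lam / α μ) •
        ((UniversalEnvelopingAlgebra.ι ℂ : L →ₗ⁅ℂ⁆ _) (e (-α)) *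
          (UniversalEnvelopingAlgebra.ι ℂ : L →ₗ⁅ℂ⁆ _) (e α))) *
      (∑ α ∈ Δ, (α ν / α μ) •
        ((UniversalEnvelopingAlgebra.ι ℂ : L →ₗ⁅ℂ⁆ _) (e (-α)) *
          (UniversalEnvelopingAlgebra.ι ℂ : L →ₗ⁅ℂ⁆ _) (e α)))
    = (∑ α ∈ Δ, (α ν / α μ) •
        ((UniversalEnvelopingAlgebra.ι ℂ : L →ₗ⁅ℂ⁆ _) (e (-α)) *
          (UniversalEnvelopingAlgebra.ι ℂ : L →ₗ⁅ℂ⁆ _) (e α))) *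
      (∑ α ∈ Δ, (α lam / α μ) •
        ((UniversalEnvelopingAlgebra.ι ℂ : L →ₗ⁅ℂ⁆ _) (e (-α)) *
          (UniversalEnvelopingAlgebra.ι ℂ : L →ₗ⁅ℂ⁆ _) (e α))) := by
  classical
  set ι' : L →ₗ⁅ℂ⁆ UniversalEnvelopingAlgebra ℂ L := UniversalEnvelopingAlgebra.ι ℂ with hι'
  have commU : ∀ x y : L, ι' x * ι' y = ι' y * ι' x + ι' ⁅x, y⁆ := by
    intro x y
    have h := ι'.map_lie x y
    rw [Ring.lie_def] at h
    rw [h]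
    abel
  -- nonvanishing of root vectors in Δ
  have hEne : ∀ α ∈ Δ, e α ≠ 0 := by
    intro α hα h0'
    have h := hnorm α hα
    rw [h0'] at h
    simp at h
  haveI : NoZeroSMulDivisors ℂ L := inferInstance
  -- N skew
  have hskew : ∀ α ∈ Δ, ∀ β ∈ Δ, α + β ∈ Δ → N α β = - N β α := by
    intro α hα β hβ hs
    have hb1 := hbr α hα β hβ hs
    have hb2 := hbr β hβ α hα (by rwa [add_comm])
    rw [add_comm β α] at hb2
    have key : N α β • e (α + β) = (- N β α) • e (α + β) := by
      rw [← hb1, neg_smul, ← hb2, lie_skew]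
    exact smul_left_injective ℂ (hEne _ hs) key
  -- N cyclic
  have hcyc : ∀ α ∈ Δ, ∀ β ∈ Δ, α + β ∈ Δ → N α β = N β (-(α+β)) := by
    intro α hα β hβ hs
    have hb1 := hbr α hα β hβ hs
    have hγ : -(α+β) ∈ Δ := hnegmem _ hs
    have hsum2 : β + -(α+β) ∈ Δ := by
      rw [show β + -(α+β) = -α by abel]; exact hnegmem _ hα
    have hb2 := hbr β hβ (-(α+β)) hγ hsum2
    rw [show β + -(α+β) = -α by abel] at hb2
    have lhs1 : B ⁅e α, e β⁆ (e (-(α+β))) = N α β := by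
      rw [hb1, map_smul, LinearMap.smul_apply, hnorm (α+β) hs, smul_eq_mul, mul_one]
    have lhs2 : B (e α) ⁅e β, e (-(α+β))⁆ = N β (-(α+β)) := by
      rw [hb2, map_smul, smul_eq_mul, hnorm α hα, mul_one]
    rw [← lhs1, hBinv, lhs2]
  -- scalar facts
  have hcev : ∀ (x : H), ∀ (α : Module.Dual ℂ H), ((-α) x) / ((-α) μ) = (α x) / (α μ) := by
    intro x α
    rw [LinearMap.neg_apply, LinearMap.neg_apply, neg_div_neg_eq]
  have hf3 : ∀ α ∈ Δ, ∀ β ∈ Δ, α + β ∈ Δ →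
      ((α lam / α μ) * (β ν / β μ) - (β lam / β μ) * (α ν / α μ))
        + ((β lam / β μ) * ((-(α+β)) ν / (-(α+β)) μ)
            - ((-(α+β)) lam / (-(α+β)) μ) * (β ν / β μ))
        + (((-(α+β)) lam / (-(α+β)) μ) * (α ν / α μ)
            - (α lam / α μ) * ((-(α+β)) ν / (-(α+β)) μ)) = 0 := by
    intro α hα β hβ hs
    have h1 := hreg α hα
    have h2 := hreg β hβ
    have h3 := hreg (α+β) hs
    rw [LinearMap.add_apply] at h3
    simp only [LinearMap.neg_apply, LinearMap.add_apply, neg_div_neg_eq]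
    field_simp
    ring
  -- structure facts in U
  have hEE : ∀ α ∈ Δ, ∀ β ∈ Δ, α + β ∈ Δ →
      ι' (e α) * ι' (e β) = ι' (e β) * ι' (e α) + N α β • ι' (e (α+β)) := by
    intro α hα β hβ hs
    rw [commU (e α) (e β), hbr α hα β hβ hs, map_smul]
  have hEv : ∀ α ∈ Δ, ∀ β ∈ Δ, α + β ≠ 0 → α + β ∉ Δ →
      ι' (e α) * ι' (e β) = ι' (e β) * ι' (e α) := by
    intro α hα β hβ hne hns
    rw [commU (e α) (e β), hvanish α hα β hβ hne hns, map_zero, add_zero]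
  have hEH : ∀ α ∈ Δ, ι' (e α) * ι' (e (-α)) = ι' (e (-α)) * ι' (e α) + ι' (hc (t α)) := by
    intro α hα
    rw [commU (e α) (e (-α)), hcartan α hα]
  have hAH : ∀ α ∈ Δ, (ι' (e (-α)) * ι' (e α)) * ι' (hc (t α))
      = ι' (hc (t α)) * (ι' (e (-α)) * ι' (e α)) := by
    intro α hα
    have hbh : ι' (e α) * ι' (hc (t α))
        = ι' (hc (t α)) * ι' (e α) + (-(α (t α))) • ι' (e α) := by
      rw [commU (e α) (hc (t α)),
        show ⁅e α, hc (t α)⁆ = -((α (t α)) • e α) from by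
          rw [← lie_skew, hweight α hα (t α)],
        map_neg, map_smul, neg_smul]
    have hah : ι' (e (-α)) * ι' (hc (t α))
        = ι' (hc (t α)) * ι' (e (-α)) + (α (t α)) • ι' (e (-α)) := by
      rw [commU (e (-α)) (hc (t α)),
        show ⁅e (-α), hc (t α)⁆ = (α (t α)) • e (-α) from by
          rw [← lie_skew, hweight (-α) (hnegmem α hα) (t α), LinearMap.neg_apply, neg_smul,
            neg_neg],
        map_smul]
    rw [mul_assoc, hbh, mul_add, mul_smul_comm, ← mul_assoc, hah, add_mul, smul_mul_assoc,
      mul_assoc]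
    module
  have hHodd : ∀ α ∈ Δ, ι' (hc (t (-α))) = - ι' (hc (t α)) := by
    intro α hα
    have h := hcartan (-α) (hnegmem α hα)
    rw [neg_neg] at h
    rw [← h, ← hcartan α hα, ← lie_skew, map_neg]
  exact aux_comm Δ hnegmem (fun δ => δ lam / δ μ) (fun δ => δ ν / δ μ)
    (fun α => hcev lam α) (fun α => hcev ν α) hf3 N hskew hcyc
    (fun δ => ι' (e δ)) (fun α => ι' (hc (t α))) hEE hEv hEH hAH hHodd
end

section
/- Let g be a simple complex Lie algebra and V a finite-dimensional g-module (or tensor product of highest weight modules). The operators A_{μ'} = Σ_{α>0} (⟨α,μ'⟩/⟨α,μ⟩) e_{-α}e_α on V, for μ' ∈ h and fixed regular μ ∈ h, pairwise commute: [A_{μ'}, A_{μ''}] = 0 for all μ', μ'' ∈ h. -/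
set_option linter.unusedSectionVars false
set_option maxHeartbeats 1000000

section DynAux

private lemma sum_neg_reindex {ι M : Type*} [AddCommGroup ι] [AddCommMonoid M]
    (s : Finset ι) (hneg : ∀ a ∈ s, -a ∈ s) (f : ι → M) :
    ∑ a ∈ s, f a = ∑ a ∈ s, f (-a) :=
  Finset.sum_nbij' (fun a => -a) (fun a => -a) hneg hneg
    (fun a _ => neg_neg a) (fun a _ => neg_neg a) (fun a _ => by rw [neg_neg])

private lemma sum_invol {ι M : Type*} [AddCommGroup M] [Module ℂ M]
    (s : Finset ι) (g : ι → ι) (hmem : ∀ a ∈ s, g a ∈ s) (hinv : ∀ a ∈ s, g (g a) = a)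
    (f : ι → M) (hf : ∀ a ∈ s, f (g a) = - f a) : ∑ a ∈ s, f a = 0 := by
  have h1 : ∑ a ∈ s, f (g a) = ∑ a ∈ s, f a :=
    Finset.sum_nbij' g g hmem hmem hinv hinv (fun a _ => rfl)
  have h2 : ∑ a ∈ s, f a = - ∑ a ∈ s, f a := by
    conv_lhs => rw [← h1]
    rw [Finset.sum_congr rfl hf, Finset.sum_neg_distrib]
  have h3 : (2 : ℂ) • (∑ a ∈ s, f a) = 0 := by
    rw [two_smul]
    nth_rewrite 2 [h2]
    exact add_neg_cancel _
  simpa using (smul_eq_zero.mp h3).resolve_left (by norm_num)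

private lemma sum_swap_kill {ι M : Type*} [AddCommGroup M] [Module ℂ M]
    (s : Finset ι) (F : ι → ι → M) (h : ∀ a ∈ s, ∀ b ∈ s, F b a = - F a b) :
    ∑ a ∈ s, ∑ b ∈ s, F a b = 0 := by
  have h1 : ∑ a ∈ s, ∑ b ∈ s, F a b = - ∑ a ∈ s, ∑ b ∈ s, F a b := by
    conv_lhs => rw [Finset.sum_comm]
    rw [← Finset.sum_neg_distrib]
    refine Finset.sum_congr rfl fun a ha => ?_
    rw [← Finset.sum_neg_distrib]
    exact Finset.sum_congr rfl fun b hb => h a ha b hb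
  have h3 : (2 : ℂ) • (∑ a ∈ s, ∑ b ∈ s, F a b) = 0 := by
    rw [two_smul]
    nth_rewrite 2 [h1]
    exact add_neg_cancel _
  simpa using (smul_eq_zero.mp h3).resolve_left (by norm_num)

variable {R : Type*} [Ring R] [Algebra ℂ R]

/-- `Γ x y z = {x, {y, z}}` -/
private def Ga (x y z : R) : R := x*(y*z+z*y) + (y*z+z*y)*x

/-- `Φ x y z = {x,{y,z}} + {y,{x,z}}` -/
private def Ph (x y z : R) : R := Ga x y z + Ga y x z

private lemma comm4 (a b c d : R) : a*b*(c*d) - c*d*(a*b) =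
    a*(b*c - c*b)*d + a*c*(b*d - d*b) + (a*c - c*a)*(d*b) + c*(a*d - d*a)*b := by
  noncomm_ring

private lemma regroup (a c w : R) :
    a*w*c + a*c*w + w*(c*a) + c*w*a = Ga a c w := by unfold Ga; noncomm_ring

private lemma Ga_diff (x y z : R) :
    Ga x y z - Ga y x z = (x*y - y*x)*z - z*(x*y - y*x) := by unfold Ga; noncomm_ring

private lemma Ph_symm (x y z : R) : Ph x y z = Ph y x z := by unfold Ph; abel

private lemma Ph_diff1 (x y z : R) :
    Ph y z x = Ph x y z + ((z*x - x*z)*y - y*(z*x - x*z)) := by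
  unfold Ph Ga; noncomm_ring

private lemma Ph_diff2 (x y z : R) :
    Ph z x y = Ph x y z + ((z*y - y*z)*x - x*(z*y - y*z)) := by
  unfold Ph Ga; noncomm_ring

private lemma Ga_smul (k : ℂ) (x y z : R) : Ga x y (k • z) = k • Ga x y z := by
  simp [Ga, mul_smul_comm, smul_mul_assoc, smul_add, mul_add, add_mul]

private lemma Ga_neg (x y z : R) : Ga x y (-z) = - Ga x y z := by
  simp [Ga, mul_add, add_mul]; abel

private lemma Ph_smul (k : ℂ) (x y z : R) : Ph x y (k • z) = k • Ph x y z := by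
  simp [Ph, Ga_smul, smul_add]

private lemma Ph_neg (x y z : R) : Ph x y (-z) = - Ph x y z := by
  simp [Ph, Ga_neg]; abel

private lemma Ph_zero (x y : R) : Ph x y (0 : R) = 0 := by simp [Ph, Ga]

end DynAux

attribute [local instance 100] LieRing.ofAssociativeRing

theorem dynamical_operators_commute
    {H : Type*} [AddCommGroup H] [Module ℂ H]
    {L : Type*} [LieRing L] [LieAlgebra ℂ L]
    {V : Type*} [AddCommGroup V] [Module ℂ V]
    (Δ Δplus : Finset (Module.Dual ℂ H))
    (hpos : Δplus ⊆ Δ) (hsplit : ∀ α ∈ Δ, α ∈ Δplus ∨ -α ∈ Δplus)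
    (hdisj : ∀ α ∈ Δplus, -α ∉ Δplus) (h0 : (0 : Module.Dual ℂ H) ∉ Δ)
    (e : Module.Dual ℂ H → L) (hc : H →ₗ[ℂ] L)
    (B : L →ₗ[ℂ] L →ₗ[ℂ] ℂ)
    (hBsymm : ∀ x y : L, B x y = B y x)
    (hBinv : ∀ x y z : L, B ⁅x, y⁆ z = B x ⁅y, z⁆)
    (hnegmem : ∀ α ∈ Δ, -α ∈ Δ)
    (hnorm : ∀ α ∈ Δ, B (e α) (e (-α)) = 1)
    (N : Module.Dual ℂ H → Module.Dual ℂ H → ℂ)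
    (hbr : ∀ α ∈ Δ, ∀ β ∈ Δ, α + β ∈ Δ → ⁅e α, e β⁆ = N α β • e (α + β))
    (hvanish : ∀ α ∈ Δ, ∀ β ∈ Δ, α + β ≠ 0 → α + β ∉ Δ → ⁅e α, e β⁆ = 0)
    (t : Module.Dual ℂ H → H)
    (hcartan : ∀ α ∈ Δ, ⁅e α, e (-α)⁆ = hc (t α))
    (hweight : ∀ α ∈ Δ, ∀ x : H, ⁅hc x, e α⁆ = α x • e α)
    (ρ : L →ₗ⁅ℂ⁆ Module.End ℂ V)
    (μ : H) (hreg : ∀ α ∈ Δ, α μ ≠ 0) (μ' μ'' : H) :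
    Commute
      (∑ α ∈ Δplus, (α μ' / α μ) • (ρ (e (-α)) * ρ (e α)))
      (∑ α ∈ Δplus, (α μ'' / α μ) • (ρ (e (-α)) * ρ (e α))) := by
  classical
  set f₁ : Module.Dual ℂ H → ℂ := fun α => α μ' / α μ with hf₁
  set f₂ : Module.Dual ℂ H → ℂ := fun α => α μ'' / α μ with hf₂
  have hf₁neg : ∀ α, f₁ (-α) = f₁ α := fun α => by
    simp only [hf₁, LinearMap.neg_apply, neg_div_neg_eq]
  have hf₂neg : ∀ α, f₂ (-α) = f₂ α := fun α => by
    simp only [hf₂, LinearMap.neg_apply, neg_div_neg_eq]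
  have hρ : ∀ x y : L, ρ ⁅x, y⁆ = ρ x * ρ y - ρ y * ρ x := fun x y => by
    rw [LieHom.map_lie, Ring.lie_def]
  have hsk : ∀ u v : L, ⁅u, v⁆ = -⁅v, u⁆ := fun u v => by rw [← lie_skew u v]
  -- nonvanishing of root vectors, scalar cancellation
  have hene : ∀ γ ∈ Δ, e γ ≠ 0 := by
    intro γ hγ h
    have h1 := hnorm γ hγ
    rw [h] at h1; simp at h1
  have hscal : ∀ (k : ℂ) (v : L), v ≠ 0 → k • v = 0 → k = 0 := by
    intro k v hv hkv
    by_contra hk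
    exact hv (by rw [← inv_smul_smul₀ hk v, hkv, smul_zero])
  -- antisymmetry of structure constants
  have hNanti : ∀ p ∈ Δ, ∀ q ∈ Δ, p + q ∈ Δ → N q p = - N p q := by
    intro p hp q hq hpq
    have h1 := hbr p hp q hq hpq
    have h2 := hbr q hq p hp (by rwa [add_comm])
    have h3 : (N q p + N p q) • e (p + q) = 0 := by
      rw [add_smul]
      rw [add_comm q p] at h2
      rw [← h2, ← h1, hsk (e q) (e p)]
      abel
    exact eq_neg_of_add_eq_zero_left (hscal _ _ (hene _ hpq) h3)
  -- cyclicity of structure constants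
  have hNcyc : ∀ p ∈ Δ, ∀ q ∈ Δ, p + q ∈ Δ → N p q = N q (-(p+q)) := by
    intro p hp q hq hpq
    have hqm : q + -(p+q) = -p := by abel
    have hqmem : q + -(p+q) ∈ Δ := by rw [hqm]; exact hnegmem p hp
    calc N p q = N p q * B (e (p+q)) (e (-(p+q))) := by rw [hnorm (p+q) hpq, mul_one]
    _ = B (N p q • e (p+q)) (e (-(p+q))) := by simp [smul_eq_mul]
    _ = B ⁅e p, e q⁆ (e (-(p+q))) := by rw [← hbr p hp q hq hpq]
    _ = B (e p) ⁅e q, e (-(p+q))⁆ := hBinv _ _ _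
    _ = B (e p) (N q (-(p+q)) • e (q + -(p+q))) := by
        rw [hbr q hq (-(p+q)) (hnegmem _ hpq) hqmem]
    _ = N q (-(p+q)) * B (e p) (e (-p)) := by rw [hqm]; simp [smul_eq_mul]
    _ = N q (-(p+q)) := by rw [hnorm p hp, mul_one]
  -- negation of coroots
  have htneg : ∀ α ∈ Δ, hc (t (-α)) = - hc (t α) := by
    intro α hα
    have h1 := hcartan (-α) (hnegmem α hα)
    rw [neg_neg] at h1
    rw [← h1, ← hcartan α hα, hsk (e (-α)) (e α)]
  -- commuting Cartan elements
  have hHH : ∀ p ∈ Δ, ∀ q ∈ Δ, ⁅hc (t p), hc (t q)⁆ = 0 := by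
    intro p hp q hq
    rw [← hcartan q hq, leibniz_lie, hweight q hq, hweight (-q) (hnegmem q hq),
      smul_lie, lie_smul, LinearMap.neg_apply, neg_smul]
    abel
  -- Cartan elements commute with the quadratic terms
  have hcartX : ∀ (x : H), ∀ α ∈ Δ, Commute (ρ (hc x)) (ρ (e (-α)) * ρ (e α)) := by
    intro x α hα
    have h1 : ρ (hc x) * ρ (e (-α)) - ρ (e (-α)) * ρ (hc x) = (-(α x)) • ρ (e (-α)) := by
      rw [← hρ, hweight (-α) (hnegmem α hα) x, map_smul, LinearMap.neg_apply]
    have h2 : ρ (hc x) * ρ (e α) - ρ (e α) * ρ (hc x) = (α x) • ρ (e α) := by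
      rw [← hρ, hweight α hα x, map_smul]
    have h3 : ρ (hc x) * (ρ (e (-α)) * ρ (e α)) - (ρ (e (-α)) * ρ (e α)) * ρ (hc x)
        = (ρ (hc x) * ρ (e (-α)) - ρ (e (-α)) * ρ (hc x)) * ρ (e α)
          + ρ (e (-α)) * (ρ (hc x) * ρ (e α) - ρ (e α) * ρ (hc x)) := by noncomm_ring
    rw [h1, h2, smul_mul_assoc, mul_smul_comm, neg_smul, neg_add_cancel] at h3
    exact (sub_eq_zero.mp h3)
  -- the symmetrized operators
  set S₁ : Module.End ℂ V := ∑ α ∈ Δ, f₁ α • (ρ (e (-α)) * ρ (e α)) with hS₁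
  set S₂ : Module.End ℂ V := ∑ α ∈ Δ, f₂ α • (ρ (e (-α)) * ρ (e α)) with hS₂
  set C₁ : Module.End ℂ V := ∑ α ∈ Δplus, f₁ α • ρ (hc (t α)) with hC₁
  set C₂ : Module.End ℂ V := ∑ α ∈ Δplus, f₂ α • ρ (hc (t α)) with hC₂
  set A₁ : Module.End ℂ V := ∑ α ∈ Δplus, f₁ α • (ρ (e (-α)) * ρ (e α)) with hA₁
  set A₂ : Module.End ℂ V := ∑ α ∈ Δplus, f₂ α • (ρ (e (-α)) * ρ (e α)) with hA₂
  -- decomposition of the root system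
  have hΔunion : Δ = Δplus ∪ Δplus.image (fun a => -a) := by
    ext x
    simp only [Finset.mem_union, Finset.mem_image]
    constructor
    · intro hx
      rcases hsplit x hx with h | h
      · exact Or.inl h
      · exact Or.inr ⟨-x, h, neg_neg x⟩
    · rintro (h | ⟨y, hy, rfl⟩)
      · exact hpos h
      · exact hnegmem y (hpos hy)
  have hdisj2 : Disjoint Δplus (Δplus.image (fun a => -a)) := by
    rw [Finset.disjoint_left]
    rintro x hx hx2
    simp only [Finset.mem_image] at hx2
    obtain ⟨y, hy, rfl⟩ := hx2
    exact hdisj y hy hx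
  have hΔdecomp : ∀ g : Module.Dual ℂ H → Module.End ℂ V,
      ∑ α ∈ Δ, g α = ∑ α ∈ Δplus, g α + ∑ α ∈ Δplus, g (-α) := by
    intro g
    rw [hΔunion, Finset.sum_union hdisj2]
    congr 1
    exact Finset.sum_image (fun x _ y _ h => neg_inj.mp h)
  -- S = 2A + C
  have hXflip : ∀ α ∈ Δplus, ρ (e α) * ρ (e (-α))
      = ρ (hc (t α)) + ρ (e (-α)) * ρ (e α) := by
    intro α hα
    have hx : ρ (e α) * ρ (e (-α)) - ρ (e (-α)) * ρ (e α) = ρ (hc (t α)) :=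
      (hρ (e α) (e (-α))).symm.trans (congrArg ρ (hcartan α (hpos hα)))
    rw [← hx]; abel
  have hSdecomp₁ : S₁ = (2 : ℂ) • A₁ + C₁ := by
    rw [hS₁, hΔdecomp]
    have h2 : ∑ α ∈ Δplus, f₁ (-α) • (ρ (e (-(-α))) * ρ (e (-α))) = C₁ + A₁ := by
      rw [hC₁, hA₁, ← Finset.sum_add_distrib]
      refine Finset.sum_congr rfl fun α hα => ?_
      rw [neg_neg, hf₁neg, hXflip α hα, smul_add]
    rw [h2, hA₁]
    module
  have hSdecomp₂ : S₂ = (2 : ℂ) • A₂ + C₂ := by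
    rw [hS₂, hΔdecomp]
    have h2 : ∑ α ∈ Δplus, f₂ (-α) • (ρ (e (-(-α))) * ρ (e (-α))) = C₂ + A₂ := by
      rw [hC₂, hA₂, ← Finset.sum_add_distrib]
      refine Finset.sum_congr rfl fun α hα => ?_
      rw [neg_neg, hf₂neg, hXflip α hα, smul_add]
    rw [h2, hA₂]
    module
  have hC₁A₂ : Commute C₁ A₂ := by
    refine Commute.sum_left _ _ _ fun i hi => Commute.sum_right _ _ _ fun j hj => ?_
    exact ((hcartX (t i) j (hpos hj)).smul_right _).smul_left _
  have hC₂A₁ : Commute C₂ A₁ := by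
    refine Commute.sum_left _ _ _ fun i hi => Commute.sum_right _ _ _ fun j hj => ?_
    exact ((hcartX (t i) j (hpos hj)).smul_right _).smul_left _
  have hC₁C₂ : Commute C₁ C₂ := by
    refine Commute.sum_left _ _ _ fun i hi => Commute.sum_right _ _ _ fun j hj => ?_
    refine (Commute.smul_right ?_ _).smul_left _
    have h1 : ρ (hc (t i)) * ρ (hc (t j)) - ρ (hc (t j)) * ρ (hc (t i)) = 0 := by
      rw [← hρ, hHH i (hpos hi) j (hpos hj), map_zero]
    exact sub_eq_zero.mp h1
  have hρneg : ∀ x : L, ρ (-x) = - ρ x := fun x => by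
    have hx : (-x : L) = (-1 : ℂ) • x := by simp
    rw [hx, map_smul]; simp
  have hSS : Commute S₁ S₂ := by
    -- E1: the commutator as a double sum
    have hE1a : S₁ * S₂ = ∑ α ∈ Δ, ∑ β ∈ Δ, (f₁ α * f₂ β) •
        ((ρ (e (-α)) * ρ (e α)) * (ρ (e (-β)) * ρ (e β))) := by
      rw [hS₁, hS₂, Finset.sum_mul_sum]
      exact Finset.sum_congr rfl fun α _ => Finset.sum_congr rfl fun β _ =>
        smul_mul_smul_comm _ _ _ _
    have hE1b : S₂ * S₁ = ∑ α ∈ Δ, ∑ β ∈ Δ, (f₁ α * f₂ β) •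
        ((ρ (e (-β)) * ρ (e β)) * (ρ (e (-α)) * ρ (e α))) := by
      rw [hS₂, hS₁, Finset.sum_mul_sum, Finset.sum_comm]
      exact Finset.sum_congr rfl fun α _ => Finset.sum_congr rfl fun β _ => by
        rw [smul_mul_smul_comm, mul_comm (f₂ β) (f₁ α)]
    have hE1 : S₁ * S₂ - S₂ * S₁ = ∑ α ∈ Δ, ∑ β ∈ Δ, (f₁ α * f₂ β) •
        ((ρ (e (-α)) * ρ (e α)) * (ρ (e (-β)) * ρ (e β))
          - (ρ (e (-β)) * ρ (e β)) * (ρ (e (-α)) * ρ (e α))) := by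
      rw [hE1a, hE1b, ← Finset.sum_sub_distrib]
      exact Finset.sum_congr rfl fun α _ => by
        rw [← Finset.sum_sub_distrib]
        exact Finset.sum_congr rfl fun β _ => (smul_sub _ _ _).symm
    -- E2: expand each commutator
    have hE2 : S₁ * S₂ - S₂ * S₁ =
        (∑ α ∈ Δ, ∑ β ∈ Δ, (f₁ α * f₂ β) • (ρ (e (-α)) * ρ ⁅e α, e (-β)⁆ * ρ (e β)))
      + (∑ α ∈ Δ, ∑ β ∈ Δ, (f₁ α * f₂ β) • (ρ (e (-α)) * ρ (e (-β)) * ρ ⁅e α, e β⁆))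
      + (∑ α ∈ Δ, ∑ β ∈ Δ, (f₁ α * f₂ β) • (ρ ⁅e (-α), e (-β)⁆ * (ρ (e β) * ρ (e α))))
      + (∑ α ∈ Δ, ∑ β ∈ Δ, (f₁ α * f₂ β) • (ρ (e (-β)) * ρ ⁅e (-α), e β⁆ * ρ (e α))) := by
      rw [hE1, ← Finset.sum_add_distrib, ← Finset.sum_add_distrib, ← Finset.sum_add_distrib]
      refine Finset.sum_congr rfl fun α _ => ?_
      rw [← Finset.sum_add_distrib, ← Finset.sum_add_distrib, ← Finset.sum_add_distrib]
      refine Finset.sum_congr rfl fun β _ => ?_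
      rw [← smul_add, ← smul_add, ← smul_add]
      congr 1
      rw [hρ (e α) (e (-β)), hρ (e α) (e β), hρ (e (-α)) (e (-β)), hρ (e (-α)) (e β)]
      exact comm4 _ _ _ _
    -- E3, E4, E5: reindex the last three double sums by sign changes
    have hE3 : (∑ α ∈ Δ, ∑ β ∈ Δ, (f₁ α * f₂ β) • (ρ (e (-α)) * ρ (e (-β)) * ρ ⁅e α, e β⁆))
        = ∑ α ∈ Δ, ∑ β ∈ Δ, (f₁ α * f₂ β) • (ρ (e (-α)) * ρ (e β) * ρ ⁅e α, e (-β)⁆) := by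
      refine Finset.sum_congr rfl fun α _ => ?_
      rw [sum_neg_reindex Δ hnegmem]
      refine Finset.sum_congr rfl fun β _ => ?_
      rw [neg_neg, hf₂neg]
    have hE4 : (∑ α ∈ Δ, ∑ β ∈ Δ, (f₁ α * f₂ β) • (ρ ⁅e (-α), e (-β)⁆ * (ρ (e β) * ρ (e α))))
        = ∑ α ∈ Δ, ∑ β ∈ Δ, (f₁ α * f₂ β) • (ρ ⁅e α, e (-β)⁆ * (ρ (e β) * ρ (e (-α)))) := by
      rw [sum_neg_reindex Δ hnegmem]
      refine Finset.sum_congr rfl fun α _ => ?_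
      refine Finset.sum_congr rfl fun β _ => ?_
      rw [neg_neg, hf₁neg]
    have hE5 : (∑ α ∈ Δ, ∑ β ∈ Δ, (f₁ α * f₂ β) • (ρ (e (-β)) * ρ ⁅e (-α), e β⁆ * ρ (e α)))
        = ∑ α ∈ Δ, ∑ β ∈ Δ, (f₁ α * f₂ β) • (ρ (e β) * ρ ⁅e α, e (-β)⁆ * ρ (e (-α))) := by
      rw [sum_neg_reindex Δ hnegmem]
      refine Finset.sum_congr rfl fun α _ => ?_
      rw [sum_neg_reindex Δ hnegmem]
      refine Finset.sum_congr rfl fun β _ => ?_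
      rw [neg_neg, neg_neg, hf₁neg, hf₂neg]
    -- E6: recombine into the Γ form
    have hE6 : S₁ * S₂ - S₂ * S₁ = ∑ α ∈ Δ, ∑ β ∈ Δ,
        (f₁ α * f₂ β) • Ga (ρ (e (-α))) (ρ (e β)) (ρ ⁅e α, e (-β)⁆) := by
      rw [hE2, hE3, hE4, hE5, ← Finset.sum_add_distrib, ← Finset.sum_add_distrib,
        ← Finset.sum_add_distrib]
      refine Finset.sum_congr rfl fun α _ => ?_
      rw [← Finset.sum_add_distrib, ← Finset.sum_add_distrib, ← Finset.sum_add_distrib]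
      refine Finset.sum_congr rfl fun β _ => ?_
      rw [← smul_add, ← smul_add, ← smul_add]
      congr 1
      exact regroup _ _ _
    -- E7: the same with the roles reversed
    have hE7 : S₁ * S₂ - S₂ * S₁ = ∑ α ∈ Δ, ∑ β ∈ Δ,
        (-(f₁ β * f₂ α)) • Ga (ρ (e β)) (ρ (e (-α))) (ρ ⁅e α, e (-β)⁆) := by
      rw [hE6, Finset.sum_comm]
      rw [sum_neg_reindex Δ hnegmem]
      refine Finset.sum_congr rfl fun x _ => ?_
      rw [sum_neg_reindex Δ hnegmem]
      refine Finset.sum_congr rfl fun y _ => ?_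
      rw [neg_neg, neg_neg, hf₁neg, hf₂neg, hsk (e (-y)) (e x), hρneg, Ga_neg,
        smul_neg, ← neg_smul]
    -- E8/E9: antisymmetrize
    have hE9 : (4:ℂ) • (S₁ * S₂ - S₂ * S₁)
        = (∑ α ∈ Δ, ∑ β ∈ Δ, (f₁ α * f₂ β - f₁ β * f₂ α) •
            Ph (ρ (e (-α))) (ρ (e β)) (ρ ⁅e α, e (-β)⁆))
        + (∑ α ∈ Δ, ∑ β ∈ Δ, (f₁ α * f₂ β + f₁ β * f₂ α) •
            ρ ⁅⁅e (-α), e β⁆, ⁅e α, e (-β)⁆⁆) := by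
      have hE8 : (2:ℂ) • (S₁ * S₂ - S₂ * S₁) = ∑ α ∈ Δ, ∑ β ∈ Δ,
          ((f₁ α * f₂ β) • Ga (ρ (e (-α))) (ρ (e β)) (ρ ⁅e α, e (-β)⁆)
            - (f₁ β * f₂ α) • Ga (ρ (e β)) (ρ (e (-α))) (ρ ⁅e α, e (-β)⁆)) := by
        rw [two_smul]
        nth_rewrite 1 [hE6]
        nth_rewrite 1 [hE7]
        rw [← Finset.sum_add_distrib]
        refine Finset.sum_congr rfl fun α _ => ?_
        rw [← Finset.sum_add_distrib]
        refine Finset.sum_congr rfl fun β _ => ?_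
        rw [neg_smul]
        abel
      have h42 : (4:ℂ) • (S₁ * S₂ - S₂ * S₁) = (2:ℂ) • ((2:ℂ) • (S₁ * S₂ - S₂ * S₁)) := by
        module
      rw [h42, hE8, Finset.smul_sum, ← Finset.sum_add_distrib]
      refine Finset.sum_congr rfl fun α _ => ?_
      rw [Finset.smul_sum, ← Finset.sum_add_distrib]
      refine Finset.sum_congr rfl fun β _ => ?_
      have hu : Ga (ρ (e (-α))) (ρ (e β)) (ρ ⁅e α, e (-β)⁆)
          - Ga (ρ (e β)) (ρ (e (-α))) (ρ ⁅e α, e (-β)⁆)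
          = ρ ⁅⁅e (-α), e β⁆, ⁅e α, e (-β)⁆⁆ := by
        rw [Ga_diff, ← hρ (e (-α)) (e β), ← hρ ⁅e (-α), e β⁆ ⁅e α, e (-β)⁆]
      have hP : Ph (ρ (e (-α))) (ρ (e β)) (ρ ⁅e α, e (-β)⁆)
          = Ga (ρ (e (-α))) (ρ (e β)) (ρ ⁅e α, e (-β)⁆)
            + Ga (ρ (e β)) (ρ (e (-α))) (ρ ⁅e α, e (-β)⁆) := rfl
      rw [hP, ← hu]
      module
    -- E10: the symmetric part dies by the swap involution
    have hE10 : (∑ α ∈ Δ, ∑ β ∈ Δ, (f₁ α * f₂ β + f₁ β * f₂ α) •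
        ρ ⁅⁅e (-α), e β⁆, ⁅e α, e (-β)⁆⁆) = 0 := by
      apply sum_swap_kill
      intro a _ b _
      rw [hsk (e (-b)) (e a), hsk (e b) (e (-a)), neg_lie, lie_neg, neg_neg,
        hsk ⁅e a, e (-b)⁆ ⁅e (-a), e b⁆, hρneg]
      module
    have hE11 : (4:ℂ) • (S₁ * S₂ - S₂ * S₁) = ∑ α ∈ Δ, ∑ β ∈ Δ,
        (f₁ α * f₂ β - f₁ β * f₂ α) • Ph (ρ (e (-α))) (ρ (e β)) (ρ ⁅e α, e (-β)⁆) := by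
      rw [hE9, hE10, add_zero]
    -- pass to the product set and restrict to pairs with α - β a root
    set tf : Module.Dual ℂ H → Module.Dual ℂ H → Module.End ℂ V := fun x y =>
      (f₁ (x + y) * f₂ x - f₁ x * f₂ (x + y)) •
        Ph (ρ (e (-(x + y)))) (ρ (e x)) (ρ ⁅e (x + y), e (-x)⁆) with htf
    set ψf : Module.Dual ℂ H → Module.Dual ℂ H → Module.End ℂ V := fun b w =>
      ((2:ℂ) * (f₁ b * f₂ w - f₁ w * f₂ b) * N (b+w) (-b) * N w (-(b+w))) •
          ρ (hc (t (-b)))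
        + ((2:ℂ) * (f₁ w * f₂ (b+w) - f₁ (b+w) * f₂ w) * N (b+w) (-b) * N w (-(b+w))) •
          (- ρ (hc (t (b+w)))) with hψf
    set Tset : Finset (Module.Dual ℂ H × Module.Dual ℂ H) :=
      (Δ ×ˢ Δ).filter (fun q => q.1 + q.2 ∈ Δ) with hTset
    have hprod : (∑ α ∈ Δ, ∑ β ∈ Δ, (f₁ α * f₂ β - f₁ β * f₂ α) •
          Ph (ρ (e (-α))) (ρ (e β)) (ρ ⁅e α, e (-β)⁆))
        = ∑ q ∈ Δ ×ˢ Δ, (f₁ q.1 * f₂ q.2 - f₁ q.2 * f₂ q.1) •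
          Ph (ρ (e (-q.1))) (ρ (e q.2)) (ρ ⁅e q.1, e (-q.2)⁆) :=
      (Finset.sum_product' _ _ _).symm
    have hfilter : (∑ q ∈ Δ ×ˢ Δ, (f₁ q.1 * f₂ q.2 - f₁ q.2 * f₂ q.1) •
          Ph (ρ (e (-q.1))) (ρ (e q.2)) (ρ ⁅e q.1, e (-q.2)⁆))
        = ∑ q ∈ (Δ ×ˢ Δ).filter (fun q => q.1 + -q.2 ∈ Δ),
            (f₁ q.1 * f₂ q.2 - f₁ q.2 * f₂ q.1) •
            Ph (ρ (e (-q.1))) (ρ (e q.2)) (ρ ⁅e q.1, e (-q.2)⁆) := by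
      refine (Finset.sum_subset (Finset.filter_subset _ _) ?_).symm
      intro q hq hqn
      simp only [Finset.mem_filter] at hqn
      simp only [Finset.mem_product] at hq
      have hqn' : q.1 + -q.2 ∉ Δ := fun h => hqn ⟨Finset.mem_product.mpr hq, h⟩
      by_cases hc2 : q.2 = q.1
      · rw [hc2]
        simp
      · have hne : q.1 + -q.2 ≠ 0 := by
          intro h
          rw [← sub_eq_add_neg] at h
          exact hc2 (eq_of_sub_eq_zero h).symm
        rw [hvanish q.1 hq.1 (-q.2) (hnegmem _ hq.2) hne hqn', map_zero,
          Ph_zero, smul_zero]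
    have htr : (∑ q ∈ (Δ ×ˢ Δ).filter (fun q => q.1 + -q.2 ∈ Δ),
            (f₁ q.1 * f₂ q.2 - f₁ q.2 * f₂ q.1) •
            Ph (ρ (e (-q.1))) (ρ (e q.2)) (ρ ⁅e q.1, e (-q.2)⁆))
        = ∑ q ∈ Tset, tf q.1 q.2 := by
      refine Finset.sum_nbij' (fun q => (q.2, q.1 + -q.2)) (fun q => (q.1 + q.2, q.1))
        ?_ ?_ ?_ ?_ ?_
      · intro q hq
        simp only [Finset.mem_filter, Finset.mem_product] at hq
        rw [hTset, Finset.mem_filter, Finset.mem_product]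
        refine ⟨⟨hq.1.2, hq.2⟩, ?_⟩
        rw [show q.2 + (q.1 + -q.2) = q.1 from by abel]
        exact hq.1.1
      · intro q hq
        rw [hTset, Finset.mem_filter, Finset.mem_product] at hq
        simp only [Finset.mem_filter, Finset.mem_product]
        refine ⟨⟨hq.2, hq.1.1⟩, ?_⟩
        rw [show q.1 + q.2 + -q.1 = q.2 from by abel]
        exact hq.1.2
      · intro q _
        refine Prod.ext ?_ ?_
        · show q.2 + (q.1 + -q.2) = q.1
          abel
        · rfl
      · intro q _
        refine Prod.ext ?_ ?_
        · rfl
        · show q.1 + q.2 + -q.1 = q.2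
          abel
      · intro q _
        show _ = tf q.2 (q.1 + -q.2)
        simp only [htf]
        rw [show q.2 + (q.1 + -q.2) = q.1 from by abel]
    have hmain4 : (4:ℂ) • (S₁ * S₂ - S₂ * S₁) = ∑ q ∈ Tset, tf q.1 q.2 := by
      rw [hE11, hprod, hfilter, htr]
    -- the five reindexings of the triple sum
    have hmemg : ∀ q ∈ Tset, ((-(q.1 + q.2), q.2) : _ × _) ∈ Tset ∧
        ((q.2, -(q.1 + q.2)) : _ × _) ∈ Tset ∧ ((q.1, -(q.1 + q.2)) : _ × _) ∈ Tset ∧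
        ((-(q.1 + q.2), q.1) : _ × _) ∈ Tset ∧ ((q.2, q.1) : _ × _) ∈ Tset := by
      intro q hq
      rw [hTset, Finset.mem_filter, Finset.mem_product] at hq
      obtain ⟨⟨h1, h2⟩, h3⟩ := hq
      refine ⟨?_, ?_, ?_, ?_, ?_⟩ <;>
        · rw [hTset, Finset.mem_filter, Finset.mem_product]
          constructor
          · exact ⟨by first | exact h1 | exact h2 | exact hnegmem _ h3,
              by first | exact h1 | exact h2 | exact hnegmem _ h3⟩
          · first
            | (show -(q.1 + q.2) + q.2 ∈ Δ
               rw [show -(q.1 + q.2) + q.2 = -q.1 from by abel]; exact hnegmem _ h1)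
            | (show q.2 + -(q.1 + q.2) ∈ Δ
               rw [show q.2 + -(q.1 + q.2) = -q.1 from by abel]; exact hnegmem _ h1)
            | (show q.1 + -(q.1 + q.2) ∈ Δ
               rw [show q.1 + -(q.1 + q.2) = -q.2 from by abel]; exact hnegmem _ h2)
            | (show -(q.1 + q.2) + q.1 ∈ Δ
               rw [show -(q.1 + q.2) + q.1 = -q.2 from by abel]; exact hnegmem _ h2)
            | (show q.2 + q.1 ∈ Δ
               rw [show q.2 + q.1 = q.1 + q.2 from by abel]; exact h3)
    have hg2 : ∑ q ∈ Tset, tf (-(q.1 + q.2)) q.2 = ∑ q ∈ Tset, tf q.1 q.2 := by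
      refine Finset.sum_nbij' (fun q => (-(q.1 + q.2), q.2)) (fun q => (-(q.1 + q.2), q.2))
        (fun q hq => (hmemg q hq).1) (fun q hq => (hmemg q hq).1) ?_ ?_ ?_
      · intro q _
        refine Prod.ext ?_ rfl
        show -(-(q.1 + q.2) + q.2) = q.1
        abel
      · intro q _
        refine Prod.ext ?_ rfl
        show -(-(q.1 + q.2) + q.2) = q.1
        abel
      · intro q _
        rfl
    have hg3 : ∑ q ∈ Tset, tf q.2 (-(q.1 + q.2)) = ∑ q ∈ Tset, tf q.1 q.2 := by
      refine Finset.sum_nbij' (fun q => (q.2, -(q.1 + q.2))) (fun q => (-(q.1 + q.2), q.1))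
        (fun q hq => (hmemg q hq).2.1) (fun q hq => (hmemg q hq).2.2.2.1) ?_ ?_ ?_
      · intro q _
        refine Prod.ext ?_ rfl
        show -(q.2 + -(q.1 + q.2)) = q.1
        abel
      · intro q _
        refine Prod.ext rfl ?_
        show -(-(q.1 + q.2) + q.1) = q.2
        abel
      · intro q _
        rfl
    have hg4 : ∑ q ∈ Tset, tf q.1 (-(q.1 + q.2)) = ∑ q ∈ Tset, tf q.1 q.2 := by
      refine Finset.sum_nbij' (fun q => (q.1, -(q.1 + q.2))) (fun q => (q.1, -(q.1 + q.2)))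
        (fun q hq => (hmemg q hq).2.2.1) (fun q hq => (hmemg q hq).2.2.1) ?_ ?_ ?_
      · intro q _
        refine Prod.ext rfl ?_
        show -(q.1 + -(q.1 + q.2)) = q.2
        abel
      · intro q _
        refine Prod.ext rfl ?_
        show -(q.1 + -(q.1 + q.2)) = q.2
        abel
      · intro q _
        rfl
    have hg5 : ∑ q ∈ Tset, tf (-(q.1 + q.2)) q.1 = ∑ q ∈ Tset, tf q.1 q.2 := by
      refine Finset.sum_nbij' (fun q => (-(q.1 + q.2), q.1)) (fun q => (q.2, -(q.1 + q.2)))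
        (fun q hq => (hmemg q hq).2.2.2.1) (fun q hq => (hmemg q hq).2.1) ?_ ?_ ?_
      · intro q _
        refine Prod.ext ?_ ?_
        · show (-(q.1 + q.2), q.1).2 = q.1
          rfl
        · show -(-(q.1 + q.2) + q.1) = q.2
          abel
      · intro q _
        refine Prod.ext ?_ ?_
        · show -(q.2 + -(q.1 + q.2)) = q.1
          abel
        · rfl
      · intro q _
        rfl
    have hg6 : ∑ q ∈ Tset, tf q.2 q.1 = ∑ q ∈ Tset, tf q.1 q.2 := by
      refine Finset.sum_nbij' (fun q => (q.2, q.1)) (fun q => (q.2, q.1))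
        (fun q hq => (hmemg q hq).2.2.2.2) (fun q hq => (hmemg q hq).2.2.2.2) ?_ ?_ ?_
      · intro q _
        exact Prod.ext rfl rfl
      · intro q _
        exact Prod.ext rfl rfl
      · intro q _
        rfl
    have h6 : ∑ q ∈ Tset, (tf q.1 q.2 + tf (-(q.1 + q.2)) q.2 + tf q.2 (-(q.1 + q.2))
          + tf q.1 (-(q.1 + q.2)) + tf (-(q.1 + q.2)) q.1 + tf q.2 q.1)
        = (6:ℂ) • ∑ q ∈ Tset, tf q.1 q.2 := by
      rw [Finset.sum_add_distrib, Finset.sum_add_distrib, Finset.sum_add_distrib,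
        Finset.sum_add_distrib, Finset.sum_add_distrib, hg2, hg3, hg4, hg5, hg6]
      module
    -- the per-point identity
    have hSIXψ : ∀ q ∈ Tset, tf q.1 q.2 + tf (-(q.1 + q.2)) q.2 + tf q.2 (-(q.1 + q.2))
          + tf q.1 (-(q.1 + q.2)) + tf (-(q.1 + q.2)) q.1 + tf q.2 q.1 = ψf q.1 q.2 := by
      rintro ⟨b, w⟩ hq
      rw [hTset, Finset.mem_filter, Finset.mem_product] at hq
      obtain ⟨⟨hb, hw⟩, hs⟩ := hq
      dsimp only at *
      have hnb := hnegmem b hb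
      have hnw := hnegmem w hw
      have hns := hnegmem _ hs
      -- bracket evaluations
      have A1 : ⁅e (b + w), e (-b)⁆ = N (b + w) (-b) • e w := by
        have h := hbr (b + w) hs (-b) hnb
          (by rw [show b + w + -b = w from by abel]; exact hw)
        rwa [show b + w + -b = w from by abel] at h
      have A2 : ⁅e (-b), e (b + w)⁆ = N (-b) (b + w) • e w := by
        have h := hbr (-b) hnb (b + w) hs
          (by rw [show -b + (b + w) = w from by abel]; exact hw)
        rwa [show -b + (b + w) = w from by abel] at h
      have A3 : ⁅e (-b), e (-w)⁆ = N (-b) (-w) • e (-(b + w)) := by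
        have h := hbr (-b) hnb (-w) hnw
          (by rw [show -b + -w = -(b + w) from by abel]; exact hns)
        rwa [show -b + -w = -(b + w) from by abel] at h
      have A4 : ⁅e (-w), e (-b)⁆ = N (-w) (-b) • e (-(b + w)) := by
        have h := hbr (-w) hnw (-b) hnb
          (by rw [show -w + -b = -(b + w) from by abel]; exact hns)
        rwa [show -w + -b = -(b + w) from by abel] at h
      have A5 : ⁅e (-w), e (b + w)⁆ = N (-w) (b + w) • e b := by
        have h := hbr (-w) hnw (b + w) hs
          (by rw [show -w + (b + w) = b from by abel]; exact hb)
        rwa [show -w + (b + w) = b from by abel] at h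
      have A6 : ⁅e (b + w), e (-w)⁆ = N (b + w) (-w) • e b := by
        have h := hbr (b + w) hs (-w) hnw
          (by rw [show b + w + -w = b from by abel]; exact hb)
        rwa [show b + w + -w = b from by abel] at h
      have A7 : ⁅e w, e (-(b + w))⁆ = N w (-(b + w)) • e (-b) := by
        have h := hbr w hw (-(b + w)) hns
          (by rw [show w + -(b + w) = -b from by abel]; exact hnb)
        rwa [show w + -(b + w) = -b from by abel] at h
      have A8 : ⁅e w, e b⁆ = N w b • e (b + w) := by
        have h := hbr w hw b hb (by rw [show w + b = b + w from by abel]; exact hs)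
        rwa [show w + b = b + w from by abel] at h
      have A9 : ⁅e (-b), e b⁆ = hc (t (-b)) := by
        have h := hcartan (-b) hnb
        rwa [neg_neg] at h
      have A10 : ⁅e (b + w), e (-(b + w))⁆ = hc (t (b + w)) := hcartan _ hs
      -- structure-constant relations
      have R2 : N (-b) (b + w) = -N (b + w) (-b) :=
        hNanti (b + w) hs (-b) hnb
          (by rw [show b + w + -b = w from by abel]; exact hw)
      have R3 : N (-b) (-w) = N (b + w) (-b) := by
        have h := hNcyc (b + w) hs (-b) hnb
          (by rw [show b + w + -b = w from by abel]; exact hw)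
        rw [show -(b + w + -b) = -w from by abel] at h
        exact h.symm
      have R4 : N (-w) (-b) = -N (b + w) (-b) := by
        have h := hNanti (-b) hnb (-w) hnw
          (by rw [show -b + -w = -(b + w) from by abel]; exact hns)
        rw [R3] at h
        exact h
      have R5 : N (-w) (b + w) = N (b + w) (-b) := by
        have h := hNcyc (-b) hnb (-w) hnw
          (by rw [show -b + -w = -(b + w) from by abel]; exact hns)
        rw [show -(-b + -w) = b + w from by abel, R3] at h
        exact h.symm
      have R6 : N (b + w) (-w) = -N (b + w) (-b) := by
        have h := hNanti (-w) hnw (b + w) hs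
          (by rw [show -w + (b + w) = b from by abel]; exact hb)
        rw [R5] at h
        exact h
      have Rη1 : N (-(b + w)) b = N w (-(b + w)) := by
        have h := hNcyc w hw (-(b + w)) hns
          (by rw [show w + -(b + w) = -b from by abel]; exact hnb)
        rw [show -(w + -(b + w)) = b from by abel] at h
        exact h.symm
      have Rη2 : N b w = N w (-(b + w)) := by
        have h := hNcyc (-(b + w)) hns b hb
          (by rw [show -(b + w) + b = -w from by abel]; exact hnw)
        rw [show -(-(b + w) + b) = w from by abel] at h
        rw [← h]
        exact Rη1
      have R8 : N w b = -N w (-(b + w)) := by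
        have h := hNanti b hb w hw hs
        rw [Rη2] at h
        exact h
      -- the six terms
      have T1 : tf b w = ((f₁ (b + w) * f₂ b - f₁ b * f₂ (b + w)) * N (b + w) (-b)) •
          Ph (ρ (e (-(b + w)))) (ρ (e b)) (ρ (e w)) := by
        simp only [htf]
        rw [A1, map_smul, Ph_smul, smul_smul]
      have T2 : tf (-(b + w)) w = ((f₁ b * f₂ (b + w) - f₁ (b + w) * f₂ b) *
            -N (b + w) (-b)) • Ph (ρ (e (-(b + w)))) (ρ (e b)) (ρ (e w)) := by
        simp only [htf]
        rw [show -(b + w) + w = -b from by abel, neg_neg b, neg_neg (b + w),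
          hf₁neg b, hf₁neg (b + w), hf₂neg b, hf₂neg (b + w), A2, R2,
          map_smul, Ph_smul, smul_smul, Ph_symm (ρ (e b)) (ρ (e (-(b + w))))]
      have T3 : tf w (-(b + w)) = ((f₁ b * f₂ w - f₁ w * f₂ b) * N (b + w) (-b)) •
          Ph (ρ (e b)) (ρ (e w)) (ρ (e (-(b + w)))) := by
        simp only [htf]
        rw [show w + -(b + w) = -b from by abel, neg_neg b, hf₁neg b, hf₂neg b,
          A3, R3, map_smul, Ph_smul, smul_smul]
      have T4 : tf b (-(b + w)) = ((f₁ w * f₂ b - f₁ b * f₂ w) * -N (b + w) (-b)) •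
          Ph (ρ (e b)) (ρ (e w)) (ρ (e (-(b + w)))) := by
        simp only [htf]
        rw [show b + -(b + w) = -w from by abel, neg_neg w, hf₁neg w, hf₂neg w,
          A4, R4, map_smul, Ph_smul, smul_smul, Ph_symm (ρ (e w)) (ρ (e b))]
      have T5 : tf (-(b + w)) b = ((f₁ w * f₂ (b + w) - f₁ (b + w) * f₂ w) *
            N (b + w) (-b)) • Ph (ρ (e w)) (ρ (e (-(b + w)))) (ρ (e b)) := by
        simp only [htf]
        rw [show -(b + w) + b = -w from by abel, neg_neg w, neg_neg (b + w),
          hf₁neg w, hf₁neg (b + w), hf₂neg w, hf₂neg (b + w), A5, R5,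
          map_smul, Ph_smul, smul_smul]
      have T6 : tf w b = ((f₁ (b + w) * f₂ w - f₁ w * f₂ (b + w)) * -N (b + w) (-b)) •
          Ph (ρ (e w)) (ρ (e (-(b + w)))) (ρ (e b)) := by
        simp only [htf]
        rw [show w + b = b + w from by abel, A6, R6, map_smul, Ph_smul,
          smul_smul, Ph_symm (ρ (e (-(b + w)))) (ρ (e w))]
      rw [T1, T2, T3, T4, T5, T6,
        Ph_diff1 (ρ (e (-(b + w)))) (ρ (e b)) (ρ (e w)),
        Ph_diff2 (ρ (e (-(b + w)))) (ρ (e b)) (ρ (e w))]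
      -- rewrite the correction terms
      have hcorr1 : ρ (e w) * ρ (e (-(b + w))) - ρ (e (-(b + w))) * ρ (e w)
          = N w (-(b + w)) • ρ (e (-b)) := by
        rw [← hρ, A7, map_smul]
      have hcorr2 : ρ (e w) * ρ (e b) - ρ (e b) * ρ (e w)
          = (-N w (-(b + w))) • ρ (e (b + w)) := by
        rw [← hρ, A8, R8, map_smul]
      rw [hcorr1, hcorr2, smul_mul_assoc, smul_mul_assoc, mul_smul_comm, mul_smul_comm,
        ← smul_sub, ← smul_sub, ← hρ, ← hρ, A9, A10]
      -- collect coefficients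
      have hK0 : (f₁ (b + w) * f₂ b - f₁ b * f₂ (b + w)) + (f₁ b * f₂ w - f₁ w * f₂ b)
          + (f₁ w * f₂ (b + w) - f₁ (b + w) * f₂ w) = 0 := by
        have hbμ := hreg b hb
        have hwμ := hreg w hw
        have hsμ : b μ + w μ ≠ 0 := by
          have h := hreg _ hs
          rwa [LinearMap.add_apply] at h
        simp only [hf₁, hf₂, LinearMap.add_apply]
        field_simp
        ring
      have hsplit2 : ((f₁ (b + w) * f₂ b - f₁ b * f₂ (b + w)) * N (b + w) (-b)) •
            Ph (ρ (e (-(b + w)))) (ρ (e b)) (ρ (e w))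
          + ((f₁ b * f₂ (b + w) - f₁ (b + w) * f₂ b) * -N (b + w) (-b)) •
            Ph (ρ (e (-(b + w)))) (ρ (e b)) (ρ (e w))
          + ((f₁ b * f₂ w - f₁ w * f₂ b) * N (b + w) (-b)) •
            (Ph (ρ (e (-(b + w)))) (ρ (e b)) (ρ (e w))
              + (N w (-(b + w)) • ρ (hc (t (-b)))))
          + ((f₁ w * f₂ b - f₁ b * f₂ w) * -N (b + w) (-b)) •
            (Ph (ρ (e (-(b + w)))) (ρ (e b)) (ρ (e w))
              + (N w (-(b + w)) • ρ (hc (t (-b)))))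
          + ((f₁ w * f₂ (b + w) - f₁ (b + w) * f₂ w) * N (b + w) (-b)) •
            (Ph (ρ (e (-(b + w)))) (ρ (e b)) (ρ (e w))
              + ((-N w (-(b + w))) • ρ (hc (t (b + w)))))
          + ((f₁ (b + w) * f₂ w - f₁ w * f₂ (b + w)) * -N (b + w) (-b)) •
            (Ph (ρ (e (-(b + w)))) (ρ (e b)) (ρ (e w))
              + ((-N w (-(b + w))) • ρ (hc (t (b + w)))))
          = (((f₁ (b + w) * f₂ b - f₁ b * f₂ (b + w)) + (f₁ b * f₂ w - f₁ w * f₂ b)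
              + (f₁ w * f₂ (b + w) - f₁ (b + w) * f₂ w)) * ((2:ℂ) * N (b + w) (-b))) •
            Ph (ρ (e (-(b + w)))) (ρ (e b)) (ρ (e w))
          + ((2:ℂ) * (f₁ b * f₂ w - f₁ w * f₂ b) * N (b + w) (-b) * N w (-(b + w))) •
            ρ (hc (t (-b)))
          + ((2:ℂ) * (f₁ w * f₂ (b + w) - f₁ (b + w) * f₂ w) * N (b + w) (-b) *
              N w (-(b + w))) • (- ρ (hc (t (b + w)))) := by
        module
      rw [hsplit2, hK0, zero_mul, zero_smul, zero_add]
    -- the Cartan remainder dies by the negation involution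
    have hψneg : ∀ b ∈ Δ, ∀ w ∈ Δ, b + w ∈ Δ → ψf (-b) (-w) = - ψf b w := by
      intro b hb w hw hs
      have hns := hnegmem _ hs
      have hnadd : (-b) + (-w) = -(b + w) := (neg_add b w).symm
      have Rη1 : N (-(b + w)) b = N w (-(b + w)) := by
        have h := hNcyc w hw (-(b + w)) hns
          (by rw [show w + -(b + w) = -b from by abel]; exact hnegmem b hb)
        rw [show -(w + -(b + w)) = b from by abel] at h
        exact h.symm
      have R5 : N (-w) (b + w) = N (b + w) (-b) := by
        have h3 : N (-b) (-w) = N (b + w) (-b) := by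
          have h := hNcyc (b + w) hs (-b) (hnegmem b hb)
            (by rw [show b + w + -b = w from by abel]; exact hw)
          rw [show -(b + w + -b) = -w from by abel] at h
          exact h.symm
        have h := hNcyc (-b) (hnegmem b hb) (-w) (hnegmem w hw)
          (by rw [show -b + -w = -(b + w) from by abel]; exact hns)
        rw [show -(-b + -w) = b + w from by abel, h3] at h
        exact h.symm
      have ht1 : ρ (hc (t b)) = - ρ (hc (t (-b))) := by
        rw [htneg b hb, hρneg, neg_neg]
      simp only [hψf]
      rw [hnadd, neg_neg b, neg_neg (b + w), hf₁neg b, hf₁neg w, hf₁neg (b + w),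
        hf₂neg b, hf₂neg w, hf₂neg (b + w), Rη1, R5, ht1, htneg (b + w) hs, hρneg]
      module
    have hψ0 : ∑ q ∈ Tset, ψf q.1 q.2 = 0 := by
      refine sum_invol Tset (fun q => (-q.1, -q.2)) ?_ ?_ _ ?_
      · intro a ha
        rw [hTset, Finset.mem_filter, Finset.mem_product] at ha ⊢
        refine ⟨⟨hnegmem _ ha.1.1, hnegmem _ ha.1.2⟩, ?_⟩
        show -a.1 + -a.2 ∈ Δ
        rw [show -a.1 + -a.2 = -(a.1 + a.2) from (neg_add _ _).symm]
        exact hnegmem _ ha.2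
      · intro a _
        show (-(-a.1), -(-a.2)) = a
        rw [neg_neg, neg_neg]
      · intro a ha
        rw [hTset, Finset.mem_filter, Finset.mem_product] at ha
        exact hψneg a.1 ha.1.1 a.2 ha.1.2 ha.2
    have hT0 : ∑ q ∈ Tset, tf q.1 q.2 = 0 := by
      have h60 : (6:ℂ) • ∑ q ∈ Tset, tf q.1 q.2 = 0 := by
        rw [← h6, Finset.sum_congr rfl hSIXψ, hψ0]
      simpa using (smul_eq_zero.mp h60).resolve_left (by norm_num)
    have hD0 : S₁ * S₂ - S₂ * S₁ = 0 := by
      have h4 : (4:ℂ) • (S₁ * S₂ - S₂ * S₁) = 0 := by rw [hmain4, hT0]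
      simpa using (smul_eq_zero.mp h4).resolve_left (by norm_num)
    exact sub_eq_zero.mp hD0
  -- assemble
  have hAA : Commute ((2:ℂ) • A₁) ((2:ℂ) • A₂) := by
    have e₁ : (2:ℂ) • A₁ = S₁ - C₁ := by rw [hSdecomp₁]; abel
    have e₂ : (2:ℂ) • A₂ = S₂ - C₂ := by rw [hSdecomp₂]; abel
    rw [e₁, e₂]
    have hS₁C₂ : Commute S₁ C₂ := by
      rw [hSdecomp₁]
      exact ((hC₂A₁.symm.smul_left _).add_left hC₁C₂)
    have hC₁S₂ : Commute C₁ S₂ := by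
      rw [hSdecomp₂]
      exact ((hC₁A₂.smul_right _).add_right hC₁C₂)
    exact (hSS.sub_right hS₁C₂).sub_left (hC₁S₂.sub_right hC₁C₂)
  have h44 : (4:ℂ) • (A₁ * A₂) = (4:ℂ) • (A₂ * A₁) := by
    have h := hAA
    unfold Commute SemiconjBy at h
    rw [smul_mul_smul_comm, smul_mul_smul_comm] at h
    norm_num at h
    rw [h]
  exact smul_right_injective _ (by norm_num : (4:ℂ) ≠ 0) h44
end

section
/- Let M(Λ) be the Verma module over the Kac–Moody algebra without Serre relations g, generated by v with n_+ v = 0 and hv = ⟨Λ,h⟩v. There is a unique bilinear form S on M(Λ) with S(v,v) = 1, S(e_i x, y) = S(x, f_i y) and S(f_i x, y) = S(x, e_i y) for all x,y and i; moreover S is symmetric and distinct weight spaces M(Λ)_λ are S-orthogonal. -/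
noncomputable section

namespace KacMoodyFree

inductive Gen (H : Type*) (r : ℕ) : Type _
  | e : Fin r → Gen H r
  | f : Fin r → Gen H r
  | h : H → Gen H r

variable {H : Type*} [AddCommGroup H] [Module ℂ H] {r : ℕ}

/-- Defining relations of the Kac–Moody Lie algebra without Serre relations. -/
def rels (α : Fin r → Module.Dual ℂ H) (hv : Fin r → H) :
    Set (FreeLieAlgebra ℂ (Gen H r)) :=
  let of : Gen H r → FreeLieAlgebra ℂ (Gen H r) := FreeLieAlgebra.of ℂ
  {x | (∃ a b : H, x = of (Gen.h (a + b)) - of (Gen.h a) - of (Gen.h b)) ∨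
       (∃ (c : ℂ) (a : H), x = of (Gen.h (c • a)) - c • of (Gen.h a)) ∨
       (∃ a b : H, x = ⁅of (Gen.h a), of (Gen.h b)⁆) ∨
       (∃ (a : H) (i : Fin r), x = ⁅of (Gen.h a), of (Gen.e i)⁆ - α i a • of (Gen.e i)) ∨
       (∃ (a : H) (i : Fin r), x = ⁅of (Gen.h a), of (Gen.f i)⁆ + α i a • of (Gen.f i)) ∨
       (∃ i j : Fin r, x = ⁅of (Gen.e i), of (Gen.f j)⁆ -
          (if i = j then of (Gen.h (hv i)) else 0))}

def relIdeal (α : Fin r → Module.Dual ℂ H) (hv : Fin r → H) :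
    LieIdeal ℂ (FreeLieAlgebra ℂ (Gen H r)) :=
  LieSubmodule.lieSpan ℂ _ (rels α hv)

/-- The Kac–Moody Lie algebra without Serre relations. -/
def KM (α : Fin r → Module.Dual ℂ H) (hv : Fin r → H) : Type _ :=
  FreeLieAlgebra ℂ (Gen H r) ⧸ relIdeal α hv

variable (α : Fin r → Module.Dual ℂ H) (hv : Fin r → H)

instance : LieRing (KM α hv) :=
  inferInstanceAs (LieRing (FreeLieAlgebra ℂ (Gen H r) ⧸ relIdeal α hv))
instance : LieAlgebra ℂ (KM α hv) :=
  inferInstanceAs (LieAlgebra ℂ (FreeLieAlgebra ℂ (Gen H r) ⧸ relIdeal α hv))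

def E (i : Fin r) : KM α hv :=
  LieSubmodule.Quotient.mk' (relIdeal α hv) (FreeLieAlgebra.of ℂ (Gen.e i))

def F (i : Fin r) : KM α hv :=
  LieSubmodule.Quotient.mk' (relIdeal α hv) (FreeLieAlgebra.of ℂ (Gen.f i))

def Hg (x : H) : KM α hv :=
  LieSubmodule.Quotient.mk' (relIdeal α hv) (FreeLieAlgebra.of ℂ (Gen.h x))

end KacMoodyFree
namespace KacMoodyFree
variable {H : Type*} [AddCommGroup H] [Module ℂ H] {r : ℕ}
variable (α : Fin r → Module.Dual ℂ H) (hv : Fin r → H)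

/-- `mk'` as a linear map. -/
def mkL : FreeLieAlgebra ℂ (Gen H r) →ₗ[ℂ] KM α hv :=
  (LieSubmodule.Quotient.mk' (relIdeal α hv) :
    FreeLieAlgebra ℂ (Gen H r) →ₗ⁅ℂ,FreeLieAlgebra ℂ (Gen H r)⁆ _).toLinearMap

lemma mk_rel {x : FreeLieAlgebra ℂ (Gen H r)} (hx : x ∈ rels α hv) :
    mkL α hv x = 0 :=
  (LieSubmodule.Quotient.mk_eq_zero _).2 (LieSubmodule.subset_lieSpan hx)

lemma mkL_bracket (x y : FreeLieAlgebra ℂ (Gen H r)) :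
    mkL α hv ⁅x, y⁆ = ⁅mkL α hv x, mkL α hv y⁆ := rfl

lemma km_EF (i j : Fin r) :
    ⁅E α hv i, F α hv j⁆ = if i = j then Hg α hv (hv i) else 0 := by
  have h0 := mk_rel α hv (Or.inr <| Or.inr <| Or.inr <| Or.inr <| Or.inr ⟨i, j, rfl⟩)
  rw [map_sub, sub_eq_zero, mkL_bracket] at h0
  rw [show E α hv i = mkL α hv (FreeLieAlgebra.of ℂ (Gen.e i)) from rfl,
    show F α hv j = mkL α hv (FreeLieAlgebra.of ℂ (Gen.f j)) from rfl, h0]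
  split <;> rfl

lemma km_HE (a : H) (i : Fin r) :
    ⁅Hg α hv a, E α hv i⁆ = α i a • E α hv i := by
  have h0 := mk_rel α hv (Or.inr <| Or.inr <| Or.inr <| Or.inl ⟨a, i, rfl⟩)
  rw [map_sub, sub_eq_zero, mkL_bracket, map_smul] at h0
  exact h0

lemma km_HF (a : H) (i : Fin r) :
    ⁅Hg α hv a, F α hv i⁆ = -(α i a • F α hv i) := by
  have h0 := mk_rel α hv (Or.inr <| Or.inr <| Or.inr <| Or.inr <| Or.inl ⟨a, i, rfl⟩)
  rw [map_add, add_eq_zero_iff_eq_neg, mkL_bracket, map_smul] at h0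
  exact h0

end KacMoodyFree
namespace KacMoodyFree
variable {H : Type*} [AddCommGroup H] [Module ℂ H] {r : ℕ}
variable {α : Fin r → Module.Dual ℂ H} {hv : Fin r → H}
variable {M : Type*} [AddCommGroup M] [Module ℂ M]
  [LieRingModule (KM α hv) M] [LieModule ℂ (KM α hv) M]

lemma ef_comm (i j : Fin r) (x : M) :
    ⁅E α hv i, ⁅F α hv j, x⁆⁆ =
      ⁅F α hv j, ⁅E α hv i, x⁆⁆ + if i = j then ⁅Hg α hv (hv i), x⁆ else 0 := by
  rw [leibniz_lie, km_EF, add_comm]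
  congr 1
  split <;> simp

lemma hf_comm (a : H) (j : Fin r) (x : M) :
    ⁅Hg α hv a, ⁅F α hv j, x⁆⁆ =
      ⁅F α hv j, ⁅Hg α hv a, x⁆⁆ - α j a • ⁅F α hv j, x⁆ := by
  rw [leibniz_lie, km_HF, neg_lie, smul_lie]
  abel

/-- Bundled data of a Verma module for `KM α hv`. -/
structure VSetup (α : Fin r → Module.Dual ℂ H) (hv : Fin r → H) (M : Type*)
    [AddCommGroup M] [Module ℂ M] [LieRingModule (KM α hv) M]
    [LieModule ℂ (KM α hv) M] where
  Lam : Module.Dual ℂ H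
  v : M
  hhw1 : ∀ i : Fin r, ⁅E α hv i, v⁆ = 0
  hhw2 : ∀ x : H, ⁅Hg α hv x, v⁆ = Lam x • v
  φ : FreeAlgebra ℂ (Fin r) ≃ₗ[ℂ] M
  hφ1 : φ 1 = v
  hφmul : ∀ (i : Fin r) (w : FreeAlgebra ℂ (Fin r)),
    φ (FreeAlgebra.ι ℂ i * w) = ⁅F α hv i, φ w⁆

namespace VSetup
variable (V : VSetup α hv M)

/-- The standard monomial vectors `f_{i₁} ⋯ f_{iₖ} v`. -/
def m (V : VSetup α hv M) : List (Fin r) → M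
  | [] => V.v
  | (i :: w) => ⁅F α hv i, V.m w⁆

/-- The weight (evaluated at `a`) of the weight space indexed by a multiset. -/
def wt (s : Multiset (Fin r)) (a : H) : ℂ := V.Lam a - (s.map fun k => α k a).sum

lemma h_m (a : H) : ∀ w : List (Fin r),
    ⁅Hg α hv a, V.m w⁆ = V.wt (↑w) a • V.m w
  | [] => by simp [m, wt, V.hhw2]
  | (j :: w) => by
      rw [m, hf_comm, h_m a w, lie_smul]
      rw [← sub_smul]
      congr 1
      simp [wt, Multiset.cons_coe]
      ring

lemma e_m (i j : Fin r) (w : List (Fin r)) :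
    ⁅E α hv i, V.m (j :: w)⁆ =
      ⁅F α hv j, ⁅E α hv i, V.m w⁆⁆ +
        (if i = j then V.wt (↑w) (hv i) else 0) • V.m w := by
  rw [m, ef_comm]
  congr 1
  split
  · subst ‹i = j›; rw [h_m]
  · rw [zero_smul]

lemma e_nil (i : Fin r) : ⁅E α hv i, V.m []⁆ = 0 := V.hhw1 i

lemma φ_symm_f (i : Fin r) (x : M) :
    V.φ.symm ⁅F α hv i, x⁆ = FreeAlgebra.ι ℂ i * V.φ.symm x := by
  have h := V.hφmul i (V.φ.symm x)
  rw [V.φ.apply_symm_apply] at h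
  rw [← h, V.φ.symm_apply_apply]

lemma φ_symm_v : V.φ.symm V.v = 1 := by
  rw [← V.hφ1, V.φ.symm_apply_apply]

/-- Coefficient of the highest weight vector. -/
def co : M →ₗ[ℂ] ℂ :=
  (FreeAlgebra.lift ℂ (fun _ : Fin r => (0 : ℂ))).toLinearMap ∘ₗ V.φ.symm.toLinearMap

lemma co_v : V.co V.v = 1 := by
  simp [co, φ_symm_v]

lemma co_f (i : Fin r) (x : M) : V.co ⁅F α hv i, x⁆ = 0 := by
  simp [co, φ_symm_f, FreeAlgebra.lift_ι_apply]

/-- Anti-action of the free algebra by the `e_i`. -/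
def Aop (V : VSetup α hv M) : FreeAlgebra ℂ (Fin r) →ₐ[ℂ] (Module.End ℂ M)ᵐᵒᵖ :=
  FreeAlgebra.lift ℂ fun i =>
    MulOpposite.op (LieModule.toEnd ℂ (KM α hv) M (E α hv i))

/-- The contravariant form. -/
def S : M →ₗ[ℂ] M →ₗ[ℂ] ℂ :=
  LinearMap.mk₂ ℂ (fun x y => V.co (((V.Aop (V.φ.symm x)).unop) y))
    (fun x x' y => by simp [map_add, MulOpposite.unop_add, LinearMap.add_apply])
    (fun c x y => by simp [map_smul, MulOpposite.unop_smul, LinearMap.smul_apply])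
    (fun x y y' => by simp) (fun c x y => by simp)

lemma S_apply (x y : M) : V.S x y = V.co (((V.Aop (V.φ.symm x)).unop) y) := rfl

lemma S_v (y : M) : V.S V.v y = V.co y := by
  rw [S_apply, φ_symm_v, map_one]
  rfl

lemma S_v_v : V.S V.v V.v = 1 := by rw [S_v, co_v]

lemma S_v_f (i : Fin r) (y : M) : V.S V.v ⁅F α hv i, y⁆ = 0 := by
  rw [S_v, co_f]

lemma S_f_left (i : Fin r) (x y : M) :
    V.S ⁅F α hv i, x⁆ y = V.S x ⁅E α hv i, y⁆ := by
  rw [S_apply, S_apply, φ_symm_f, map_mul, MulOpposite.unop_mul]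
  simp [Aop, FreeAlgebra.lift_ι_apply, Module.End.mul_apply]

/-- Monomials in the free algebra. -/
def P (w : List (Fin r)) : FreeAlgebra ℂ (Fin r) := (w.map (FreeAlgebra.ι ℂ)).prod

lemma φ_P : ∀ w : List (Fin r), V.φ (P w) = V.m w
  | [] => by simp [P, m, V.hφ1]
  | (i :: w) => by
      rw [P, List.map_cons, List.prod_cons, ← P, V.hφmul, φ_P w]
      rfl

lemma equiv_P : ∀ w : List (Fin r),
    FreeAlgebra.equivMonoidAlgebraFreeMonoid (P w) =
      MonoidAlgebra.single (FreeMonoid.ofList w) (1 : ℂ)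
  | [] => by
      rw [P, List.map_nil, List.prod_nil, map_one, MonoidAlgebra.one_def]
      rfl
  | (i :: w) => by
      rw [P, List.map_cons, List.prod_cons, map_mul, ← P, equiv_P w]
      rw [show FreeAlgebra.equivMonoidAlgebraFreeMonoid (FreeAlgebra.ι ℂ i) =
        MonoidAlgebra.single (FreeMonoid.of i) (1 : ℂ) by
          simp [FreeAlgebra.equivMonoidAlgebraFreeMonoid, FreeAlgebra.lift_ι_apply]]
      rw [MonoidAlgebra.single_mul_single, one_mul]
      rfl

lemma basis_apply (w : FreeMonoid (Fin r)) :
    FreeAlgebra.basisFreeMonoid ℂ (Fin r) w = P w.toList := by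
  rw [FreeAlgebra.basisFreeMonoid, Module.Basis.map_apply]
  exact (AlgEquiv.symm_apply_eq _).mpr (equiv_P w.toList).symm

/-- The monomial basis of `M`. -/
def bM : Module.Basis (FreeMonoid (Fin r)) ℂ M :=
  (FreeAlgebra.basisFreeMonoid ℂ (Fin r)).map V.φ

lemma bM_apply (w : FreeMonoid (Fin r)) : V.bM w = V.m w.toList := by
  rw [bM, Module.Basis.map_apply, basis_apply, φ_P]

lemma span_m : Submodule.span ℂ (Set.range V.m) = ⊤ := by
  have h := V.bM.span_eq
  rw [← h]
  apply le_antisymm <;> apply Submodule.span_mono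
  · rintro x ⟨w, rfl⟩
    exact ⟨FreeMonoid.ofList w, by rw [bM_apply]; rfl⟩
  · rintro x ⟨w, rfl⟩
    exact ⟨w.toList, (V.bM_apply w).symm⟩

/-- Span of monomials of length `k`. -/
def Ln (V : VSetup α hv M) (k : ℕ) : Submodule ℂ M :=
  Submodule.span ℂ {x | ∃ w : List (Fin r), w.length = k ∧ V.m w = x}

/-- Span of monomials with index multiset `s`. -/
def Wc (V : VSetup α hv M) (s : Multiset (Fin r)) : Submodule ℂ M :=
  Submodule.span ℂ {x | ∃ w : List (Fin r), (↑w : Multiset (Fin r)) = s ∧ V.m w = x}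

lemma m_mem_Ln (w : List (Fin r)) : V.m w ∈ V.Ln w.length :=
  Submodule.subset_span ⟨w, rfl, rfl⟩

lemma m_mem_Wc (w : List (Fin r)) : V.m w ∈ V.Wc ↑w :=
  Submodule.subset_span ⟨w, rfl, rfl⟩

lemma lie_mem_of_forall (c : KM α hv) {g : Set M} {p : Submodule ℂ M}
    (h : ∀ x ∈ g, ⁅c, x⁆ ∈ p) {x : M} (hx : x ∈ Submodule.span ℂ g) : ⁅c, x⁆ ∈ p := by
  have hle : Submodule.span ℂ g ≤ p.comap (LieModule.toEnd ℂ (KM α hv) M c) :=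
    Submodule.span_le.mpr h
  exact hle hx

lemma f_Ln {k : ℕ} (i : Fin r) {x : M} (hx : x ∈ V.Ln k) :
    ⁅F α hv i, x⁆ ∈ V.Ln (k + 1) := by
  refine lie_mem_of_forall _ ?_ hx
  rintro z ⟨w, hw, rfl⟩
  exact Submodule.subset_span ⟨i :: w, by simp [hw], rfl⟩

lemma f_Wc {s : Multiset (Fin r)} (i : Fin r) {x : M} (hx : x ∈ V.Wc s) :
    ⁅F α hv i, x⁆ ∈ V.Wc (i ::ₘ s) := by
  refine lie_mem_of_forall _ ?_ hx
  rintro z ⟨w, hw, rfl⟩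
  exact Submodule.subset_span ⟨i :: w, by rw [← hw]; exact Multiset.cons_coe i w, rfl⟩

lemma e_m_not_mem (i : Fin r) : ∀ w : List (Fin r), i ∉ w → ⁅E α hv i, V.m w⁆ = 0
  | [], _ => V.e_nil i
  | (j :: w), h => by
      rw [e_m, e_m_not_mem i w (fun hm => h (List.mem_cons_of_mem j hm)),
        lie_zero, if_neg (fun hij => h (by rw [hij]; exact List.mem_cons_self)), zero_smul,
        add_zero]

lemma e_m_mem_Ln (i : Fin r) : ∀ w : List (Fin r),
    ⁅E α hv i, V.m w⁆ ∈ V.Ln (w.length - 1)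
  | [] => by rw [V.e_nil i]; exact zero_mem _
  | (j :: w) => by
      rw [e_m]
      refine add_mem ?_ (Submodule.smul_mem _ _ ?_)
      · rcases w with _ | ⟨a, w⟩
        · rw [V.e_nil i, lie_zero]; exact zero_mem _
        · have h1 := V.f_Ln j (e_m_mem_Ln i (a :: w))
          simpa using h1
      · simpa using V.m_mem_Ln w

lemma e_m_mem_Wc (i : Fin r) : ∀ w : List (Fin r),
    ⁅E α hv i, V.m w⁆ ∈ V.Wc ((↑w : Multiset (Fin r)).erase i)
  | [] => by rw [V.e_nil i]; exact zero_mem _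
  | (j :: w) => by
      rw [e_m, ← Multiset.cons_coe]
      by_cases hij : i = j
      · subst hij
        rw [Multiset.erase_cons_head, if_pos rfl]
        refine add_mem ?_ (Submodule.smul_mem _ _ (V.m_mem_Wc w))
        by_cases hm : i ∈ w
        · have h1 := V.f_Wc i (e_m_mem_Wc i w)
          rwa [Multiset.cons_erase (Multiset.mem_coe.mpr hm)] at h1
        · rw [V.e_m_not_mem i w hm, lie_zero]; exact zero_mem _
      · rw [Multiset.erase_cons_tail _ (fun h => hij h.symm), if_neg hij,
          zero_smul, add_zero]
        exact V.f_Wc j (e_m_mem_Wc i w)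

lemma e_Ln {k : ℕ} (i : Fin r) {x : M} (hx : x ∈ V.Ln k) :
    ⁅E α hv i, x⁆ ∈ V.Ln (k - 1) := by
  refine lie_mem_of_forall _ ?_ hx
  rintro z ⟨w, hw, rfl⟩
  exact hw ▸ V.e_m_mem_Ln i w

lemma e_Wc {s : Multiset (Fin r)} (i : Fin r) {x : M} (hx : x ∈ V.Wc s) :
    ⁅E α hv i, x⁆ ∈ V.Wc (s.erase i) := by
  refine lie_mem_of_forall _ ?_ hx
  rintro z ⟨w, hw, rfl⟩
  exact hw ▸ V.e_m_mem_Wc i w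

lemma e_Wc_zero {s : Multiset (Fin r)} (i : Fin r) (hs : i ∉ s) {x : M}
    (hx : x ∈ V.Wc s) : ⁅E α hv i, x⁆ = 0 := by
  have h : ⁅E α hv i, x⁆ ∈ (⊥ : Submodule ℂ M) := by
    refine lie_mem_of_forall _ ?_ hx
    rintro z ⟨w, hw, rfl⟩
    rw [V.e_m_not_mem i w (fun hm => hs (hw ▸ Multiset.mem_coe.mpr hm))]
    exact zero_mem _
  simpa using h

lemma map_sum_counts (f : Fin r → ℂ) (s : Multiset (Fin r)) :
    (s.map f).sum = ∑ i, (s.count i : ℂ) * f i := by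
  induction s using Multiset.induction_on with
  | empty => simp
  | cons j s ih =>
      rw [Multiset.map_cons, Multiset.sum_cons, ih]
      have key : ∀ i : Fin r, ((j ::ₘ s).count i : ℂ) * f i
          = (s.count i : ℂ) * f i + (if i = j then f i else 0) := by
        intro i
        rw [Multiset.count_cons]
        push_cast
        split <;> ring
      rw [Finset.sum_congr rfl (fun i _ => key i), Finset.sum_add_distrib,
        Finset.sum_ite_eq' Finset.univ j f]
      simp [add_comm]

lemma wt_eq (s : Multiset (Fin r)) (a : H) :
    V.wt s a = V.Lam a - ∑ i, (s.count i : ℂ) * α i a := by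
  rw [wt, map_sum_counts]

/-- The multiset with counts `lam`. -/
def sOf (lam : Fin r → ℕ) : Multiset (Fin r) := ∑ i, lam i • ({i} : Multiset (Fin r))

lemma count_sOf (lam : Fin r → ℕ) (j : Fin r) : (sOf lam).count j = lam j := by
  rw [sOf, Multiset.count_sum']
  simp [Multiset.count_nsmul, Multiset.count_singleton]

lemma wt_sOf (lam : Fin r → ℕ) (a : H) :
    V.wt (sOf lam) a = V.Lam a - ∑ i, (lam i : ℂ) * α i a := by
  rw [wt_eq]
  simp [count_sOf]

lemma sOf_ne {lam mu : Fin r → ℕ} (h : lam ≠ mu) : sOf lam ≠ sOf mu := by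
  intro he
  apply h
  funext j
  rw [← count_sOf lam j, ← count_sOf mu j, he]

lemma multiset_eq_of_wt (hind : LinearIndependent ℂ α) {s t : Multiset (Fin r)}
    (h : ∀ a : H, V.wt s a = V.wt t a) : s = t := by
  have h2 : ∀ a : H, ∑ i, (((s.count i : ℂ) - t.count i) • α i) a = 0 := by
    intro a
    have h1 := h a
    rw [wt_eq, wt_eq, sub_right_injective.eq_iff] at h1
    simp only [LinearMap.smul_apply, smul_eq_mul, sub_mul]
    rw [Finset.sum_sub_distrib, h1, sub_self]
  have h3 : ∑ i, ((s.count i : ℂ) - t.count i) • α i = 0 := by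
    apply LinearMap.ext
    intro a
    simp only [LinearMap.coe_sum, Finset.sum_apply, LinearMap.zero_apply]
    exact h2 a
  have h4 := Fintype.linearIndependent_iff.mp hind _ h3
  ext j
  have := h4 j
  rw [sub_eq_zero] at this
  exact_mod_cast this

lemma mem_Wc_of_weight (hind : LinearIndependent ℂ α) {x : M} {lam : Fin r → ℕ}
    (hx : ∀ a : H, ⁅Hg α hv a, x⁆ = (V.Lam a - ∑ i, (lam i : ℂ) * α i a) • x) :
    x ∈ V.Wc (sOf lam) := by
  have diag : ∀ (w : FreeMonoid (Fin r)) (a : H) (z : M),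
      V.bM.coord w ⁅Hg α hv a, z⁆ = V.wt ↑w.toList a * V.bM.coord w z := by
    intro w a z
    classical
    have hmaps : V.bM.coord w ∘ₗ LieModule.toEnd ℂ (KM α hv) M (Hg α hv a)
        = V.wt ↑w.toList a • V.bM.coord w := by
      apply V.bM.ext
      intro u
      simp only [LinearMap.comp_apply, LieModule.toEnd_apply_apply, LinearMap.smul_apply,
        smul_eq_mul]
      rw [V.bM_apply u, V.h_m a u.toList, map_smul, smul_eq_mul]
      rcases eq_or_ne u w with rfl | hne
      · rfl
      · rw [show V.bM.coord w (V.m u.toList) = 0 by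
          rw [← V.bM_apply u, Module.Basis.coord_apply, Module.Basis.repr_self,
            Finsupp.single_apply, if_neg (fun h => hne h)]]
        ring
    have := congrArg (fun (T : M →ₗ[ℂ] ℂ) => T z) hmaps
    simpa using this
  refine Submodule.span_le.mpr ?_ (V.bM.mem_span_repr_support x)
  rintro z ⟨w, hw, rfl⟩
  rcases eq_or_ne (V.bM.repr x w) 0 with h0 | h0
  · exact absurd h0 (Finsupp.mem_support_iff.mp hw)
  have hwt : ∀ a : H, V.wt ↑w.toList a = V.wt (sOf lam) a := by
    intro a
    have d1 := diag w a x
    rw [hx a, map_smul, smul_eq_mul, ← V.wt_sOf lam a] at d1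
    have : V.bM.coord w x = V.bM.repr x w := Module.Basis.coord_apply _ _ _
    rw [this] at d1
    exact (mul_right_cancel₀ h0 d1).symm
  have hms : (↑w.toList : Multiset (Fin r)) = sOf lam :=
    V.multiset_eq_of_wt hind hwt
  rw [V.bM_apply w]
  exact Submodule.subset_span ⟨w.toList, hms, rfl⟩

lemma eq_on_span {g : Set M} (T T' : M →ₗ[ℂ] ℂ) (h : ∀ z ∈ g, T z = T' z)
    {x : M} (hx : x ∈ Submodule.span ℂ g) : T x = T' x := by
  have hle : Submodule.span ℂ g ≤ LinearMap.ker (T - T') :=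
    Submodule.span_le.mpr (fun z hz => by
      simp [LinearMap.mem_ker, LinearMap.sub_apply, h z hz])
  have hm := hle hx
  rw [LinearMap.mem_ker, LinearMap.sub_apply, sub_eq_zero] at hm
  exact hm

lemma eq_on_Ln {k : ℕ} (T T' : M →ₗ[ℂ] ℂ)
    (h : ∀ w : List (Fin r), w.length = k → T (V.m w) = T' (V.m w))
    {x : M} (hx : x ∈ V.Ln k) : T x = T' x :=
  eq_on_span T T' (by rintro z ⟨w, hw, rfl⟩; exact h w hw) hx

lemma eq_on_Wc {s : Multiset (Fin r)} (T T' : M →ₗ[ℂ] ℂ)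
    (h : ∀ w : List (Fin r), (↑w : Multiset (Fin r)) = s → T (V.m w) = T' (V.m w))
    {x : M} (hx : x ∈ V.Wc s) : T x = T' x :=
  eq_on_span T T' (by rintro z ⟨w, hw, rfl⟩; exact h w hw) hx

lemma m_cons (i : Fin r) (w : List (Fin r)) :
    V.m (i :: w) = ⁅F α hv i, V.m w⁆ := rfl

lemma S_m_nil_f (i : Fin r) (y : M) : V.S (V.m []) ⁅F α hv i, y⁆ = 0 :=
  V.S_v_f i y

lemma e_m_nil (i : Fin r) : ⁅E α hv i, V.m []⁆ = 0 := V.hhw1 i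

/-- The big simultaneous induction: orthogonality of distinct weight spaces,
symmetry, and `e`-contravariance of the form `V.S`. -/
lemma main_ind (n : ℕ) :
    (∀ s t : Multiset (Fin r), Multiset.card s + Multiset.card t ≤ n → s ≠ t →
      ∀ x ∈ V.Wc s, ∀ y ∈ V.Wc t, V.S x y = 0) ∧
    (∀ k l : ℕ, k + l ≤ n → ∀ x ∈ V.Ln k, ∀ y ∈ V.Ln l, V.S x y = V.S y x) ∧
    (∀ k l : ℕ, k + l ≤ n → ∀ i : Fin r, ∀ x ∈ V.Ln k, ∀ y ∈ V.Ln l,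
      V.S ⁅E α hv i, x⁆ y = V.S x ⁅F α hv i, y⁆) := by
  induction n with
  | zero =>
      refine ⟨?_, ?_, ?_⟩
      · intro s t hc hne x hx y hy
        exfalso
        apply hne
        rw [Multiset.card_eq_zero.mp (by omega : Multiset.card s = 0),
          Multiset.card_eq_zero.mp (by omega : Multiset.card t = 0)]
      · intro k l hkl x hx y hy
        obtain ⟨rfl, rfl⟩ : k = 0 ∧ l = 0 := by omega
        refine V.eq_on_Ln (V.S.flip y) (V.S y) ?_ hx
        intro w hw
        rw [List.length_eq_zero_iff.mp hw]
        refine V.eq_on_Ln (V.S (V.m [])) (V.S.flip (V.m [])) ?_ hy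
        intro w' hw'
        rw [List.length_eq_zero_iff.mp hw']
        rfl
      · intro k l hkl i x hx y hy
        obtain ⟨rfl, -⟩ : k = 0 ∧ l = 0 := by omega
        refine V.eq_on_Ln ((V.S.flip y) ∘ₗ LieModule.toEnd ℂ (KM α hv) M (E α hv i))
          (V.S.flip ⁅F α hv i, y⁆) ?_ hx
        intro w hw
        rw [List.length_eq_zero_iff.mp hw]
        show V.S ⁅E α hv i, V.m []⁆ y = V.S (V.m []) ⁅F α hv i, y⁆
        rw [V.e_nil i, LinearMap.map_zero₂, V.S_m_nil_f]
  | succ n ih =>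
      refine ⟨?_, ?_, ?_⟩
      -- Part A : orthogonality
      · intro s t hc hne x hx y hy
        refine V.eq_on_Wc (V.S.flip y) 0 ?_ hx
        intro w hw
        show V.S (V.m w) y = 0
        cases w with
        | nil =>
            refine V.eq_on_Wc (V.S (V.m [])) 0 ?_ hy
            intro w' hw'
            show V.S (V.m []) (V.m w') = 0
            cases w' with
            | nil => exact absurd (hw.symm.trans hw') hne
            | cons j u => rw [V.m_cons, V.S_m_nil_f]
        | cons i u =>
            rw [V.m_cons, V.S_f_left]
            by_cases hmem : i ∈ t
            · have hcu : (↑u : Multiset (Fin r)) = s.erase i := by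
                rw [← hw, ← Multiset.cons_coe, Multiset.erase_cons_head]
              have hne' : (↑u : Multiset (Fin r)) ≠ t.erase i := by
                intro h
                apply hne
                rw [← hw, ← Multiset.cons_coe, h, Multiset.cons_erase hmem]
              have hb : Multiset.card (↑u : Multiset (Fin r))
                  + Multiset.card (t.erase i) ≤ n := by
                have h1 : Multiset.card (↑(i :: u) : Multiset (Fin r)) =
                    u.length + 1 := by simp
                have h2 : Multiset.card (↑(i :: u) : Multiset (Fin r)) +
                    Multiset.card t ≤ n + 1 := hw ▸ hc
                have h3 : 1 ≤ Multiset.card t := by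
                  rw [Nat.one_le_iff_ne_zero]
                  intro h0
                  rw [Multiset.card_eq_zero.mp h0] at hmem
                  exact absurd hmem (Multiset.notMem_zero i)
                have h4 : Multiset.card (t.erase i) = Multiset.card t - 1 :=
                  Multiset.card_erase_of_mem hmem
                have h5 : Multiset.card (↑u : Multiset (Fin r)) = u.length := by simp
                omega
              exact ih.1 ↑u (t.erase i) hb hne' (V.m u) (V.m_mem_Wc u)
                ⁅E α hv i, y⁆ (V.e_Wc i hy)
            · rw [V.e_Wc_zero i hmem hy, map_zero]
      -- Part B : symmetry
      · intro k l hkl x hx y hy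
        refine V.eq_on_Ln (V.S.flip y) (V.S y) ?_ hx
        intro w hw
        show V.S (V.m w) y = V.S y (V.m w)
        refine V.eq_on_Ln (V.S (V.m w)) (V.S.flip (V.m w)) ?_ hy
        intro w' hw'
        show V.S (V.m w) (V.m w') = V.S (V.m w') (V.m w)
        cases w with
        | nil =>
            cases w' with
            | nil => rfl
            | cons j u =>
                rw [V.m_cons, V.S_m_nil_f, V.S_f_left, V.e_m_nil j, map_zero]
        | cons i u =>
            have hu : u.length + 1 = k := by simpa using hw
            have h2 : V.S (V.m u) ⁅E α hv i, V.m w'⁆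
                = V.S ⁅E α hv i, V.m w'⁆ (V.m u) := by
              refine ih.2.1 u.length (w'.length - 1) (by omega) _ (V.m_mem_Ln u)
                _ ?_
              exact V.e_m_mem_Ln i w'
            have h3 : V.S ⁅E α hv i, V.m w'⁆ (V.m u)
                = V.S (V.m w') ⁅F α hv i, V.m u⁆ := by
              refine ih.2.2 w'.length u.length (by omega) i _ (V.m_mem_Ln w')
                _ (V.m_mem_Ln u)
            rw [V.m_cons, V.S_f_left, h2, h3]
      -- Part C : e-contravariance
      · intro k l hkl i x hx y hy
        refine V.eq_on_Ln ((V.S.flip y) ∘ₗ LieModule.toEnd ℂ (KM α hv) M (E α hv i))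
          (V.S.flip ⁅F α hv i, y⁆) ?_ hx
        intro w hw
        show V.S ⁅E α hv i, V.m w⁆ y = V.S (V.m w) ⁅F α hv i, y⁆
        cases w with
        | nil => rw [V.e_nil i, LinearMap.map_zero₂, V.S_m_nil_f]
        | cons j u =>
            refine V.eq_on_Ln (V.S ⁅E α hv i, V.m (j :: u)⁆)
              ((V.S (V.m (j :: u))) ∘ₗ LieModule.toEnd ℂ (KM α hv) M (F α hv i))
              ?_ hy
            intro w' hw'
            show V.S ⁅E α hv i, V.m (j :: u)⁆ (V.m w')
              = V.S (V.m (j :: u)) ⁅F α hv i, V.m w'⁆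
            have hu : u.length + 1 = k := by simpa using hw
            -- left side
            rw [V.e_m i j u, map_add, LinearMap.add_apply, map_smul,
              LinearMap.smul_apply, smul_eq_mul, V.S_f_left]
            -- right side
            rw [V.m_cons j u, V.S_f_left, ef_comm, map_add, apply_ite (V.S (V.m u)),
              map_zero, V.h_m, map_smul, smul_eq_mul]
            -- first terms agree by induction
            have hT1 : V.S ⁅E α hv i, V.m u⁆ ⁅E α hv j, V.m w'⁆
                = V.S (V.m u) ⁅F α hv i, ⁅E α hv j, V.m w'⁆⁆ := by
              refine ih.2.2 u.length (w'.length - 1) (by omega) i _ (V.m_mem_Ln u)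
                _ (V.e_m_mem_Ln j w')
            rw [hT1]
            congr 1
            -- the delta terms
            by_cases hij : i = j
            · subst hij
              rw [if_pos rfl, if_pos rfl]
              by_cases hms : (↑u : Multiset (Fin r)) = (↑w' : Multiset (Fin r))
              · rw [hms]
              · have h0 : V.S (V.m u) (V.m w') = 0 := by
                  refine ih.1 ↑u ↑w' ?_ hms (V.m u) (V.m_mem_Wc u)
                    (V.m w') (V.m_mem_Wc w')
                  simp only [Multiset.coe_card]
                  omega
                rw [h0, mul_zero, mul_zero]
            · rw [if_neg hij, if_neg (fun h => hij h.symm), zero_mul]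

lemma mem_span_range (x : M) : x ∈ Submodule.span ℂ (Set.range V.m) := by
  rw [V.span_m]; trivial

lemma S_symm (x y : M) : V.S x y = V.S y x := by
  refine eq_on_span (V.S.flip y) (V.S y) ?_ (V.mem_span_range x)
  rintro z ⟨w, rfl⟩
  refine eq_on_span (V.S (V.m w)) (V.S.flip (V.m w)) ?_ (V.mem_span_range y)
  rintro z' ⟨w', rfl⟩
  exact (V.main_ind (w.length + w'.length)).2.1 w.length w'.length le_rfl
    _ (V.m_mem_Ln w) _ (V.m_mem_Ln w')

lemma S_e_left (i : Fin r) (x y : M) :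
    V.S ⁅E α hv i, x⁆ y = V.S x ⁅F α hv i, y⁆ := by
  rw [V.S_symm ⁅E α hv i, x⁆ y, ← V.S_f_left, V.S_symm ⁅F α hv i, y⁆ x]

lemma S_orth {s t : Multiset (Fin r)} (hne : s ≠ t) {x y : M}
    (hx : x ∈ V.Wc s) (hy : y ∈ V.Wc t) : V.S x y = 0 :=
  (V.main_ind (Multiset.card s + Multiset.card t)).1 s t le_rfl hne x hx y hy

/-- Uniqueness of the contravariant form. -/
lemma S_unique (S1 S2 : M →ₗ[ℂ] M →ₗ[ℂ] ℂ)
    (h1v : S1 V.v V.v = 1)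
    (h1e : ∀ (i : Fin r) (x y : M), S1 ⁅E α hv i, x⁆ y = S1 x ⁅F α hv i, y⁆)
    (h1f : ∀ (i : Fin r) (x y : M), S1 ⁅F α hv i, x⁆ y = S1 x ⁅E α hv i, y⁆)
    (h2v : S2 V.v V.v = 1)
    (h2e : ∀ (i : Fin r) (x y : M), S2 ⁅E α hv i, x⁆ y = S2 x ⁅F α hv i, y⁆)
    (h2f : ∀ (i : Fin r) (x y : M), S2 ⁅F α hv i, x⁆ y = S2 x ⁅E α hv i, y⁆) :
    S1 = S2 := by
  have key : ∀ (w : List (Fin r)) (y : M), S1 (V.m w) y = S2 (V.m w) y := by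
    intro w
    induction w with
    | nil =>
        intro y
        refine eq_on_span (S1 (V.m [])) (S2 (V.m [])) ?_ (V.mem_span_range y)
        rintro z ⟨w', rfl⟩
        cases w' with
        | nil => exact h1v.trans h2v.symm
        | cons j u =>
            rw [V.m_cons, ← h1e j (V.m []) (V.m u), ← h2e j (V.m []) (V.m u),
              V.e_m_nil j, LinearMap.map_zero₂, LinearMap.map_zero₂]
    | cons i u ih =>
        intro y
        rw [V.m_cons, h1f i (V.m u) y, h2f i (V.m u) y, ih]
  apply LinearMap.ext
  intro x
  apply LinearMap.ext
  intro y
  refine eq_on_span (S1.flip y) (S2.flip y) ?_ (V.mem_span_range x)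
  rintro z ⟨w, rfl⟩
  exact key w y

end VSetup
end KacMoodyFree
open KacMoodyFree

/-!
STATEMENT 11. Let `g = KM α hv` be the Kac–Moody Lie algebra without Serre
relations and let `M` be the Verma module with highest weight `Λ` and highest
weight vector `v`: `e_i v = 0`, `h v = Λ(h) v`, and `M` is free over `U(n₋)`
(the free associative algebra on the `f_i`), via the isomorphism `φ`.
Then there is a unique bilinear form `S` on `M` with `S(v,v) = 1`,
`S(e_i x, y) = S(x, f_i y)` and `S(f_i x, y) = S(x, e_i y)`; moreover any such
`S` is symmetric and distinct weight spaces `M(Λ)_λ` are `S`-orthogonal. -/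
theorem verma_contravariant_form_exists_unique
    {H : Type*} [AddCommGroup H] [Module ℂ H] {r : ℕ}
    (α : Fin r → Module.Dual ℂ H) (hind : LinearIndependent ℂ α) (hv : Fin r → H)
    (M : Type*) [AddCommGroup M] [Module ℂ M]
    [LieRingModule (KM α hv) M] [LieModule ℂ (KM α hv) M]
    (Λ : Module.Dual ℂ H) (v : M)
    (hhw1 : ∀ i : Fin r, ⁅E α hv i, v⁆ = 0)
    (hhw2 : ∀ x : H, ⁅Hg α hv x, v⁆ = Λ x • v)
    (φ : FreeAlgebra ℂ (Fin r) ≃ₗ[ℂ] M)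
    (hφ1 : φ 1 = v)
    (hφmul : ∀ (i : Fin r) (w : FreeAlgebra ℂ (Fin r)),
      φ (FreeAlgebra.ι ℂ i * w) = ⁅F α hv i, φ w⁆) :
    (∃! S : M →ₗ[ℂ] M →ₗ[ℂ] ℂ,
        S v v = 1 ∧
        (∀ (i : Fin r) (x y : M), S ⁅E α hv i, x⁆ y = S x ⁅F α hv i, y⁆) ∧
        (∀ (i : Fin r) (x y : M), S ⁅F α hv i, x⁆ y = S x ⁅E α hv i, y⁆)) ∧
    (∀ S : M →ₗ[ℂ] M →ₗ[ℂ] ℂ,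
      (S v v = 1 ∧
        (∀ (i : Fin r) (x y : M), S ⁅E α hv i, x⁆ y = S x ⁅F α hv i, y⁆) ∧
        (∀ (i : Fin r) (x y : M), S ⁅F α hv i, x⁆ y = S x ⁅E α hv i, y⁆)) →
      ((∀ x y : M, S x y = S y x) ∧
       (∀ lam mu : Fin r → ℕ, lam ≠ mu →
        ∀ x y : M,
          (∀ aH : H, ⁅Hg α hv aH, x⁆ = (Λ aH - ∑ i, (lam i : ℂ) * α i aH) • x) →
          (∀ aH : H, ⁅Hg α hv aH, y⁆ = (Λ aH - ∑ i, (mu i : ℂ) * α i aH) • y) →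
          S x y = 0))) := by

  classical
  let V : VSetup α hv M := ⟨Λ, v, hhw1, hhw2, φ, hφ1, hφmul⟩
  have hvv : V.S v v = 1 := V.S_v_v
  have hee : ∀ (i : Fin r) (x y : M), V.S ⁅E α hv i, x⁆ y = V.S x ⁅F α hv i, y⁆ :=
    V.S_e_left
  have hff : ∀ (i : Fin r) (x y : M), V.S ⁅F α hv i, x⁆ y = V.S x ⁅E α hv i, y⁆ :=
    V.S_f_left
  constructor
  · exact ⟨V.S, ⟨hvv, hee, hff⟩,
      fun S' hS' => V.S_unique S' V.S hS'.1 hS'.2.1 hS'.2.2 hvv hee hff⟩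
  · intro S hS
    have hSeq : S = V.S := V.S_unique S V.S hS.1 hS.2.1 hS.2.2 hvv hee hff
    constructor
    · intro x y
      rw [hSeq]
      exact V.S_symm x y
    · intro lam mu hlm x y hx hy
      rw [hSeq]
      exact V.S_orth (VSetup.sOf_ne hlm)
        (V.mem_Wc_of_weight hind hx) (V.mem_Wc_of_weight hind hy)
end
end

section
/- Let S be the contravariant form on M = M(Λ_1) ⊗ ... ⊗ M(Λ_n) (product of the contravariant forms on the factors), and let y ∈ n_− lie in the kernel of the contravariant form S: n_− → n_−*. Then y·M ⊆ ker(S: M → M*). -/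
noncomputable section

open KacMoodyFree


/-!
STATEMENT 12. `g = KM α hv` Kac–Moody without Serre relations, `τ` the
automorphism with `τ(e_i) = −f_i`, `τ(f_i) = −e_i`, `τ(h) = −h`, `K` the
invariant form (equal to `B` on `h`, `K(f_i,e_j) = δ_{ij}`, with `n₊`, `n₋`
isotropic and orthogonal to `h`), and `Sg(x,y) = −K(τ(x),y)` the contravariant
form on `g`.  `M = M(Λ₁) ⊗ ⋯ ⊗ M(Λ_n)` is a tensor product of Verma modules,
with the product `SM` of the contravariant forms of the factors.  If
`y ∈ n₋` lies in the kernel of `Sg : n₋ → n₋*`, then `y·M ⊆ ker (SM : M → M*)`. -/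
section MainAux

open KacMoodyFree

variable {H : Type*} [AddCommGroup H] [Module ℂ H] {r : ℕ}
variable (α : Fin r → Module.Dual ℂ H) (hv : Fin r → H)

lemma mk_eq_of_rel {x y : FreeLieAlgebra ℂ (Gen H r)} (hx : x - y ∈ rels α hv) :
    LieSubmodule.Quotient.mk' (relIdeal α hv) x = LieSubmodule.Quotient.mk' (relIdeal α hv) y :=
  (Submodule.Quotient.eq _).mpr (LieSubmodule.subset_lieSpan hx)

lemma lie_Hg_E (a : H) (i : Fin r) : ⁅Hg α hv a, E α hv i⁆ = α i a • E α hv i := by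
  have h0 := mk_eq_of_rel α hv (x := ⁅FreeLieAlgebra.of ℂ (Gen.h a), FreeLieAlgebra.of ℂ
      (Gen.e (H := H) i)⁆) (y := α i a • FreeLieAlgebra.of ℂ (Gen.e i))
    (Or.inr (Or.inr (Or.inr (Or.inl ⟨a, i, rfl⟩))))
  rw [map_smul] at h0
  exact h0

lemma lie_Hg_F (a : H) (i : Fin r) : ⁅Hg α hv a, F α hv i⁆ = -(α i a • F α hv i) := by
  have h0 := mk_eq_of_rel α hv (x := ⁅FreeLieAlgebra.of ℂ (Gen.h a), FreeLieAlgebra.of ℂ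
      (Gen.f (H := H) i)⁆) (y := -(α i a • FreeLieAlgebra.of ℂ (Gen.f i)))
    (by rw [sub_neg_eq_add]; exact Or.inr (Or.inr (Or.inr (Or.inr (Or.inl ⟨a, i, rfl⟩)))))
  rw [map_neg, map_smul] at h0
  exact h0

lemma lie_E_F (i j : Fin r) :
    ⁅E α hv i, F α hv j⁆ = if i = j then Hg α hv (hv i) else 0 := by
  have h0 := mk_eq_of_rel α hv (x := ⁅FreeLieAlgebra.of ℂ (Gen.e (H := H) i),
      FreeLieAlgebra.of ℂ (Gen.f (H := H) j)⁆)
      (y := if i = j then FreeLieAlgebra.of ℂ (Gen.h (hv i)) else 0)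
    (Or.inr (Or.inr (Or.inr (Or.inr (Or.inr ⟨i, j, rfl⟩)))))
  rw [apply_ite (LieSubmodule.Quotient.mk' (relIdeal α hv)), map_zero] at h0
  exact h0

theorem lieSpan_induction_old {R L : Type*} [CommRing R] [LieRing L] [LieAlgebra R L]
    {s : Set L} {p : L → Prop} {x : L} (h : x ∈ LieSubalgebra.lieSpan R L s)
    (mem : ∀ x ∈ s, p x) (zero : p 0) (smul : ∀ (r : R), ∀ {x : L}, p x → p (r • x))
    (add : ∀ x y, p x → p y → p (x + y)) (lie : ∀ x y, p x → p y → p ⁅x, y⁆) : p x :=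
  LieSubalgebra.lieSpan_induction (R := R) (L := L) (s := s) (p := fun x _ => p x)
    (mem := mem) (zero := zero) (add := fun x y _ _ => add x y)
    (smul := fun r _ _ => smul r) (lie := fun x y _ _ => lie x y) h

end MainAux


theorem kernel_of_contravariant_form_acts_into_kernel
    {H : Type*} [AddCommGroup H] [Module ℂ H] {r n : ℕ}
    (B : H →ₗ[ℂ] H →ₗ[ℂ] ℂ) (hBsymm : ∀ x y : H, B x y = B y x)
    (α : Fin r → Module.Dual ℂ H) (hind : LinearIndependent ℂ α)
    (hv : Fin r → H) (hhv : ∀ (i : Fin r) (x : H), B (hv i) x = α i x)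
    -- the automorphism τ
    (τ : KM α hv ≃ₗ⁅ℂ⁆ KM α hv)
    (hτe : ∀ i, τ (E α hv i) = - F α hv i)
    (hτf : ∀ i, τ (F α hv i) = - E α hv i)
    (hτh : ∀ x : H, τ (Hg α hv x) = - Hg α hv x)
    -- the invariant bilinear form K
    (K : KM α hv →ₗ[ℂ] KM α hv →ₗ[ℂ] ℂ)
    (hKinv : ∀ x y z : KM α hv, K ⁅x, y⁆ z = K x ⁅y, z⁆)
    (hKh : ∀ x y : H, K (Hg α hv x) (Hg α hv y) = B x y)
    (hKfe : ∀ i j : Fin r, K (F α hv i) (E α hv j) = if i = j then 1 else 0)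
    (hKnn : ∀ x ∈ LieSubalgebra.lieSpan ℂ (KM α hv) (Set.range (F α hv)),
            ∀ y ∈ LieSubalgebra.lieSpan ℂ (KM α hv) (Set.range (F α hv)), K x y = 0)
    (hKpp : ∀ x ∈ LieSubalgebra.lieSpan ℂ (KM α hv) (Set.range (E α hv)),
            ∀ y ∈ LieSubalgebra.lieSpan ℂ (KM α hv) (Set.range (E α hv)), K x y = 0)
    (hKhn : ∀ (a : H), ∀ y, (y ∈ LieSubalgebra.lieSpan ℂ (KM α hv) (Set.range (F α hv)) ∨
            y ∈ LieSubalgebra.lieSpan ℂ (KM α hv) (Set.range (E α hv))) →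
            K (Hg α hv a) y = 0 ∧ K y (Hg α hv a) = 0)
    -- the contravariant form on g
    (Sg : KM α hv →ₗ[ℂ] KM α hv →ₗ[ℂ] ℂ)
    (hSg : ∀ x y : KM α hv, Sg x y = - K (τ x) y)
    -- the Verma factors M(Λ_j)
    (Mj : Fin n → Type*) [∀ j, AddCommGroup (Mj j)] [∀ j, Module ℂ (Mj j)]
    [∀ j, LieRingModule (KM α hv) (Mj j)] [∀ j, LieModule ℂ (KM α hv) (Mj j)]
    (Λ : Fin n → Module.Dual ℂ H) (vj : ∀ j, Mj j)
    (hhw1 : ∀ (j) (i : Fin r), ⁅E α hv i, vj j⁆ = 0)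
    (hhw2 : ∀ (j) (x : H), ⁅Hg α hv x, vj j⁆ = Λ j x • vj j)
    (φ : ∀ j, FreeAlgebra ℂ (Fin r) ≃ₗ[ℂ] Mj j)
    (hφ1 : ∀ j, φ j 1 = vj j)
    (hφmul : ∀ (j) (i : Fin r) (w : FreeAlgebra ℂ (Fin r)),
      φ j (FreeAlgebra.ι ℂ i * w) = ⁅F α hv i, φ j w⁆)
    -- the contravariant forms of the factors
    (Sj : ∀ j, Mj j →ₗ[ℂ] Mj j →ₗ[ℂ] ℂ)
    (hSj1 : ∀ j, Sj j (vj j) (vj j) = 1)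
    (hSje : ∀ (j) (i : Fin r) (x y : Mj j), Sj j ⁅E α hv i, x⁆ y = Sj j x ⁅F α hv i, y⁆)
    (hSjf : ∀ (j) (i : Fin r) (x y : Mj j), Sj j ⁅F α hv i, x⁆ y = Sj j x ⁅E α hv i, y⁆)
    -- the tensor product module M and its contravariant form SM
    (act : KM α hv →ₗ[ℂ] Module.End ℂ (PiTensorProduct ℂ Mj))
    (hactLie : ∀ x y : KM α hv, act ⁅x, y⁆ = ⁅act x, act y⁆)
    (hact : ∀ (x : KM α hv) (f : (j : Fin n) → Mj j),
      act x (PiTensorProduct.tprod ℂ f) =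
        ∑ j, PiTensorProduct.tprod ℂ (Function.update f j ⁅x, f j⁆))
    (SM : PiTensorProduct ℂ Mj →ₗ[ℂ] PiTensorProduct ℂ Mj →ₗ[ℂ] ℂ)
    (hSM : ∀ f g : (j : Fin n) → Mj j,
      SM (PiTensorProduct.tprod ℂ f) (PiTensorProduct.tprod ℂ g) = ∏ j, Sj j (f j) (g j)) :
    ∀ y ∈ LieSubalgebra.lieSpan ℂ (KM α hv) (Set.range (F α hv)),
      (∀ x ∈ LieSubalgebra.lieSpan ℂ (KM α hv) (Set.range (F α hv)), Sg y x = 0) →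
      ∀ p q : PiTensorProduct ℂ Mj, SM (act y p) q = 0 := by
  classical
  intro y hy hker p q
  set nn := LieSubalgebra.lieSpan ℂ (KM α hv) (Set.range (F α hv)) with hnn
  set np := LieSubalgebra.lieSpan ℂ (KM α hv) (Set.range (E α hv)) with hnp
  have hEmem : ∀ i, E α hv i ∈ np := fun i => LieSubalgebra.subset_lieSpan ⟨i, rfl⟩
  have hFmem : ∀ i, F α hv i ∈ nn := fun i => LieSubalgebra.subset_lieSpan ⟨i, rfl⟩
  have hFH : ∀ (i : Fin r) (a : H), ⁅F α hv i, Hg α hv a⁆ = α i a • F α hv i := by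
    intro i a
    rw [← lie_skew, lie_Hg_F, neg_neg]
  -- τ basic lemmas
  have hτsmul : ∀ (c : ℂ) (x : KM α hv), τ (c • x) = c • τ x := fun c x => τ.toLieHom.map_smul c x
  have hτadd : ∀ x y' : KM α hv, τ (x + y') = τ x + τ y' := fun x y' => τ.toLieHom.map_add x y'
  have hτzero : τ 0 = 0 := τ.toLieHom.map_zero
  have hτlie : ∀ x y' : KM α hv, τ ⁅x, y'⁆ = ⁅τ x, τ y'⁆ := fun x y' => τ.toLieHom.map_lie x y'
  have hσlie : ∀ a b : KM α hv, -τ ⁅a, b⁆ = ⁅-τ b, -τ a⁆ := by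
    intro a b
    rw [hτlie, neg_lie, lie_neg, neg_neg, lie_skew]
  -- n+ is stable under bracketing with h
  have hHn : ∀ z ∈ np, ∀ a : H, ⁅z, Hg α hv a⁆ ∈ np := by
    intro z hz
    refine (lieSpan_induction_old (R := ℂ) (L := KM α hv)
      (p := fun z => z ∈ np ∧ ∀ a : H, ⁅z, Hg α hv a⁆ ∈ np) hz ?_ ?_ ?_ ?_ ?_).2
    · rintro _ ⟨i, rfl⟩
      refine ⟨hEmem i, fun a => ?_⟩
      rw [← lie_skew, lie_Hg_E]
      exact neg_mem (np.smul_mem _ (hEmem i))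
    · exact ⟨zero_mem _, fun a => by rw [zero_lie]; exact zero_mem _⟩
    · rintro c x ⟨hx, hxa⟩
      exact ⟨np.smul_mem c hx,
        fun a => by rw [smul_lie]; exact np.smul_mem c (hxa a)⟩
    · rintro x y' ⟨hx, hxa⟩ ⟨hy', hya⟩
      exact ⟨add_mem hx hy', fun a => by rw [add_lie]; exact add_mem (hxa a) (hya a)⟩
    · rintro x y' ⟨hx, hxa⟩ ⟨hy', hya⟩
      refine ⟨np.lie_mem hx hy', fun a => ?_⟩
      rw [lie_lie]
      exact sub_mem (np.lie_mem hx (hya a)) (np.lie_mem hy' (hxa a))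
  -- structure of brackets of n+ with F i
  have hNF : ∀ z ∈ np, ∀ i : Fin r, ∃ z' ∈ np, ∃ c : ℂ,
      ⁅z, F α hv i⁆ = z' + c • Hg α hv (hv i) := by
    intro z hz
    refine (lieSpan_induction_old (R := ℂ) (L := KM α hv)
      (p := fun z => z ∈ np ∧ ∀ i : Fin r, ∃ z' ∈ np, ∃ c : ℂ,
        ⁅z, F α hv i⁆ = z' + c • Hg α hv (hv i)) hz ?_ ?_ ?_ ?_ ?_).2
    · rintro _ ⟨j, rfl⟩
      refine ⟨hEmem j, fun i => ?_⟩
      rw [lie_E_F]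
      by_cases h : j = i
      · subst h
        exact ⟨0, zero_mem _, 1, by rw [if_pos rfl, one_smul, zero_add]⟩
      · exact ⟨0, zero_mem _, 0, by rw [if_neg h, zero_smul, zero_add]⟩
    · exact ⟨zero_mem _, fun i => ⟨0, zero_mem _, 0, by rw [zero_lie, zero_smul, zero_add]⟩⟩
    · rintro c x ⟨hx, hxi⟩
      refine ⟨np.smul_mem c hx, fun i => ?_⟩
      obtain ⟨z', hz', d, hd⟩ := hxi i
      exact ⟨c • z', np.smul_mem c hz', c * d, by
        rw [smul_lie, hd, smul_add, smul_smul]⟩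
    · rintro x y' ⟨hx, hxi⟩ ⟨hy', hyi⟩
      refine ⟨add_mem hx hy', fun i => ?_⟩
      obtain ⟨z', hz', d, hd⟩ := hxi i
      obtain ⟨w', hw', e, he⟩ := hyi i
      refine ⟨z' + w', add_mem hz' hw', d + e, by rw [add_lie, hd, he, add_smul]; abel⟩
    · rintro x y' ⟨hx, hxi⟩ ⟨hy', hyi⟩
      refine ⟨np.lie_mem hx hy', fun i => ?_⟩
      obtain ⟨z', hz', d, hd⟩ := hxi i
      obtain ⟨w', hw', e, he⟩ := hyi i
      refine ⟨⁅x, w'⁆ + e • ⁅x, Hg α hv (hv i)⁆ - (⁅y', z'⁆ + d • ⁅y', Hg α hv (hv i)⁆), ?_, 0, ?_⟩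
      · exact sub_mem (add_mem (np.lie_mem hx hw') (np.smul_mem _ (hHn x hx _)))
          (add_mem (np.lie_mem hy' hz') (np.smul_mem _ (hHn y' hy' _)))
      · rw [lie_lie, hd, he, lie_add, lie_add, lie_smul, lie_smul, zero_smul]; abel
  -- -τ maps n- into n+
  have hτneg : ∀ y' ∈ nn, -τ y' ∈ np := by
    intro y' hy'
    refine lieSpan_induction_old (R := ℂ) (L := KM α hv)
      (p := fun y' => -τ y' ∈ np) hy' ?_ ?_ ?_ ?_ ?_
    · rintro _ ⟨i, rfl⟩
      rw [hτf, neg_neg]; exact hEmem i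
    · show -τ (0 : KM α hv) ∈ np
      rw [hτzero, neg_zero]; exact zero_mem _
    · intro c x hx
      rw [hτsmul, ← smul_neg]
      exact np.smul_mem c hx
    · intro x y'' hx hy''
      rw [hτadd, neg_add]
      exact add_mem hx hy''
    · intro x y'' hx hy''
      rw [hσlie]
      exact np.lie_mem hy'' hx
  -- the key closure property of the kernel inside n+
  have hstep : ∀ z, z ∈ np → (∀ x ∈ nn, K z x = 0) → ∀ i : Fin r,
      ⁅z, F α hv i⁆ ∈ np ∧ ∀ x ∈ nn, K ⁅z, F α hv i⁆ x = 0 := by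
    intro z hz hK i
    obtain ⟨z', hz', c, hc⟩ := hNF z hz i
    have hK' : ∀ x ∈ nn, K ⁅z, F α hv i⁆ x = 0 := by
      intro x hx
      rw [hKinv]
      exact hK _ (nn.lie_mem (hFmem i) hx)
    have hc0 : c = 0 := by
      obtain ⟨a, ha⟩ : ∃ a : H, α i a ≠ 0 := by
        by_contra h
        push_neg at h
        exact hind.ne_zero i (LinearMap.ext fun a => h a)
      have e1 : K ⁅z, F α hv i⁆ (Hg α hv a) = 0 := by
        rw [hKinv, hFH, LinearMap.map_smul, hK _ (hFmem i), smul_zero]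
      have e2 : K ⁅z, F α hv i⁆ (Hg α hv a) = c * α i a := by
        rw [hc, map_add, LinearMap.add_apply, (hKhn a z' (Or.inr hz')).2, zero_add,
          map_smul, LinearMap.smul_apply, hKh, hhv, smul_eq_mul]
      have := e1 ▸ e2
      exact (mul_eq_zero.mp this.symm).resolve_right ha
    rw [hc0, zero_smul, add_zero] at hc
    exact ⟨hc ▸ hz', hK'⟩
  -- n+ annihilates the highest weight vectors
  have hkillv : ∀ z ∈ np, ∀ j, ⁅z, vj j⁆ = 0 := by
    intro z hz
    refine lieSpan_induction_old (R := ℂ) (L := KM α hv)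
      (p := fun z => ∀ j, ⁅z, vj j⁆ = 0) hz ?_ ?_ ?_ ?_ ?_
    · rintro _ ⟨i, rfl⟩; exact fun j => hhw1 j i
    · intro j; rw [zero_lie]
    · intro c x hx j; rw [smul_lie, hx j, smul_zero]
    · intro x y' hx hy' j; rw [add_lie, hx j, hy' j, add_zero]
    · intro x y' hx hy' j; rw [lie_lie, hx j, hy' j, lie_zero, lie_zero, sub_zero]
  -- per-factor vanishing
  have hfactor : ∀ (j : Fin n) (z : KM α hv), z ∈ np → (∀ x ∈ nn, K z x = 0) →
      ∀ (q' p' : Mj j), Sj j p' ⁅z, q'⁆ = 0 := by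
    intro j
    suffices hall : ∀ w : FreeAlgebra ℂ (Fin r), ∀ z, z ∈ np → (∀ x ∈ nn, K z x = 0) →
        ∀ p', Sj j p' ⁅z, φ j w⁆ = 0 by
      intro z hz hK q' p'
      have := hall ((φ j).symm q') z hz hK p'
      rwa [LinearEquiv.apply_symm_apply] at this
    set W : Submodule ℂ (FreeAlgebra ℂ (Fin r)) :=
      { carrier := {w | ∀ z, z ∈ np → (∀ x ∈ nn, K z x = 0) → ∀ p', Sj j p' ⁅z, φ j w⁆ = 0}
        add_mem' := by
          intro a b ha hb z hz hK p'
          rw [map_add, lie_add, map_add, ha z hz hK p', hb z hz hK p', add_zero]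
        zero_mem' := by
          intro z hz hK p'
          rw [map_zero, lie_zero, map_zero]
        smul_mem' := by
          intro c w hw z hz hK p'
          rw [map_smul, lie_smul, map_smul, hw z hz hK p', smul_zero] } with hW
    have h1W : (1 : FreeAlgebra ℂ (Fin r)) ∈ W := by
      intro z hz hK p'
      rw [hφ1, hkillv z hz, map_zero]
    have hmulW : ∀ (i : Fin r) (w : FreeAlgebra ℂ (Fin r)),
        w ∈ W → FreeAlgebra.ι ℂ i * w ∈ W := by
      intro i w hw z hz hK p'
      rw [hφmul, leibniz_lie, map_add]
      obtain ⟨hz1, hK1⟩ := hstep z hz hK i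
      rw [hw _ hz1 hK1 p', zero_add, ← hSje, hw z hz hK ⁅E α hv i, p'⁆]
    have hWtop : ∀ u : FreeAlgebra ℂ (Fin r), ∀ w ∈ W, u * w ∈ W := by
      intro u
      have hu : u ∈ Algebra.adjoin ℂ (Set.range (FreeAlgebra.ι ℂ (X := Fin r))) := by
        rw [FreeAlgebra.adjoin_range_ι]; trivial
      refine Algebra.adjoin_induction (p := fun u _ => ∀ w ∈ W, u * w ∈ W) ?_ ?_ ?_ ?_ hu
      · rintro _ ⟨i, rfl⟩ w hw
        exact hmulW i w hw
      · intro c w hw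
        rw [← Algebra.smul_def]
        exact W.smul_mem c hw
      · intro x y' _ _ hx hy' w hw
        rw [add_mul]
        exact W.add_mem (hx w hw) (hy' w hw)
      · intro x y' _ _ hx hy' w hw
        rw [mul_assoc]
        exact hx _ (hy' w hw)
    intro w
    have : w ∈ W := by
      have := hWtop w 1 h1W
      rwa [mul_one] at this
    exact this
  -- End-bracket expansion
  have hactlie2 : ∀ (x y' : KM α hv) (m : PiTensorProduct ℂ Mj),
      act ⁅x, y'⁆ m = act x (act y' m) - act y' (act x m) := by
    intro x y' m
    rw [hactLie, Ring.lie_def, LinearMap.sub_apply, Module.End.mul_apply, Module.End.mul_apply]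
  -- product helpers
  have hprodL : ∀ (f g : ∀ k, Mj k) (j : Fin n) (x : Mj j),
      (∏ k, Sj k (Function.update f j x k) (g k)) =
      Sj j x (g j) * ∏ k ∈ Finset.univ \ {j}, Sj k (f k) (g k) := by
    intro f g j x
    rw [← Finset.prod_update_of_mem (Finset.mem_univ j) (fun k => Sj k (f k) (g k))
      (Sj j x (g j))]
    refine Finset.prod_congr rfl fun k _ => ?_
    rcases eq_or_ne k j with h | h
    · subst h; simp
    · simp [Function.update_of_ne h]
  have hprodR : ∀ (f g : ∀ k, Mj k) (j : Fin n) (x : Mj j),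
      (∏ k, Sj k (f k) (Function.update g j x k)) =
      Sj j (f j) x * ∏ k ∈ Finset.univ \ {j}, Sj k (f k) (g k) := by
    intro f g j x
    rw [← Finset.prod_update_of_mem (Finset.mem_univ j) (fun k => Sj k (f k) (g k))
      (Sj j (f j) x)]
    refine Finset.prod_congr rfl fun k _ => ?_
    rcases eq_or_ne k j with h | h
    · subst h; simp
    · simp [Function.update_of_ne h]
  -- contravariance for generators at the tensor level
  have hcontraF : ∀ (i : Fin r) (p' q' : PiTensorProduct ℂ Mj),
      SM (act (F α hv i) p') q' = SM p' (act (E α hv i) q') := by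
    intro i
    have base : ∀ f g : ∀ k, Mj k,
        SM (act (F α hv i) (PiTensorProduct.tprod ℂ f)) (PiTensorProduct.tprod ℂ g)
        = SM (PiTensorProduct.tprod ℂ f) (act (E α hv i) (PiTensorProduct.tprod ℂ g)) := by
      intro f g
      rw [hact, hact, map_sum, LinearMap.sum_apply, map_sum]
      refine Finset.sum_congr rfl fun j _ => ?_
      rw [hSM, hSM, hprodL f g j _, hprodR f g j _, hSjf]
    have step1 : ∀ (f : ∀ k, Mj k) (q' : PiTensorProduct ℂ Mj),
        SM (act (F α hv i) (PiTensorProduct.tprod ℂ f)) q'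
        = SM (PiTensorProduct.tprod ℂ f) (act (E α hv i) q') := by
      intro f q'
      induction q' using PiTensorProduct.induction_on with
      | smul_tprod c g =>
        simp only [map_smul, LinearMap.smul_apply]
        rw [base f g]
      | add x y' hx hy' =>
        simp only [map_add, LinearMap.add_apply, hx, hy']
    intro p' q'
    induction p' using PiTensorProduct.induction_on with
    | smul_tprod c f =>
      simp only [map_smul, LinearMap.smul_apply]
      rw [step1]
    | add x y' hx hy' =>
      simp only [map_add, LinearMap.add_apply, hx, hy']
  -- contravariance for all of n-
  have hcontra : ∀ y' ∈ nn, ∀ (p' q' : PiTensorProduct ℂ Mj),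
      SM (act y' p') q' = SM p' (act (-τ y') q') := by
    intro y' hy'
    refine lieSpan_induction_old (R := ℂ) (L := KM α hv)
      (p := fun y' => ∀ p' q' : PiTensorProduct ℂ Mj,
        SM (act y' p') q' = SM p' (act (-τ y') q')) hy' ?_ ?_ ?_ ?_ ?_
    · rintro _ ⟨i, rfl⟩
      intro p' q'
      rw [hτf, neg_neg]
      exact hcontraF i p' q'
    · intro p' q'
      simp only [hτzero, neg_zero, map_zero, LinearMap.zero_apply]
    · intro c x hx p' q'
      simp only [hτsmul, smul_neg, neg_smul, map_smul, map_neg, LinearMap.smul_apply,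
        LinearMap.neg_apply, hx]
    · intro x y'' hx hy'' p' q'
      simp only [hτadd, neg_add, map_add, LinearMap.add_apply, hx, hy'']
    · intro a b ha hb p' q'
      rw [hσlie, hactlie2 a b p', map_sub, LinearMap.sub_apply,
        ha (act b p') q', hb (act a p') q', hb p' (act (-τ a) q'), ha p' (act (-τ b) q'),
        hactlie2, map_sub]
  -- vanishing of the action of a kernel element of n+
  have hSMzero : ∀ z : KM α hv, (∀ (j : Fin n) (p'' q'' : Mj j), Sj j p'' ⁅z, q''⁆ = 0) →
      ∀ p' q' : PiTensorProduct ℂ Mj, SM p' (act z q') = 0 := by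
    intro z hzS
    have base : ∀ f g : ∀ k, Mj k,
        SM (PiTensorProduct.tprod ℂ f) (act z (PiTensorProduct.tprod ℂ g)) = 0 := by
      intro f g
      rw [hact, map_sum]
      refine Finset.sum_eq_zero fun j _ => ?_
      rw [hSM]
      refine Finset.prod_eq_zero (Finset.mem_univ j) ?_
      rw [Function.update_self]
      exact hzS j (f j) (g j)
    have step1 : ∀ (f : ∀ k, Mj k) (q' : PiTensorProduct ℂ Mj),
        SM (PiTensorProduct.tprod ℂ f) (act z q') = 0 := by
      intro f q'
      induction q' using PiTensorProduct.induction_on with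
      | smul_tprod c g =>
        simp only [map_smul]
        rw [base f g, smul_zero]
      | add x y' hx hy' => simp only [map_add, hx, hy', add_zero]
    intro p' q'
    induction p' using PiTensorProduct.induction_on with
    | smul_tprod c f =>
      simp only [map_smul, LinearMap.smul_apply]
      rw [step1, smul_zero]
    | add x y' hx hy' => simp only [map_add, LinearMap.add_apply, hx, hy', add_zero]
  -- assemble
  have hz0np : -τ y ∈ np := hτneg y hy
  have hKz0 : ∀ x ∈ nn, K (-τ y) x = 0 := by
    intro x hx
    have h1 := hker x hx
    rw [hSg] at h1
    rw [map_neg, LinearMap.neg_apply, ← h1]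
  rw [hcontra y hy p q]
  exact hSMzero (-τ y) (fun j p'' q'' => hfactor j (-τ y) hz0np hKz0 q'' p'') p q
end
end

section
/- Serre-relations-free Kac–Moody symmetrization of Cartan data: let h be a finite-dimensional complex vector space with nondegenerate symmetric bilinear form (,), h_1,...,h_r ∈ h linearly independent, and m_1,...,m_p > 0 (p ≤ r), m = m_1+...+m_p. Then there exist a finite-dimensional vector space h̃ with nondegenerate symmetric bilinear form (,)_1, linearly independent h̃_1,...,h̃_m ∈ h̃, and an injective linear map s: h → h̃ such that s(h_i) = (1/m_i) Σ_{j=1}^{m_i} h̃_{m(i)+j} (where m(i) = m_1+...+m_{i-1}) for i ≤ p, (h̃_j, s(h'))_1 = (h_{c(j)}, h') for all h' ∈ h and 1 ≤ j ≤ m (c the coloring function with |c^{-1}(i)| = m_i), and (h',h'') = (s(h'), s(h''))_1 for all h', h'' ∈ h. -/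
open Finset

attribute [local instance] Classical.propDecidable

/-!
STATEMENT 17.  Symmetrization of Cartan data: `H` is a finite-dimensional
complex space with a nondegenerate symmetric bilinear form `B`, `h 1, …, h r`
are linearly independent vectors, `m : Fin p → ℕ` are positive multiplicities
(`p ≤ r`), `M = ∑ m i`, and `c : Fin M → Fin p` is the nondecreasing coloring
with fibers of sizes `m i`.  Then there is a finite-dimensional space (here
`Fin q → ℂ`) with a nondegenerate symmetric form `B'`, linearly independent
vectors `ht 1, …, ht M`, and an injective linear map `s : H → (Fin q → ℂ)` with
(a) `s (h i) = (1/mᵢ) ∑_{c j = i} ht j` for `i ≤ p`;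
(b) `B' (ht j) (s h') = B (h (c j)) h'` and `B h' h'' = B' (s h') (s h'')`. -/
theorem cartan_data_symmetrization
    {H : Type*} [AddCommGroup H] [Module ℂ H] [FiniteDimensional ℂ H]
    (B : H →ₗ[ℂ] H →ₗ[ℂ] ℂ)
    (hBsymm : ∀ x y : H, B x y = B y x)
    (hBnondeg : ∀ x : H, (∀ y : H, B x y = 0) → x = 0)
    {r p : ℕ} (hpr : p ≤ r)
    (h : Fin r → H) (hind : LinearIndependent ℂ h)
    (m : Fin p → ℕ) (hm : ∀ i, 0 < m i)
    {M : ℕ} (hM : M = ∑ i, m i)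
    (c : Fin M → Fin p) (hcmono : Monotone c)
    (hcfib : ∀ i : Fin p, (univ.filter (fun j => c j = i)).card = m i) :
    ∃ (q : ℕ) (B' : (Fin q → ℂ) →ₗ[ℂ] (Fin q → ℂ) →ₗ[ℂ] ℂ)
      (ht : Fin M → (Fin q → ℂ)) (s : H →ₗ[ℂ] (Fin q → ℂ)),
      (∀ x y, B' x y = B' y x) ∧
      (∀ x, (∀ y, B' x y = 0) → x = 0) ∧
      LinearIndependent ℂ ht ∧
      Function.Injective s ∧
      (∀ i : Fin p,
        s (h (Fin.castLE hpr i)) =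
          ((m i : ℂ))⁻¹ • ∑ j ∈ univ.filter (fun j => c j = i), ht j) ∧
      (∀ (j : Fin M) (x : H), B' (ht j) (s x) = B (h (Fin.castLE hpr (c j))) x) ∧
      (∀ x y : H, B x y = B' (s x) (s y)) := by
  classical
  set n := Module.finrank ℂ H with hn
  let φ : H ≃ₗ[ℂ] (Fin n → ℂ) := (Module.finBasis ℂ H).equivFun
  let E : (Fin (n + M) → ℂ) ≃ₗ[ℂ] ((Fin n → ℂ) × (Fin M → ℂ)) :=
    (LinearEquiv.funCongrLeft ℂ ℂ finSumFinEquiv).trans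
      (LinearEquiv.sumArrowLequivProdArrow _ _ ℂ ℂ)
  -- auxiliary data on the product space
  let w : Fin p → (Fin M → ℂ) := fun i k => if c k = i then 1 else 0
  let v : Fin M → (Fin M → ℂ) := fun j => Pi.single j 1 - (m (c j) : ℂ)⁻¹ • w (c j)
  let ht₀ : Fin M → ((Fin n → ℂ) × (Fin M → ℂ)) :=
    fun j => (φ (h (Fin.castLE hpr (c j))), v j)
  have hht₀1 : ∀ j, (ht₀ j).1 = φ (h (Fin.castLE hpr (c j))) := fun _ => rfl
  have hht₀2 : ∀ j, (ht₀ j).2 = v j := fun _ => rfl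
  have hmC : ∀ i : Fin p, (m i : ℂ) ≠ 0 := fun i => by
    exact_mod_cast (hm i).ne'
  -- the bilinear form on the product space
  let B'' : ((Fin n → ℂ) × (Fin M → ℂ)) →ₗ[ℂ] ((Fin n → ℂ) × (Fin M → ℂ)) →ₗ[ℂ] ℂ :=
    LinearMap.mk₂ ℂ
      (fun z y => B (φ.symm z.1) (φ.symm y.1) + ∑ j, z.2 j * y.2 j)
      (by
        intro z z' y
        simp only [Prod.fst_add, Prod.snd_add, map_add, LinearMap.add_apply,
          Pi.add_apply, add_mul, Finset.sum_add_distrib]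
        ring)
      (by
        intro a z y
        simp only [Prod.smul_fst, Prod.smul_snd, map_smul, LinearMap.smul_apply,
          Pi.smul_apply, smul_eq_mul, Finset.mul_sum, mul_add, mul_assoc]
        try ring)
      (by
        intro z y y'
        simp only [Prod.fst_add, Prod.snd_add, map_add, Pi.add_apply, mul_add,
          Finset.sum_add_distrib]
        try ring)
      (by
        intro a z y
        simp only [Prod.smul_fst, Prod.smul_snd, map_smul, LinearMap.smul_apply,
          Pi.smul_apply, smul_eq_mul, Finset.mul_sum, mul_add, mul_left_comm,
          mul_comm, mul_assoc]
        try ring)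
  have hB'' : ∀ z y, B'' z y = B (φ.symm z.1) (φ.symm y.1) + ∑ j, z.2 j * y.2 j :=
    fun z y => rfl
  let s₀ : H →ₗ[ℂ] ((Fin n → ℂ) × (Fin M → ℂ)) :=
    (LinearMap.inl ℂ _ _).comp φ.toLinearMap
  have hs₀ : ∀ x : H, s₀ x = (φ x, 0) := fun x => rfl
  -- sum of single over fiber
  have hsingle : ∀ i : Fin p,
      ∑ j ∈ univ.filter (fun j => c j = i), (Pi.single j 1 : Fin M → ℂ) = w i := by
    intro i
    funext k
    simp only [Finset.sum_apply, Pi.single_apply]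
    show _ = if c k = i then (1 : ℂ) else 0
    simp [Finset.sum_ite_eq, Finset.mem_filter]
  have hvsum : ∀ i : Fin p, ∑ j ∈ univ.filter (fun j => c j = i), v j = 0 := by
    intro i
    have h1 : ∑ j ∈ univ.filter (fun j => c j = i), ((m (c j) : ℂ)⁻¹ • w (c j))
        = (m i : ℂ) • ((m i : ℂ)⁻¹ • w i) := by
      rw [Finset.sum_congr rfl (fun j hj => by
        rw [(Finset.mem_filter.mp hj).2])]
      rw [Finset.sum_const, hcfib i, Nat.cast_smul_eq_nsmul]
    have h2 : ∑ j ∈ univ.filter (fun j => c j = i), v j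
        = ∑ j ∈ univ.filter (fun j => c j = i), (Pi.single j 1 : Fin M → ℂ)
          - ∑ j ∈ univ.filter (fun j => c j = i), ((m (c j) : ℂ)⁻¹ • w (c j)) :=
      Finset.sum_sub_distrib (fun j => (Pi.single j 1 : Fin M → ℂ)) (fun j => (m (c j) : ℂ)⁻¹ • w (c j))
    rw [h2, hsingle i, h1, smul_smul, mul_inv_cancel₀ (hmC i), one_smul, sub_self]
  have hhsum : ∀ i : Fin p,
      ∑ j ∈ univ.filter (fun j => c j = i), φ (h (Fin.castLE hpr (c j)))
        = (m i : ℂ) • φ (h (Fin.castLE hpr i)) := by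
    intro i
    rw [Finset.sum_congr rfl (fun j hj => by rw [(Finset.mem_filter.mp hj).2])]
    rw [Finset.sum_const, hcfib i, Nat.cast_smul_eq_nsmul]
  refine ⟨n + M, B''.compl₁₂ E.toLinearMap E.toLinearMap,
    fun j => E.symm (ht₀ j), E.symm.toLinearMap.comp s₀, ?_, ?_, ?_, ?_, ?_, ?_, ?_⟩
  · -- symmetry
    intro x y
    simp only [LinearMap.compl₁₂_apply, LinearEquiv.coe_coe, hB'']
    rw [hBsymm]
    congr 1
    exact Finset.sum_congr rfl fun j _ => mul_comm _ _
  · -- nondegeneracy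
    intro x hx
    have hEx : ∀ z, B'' (E x) z = 0 := by
      intro z
      have := hx (E.symm z)
      simpa only [LinearMap.compl₁₂_apply, LinearEquiv.coe_coe,
        LinearEquiv.apply_symm_apply] using this
    have h1 : (E x).1 = 0 := by
      have h0 : φ.symm (E x).1 = 0 := by
        apply hBnondeg
        intro y
        have := hEx (φ y, 0)
        simpa [hB''] using this
      have := congrArg φ h0
      simpa using this
    have h2 : (E x).2 = 0 := by
      funext k
      have := hEx (0, Pi.single k 1)
      simp only [hB''] at this
      simpa [Pi.single_apply, mul_ite, mul_one, mul_zero,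
        Finset.sum_ite_eq, Finset.sum_ite_eq'] using this
    have hE0 : E x = 0 := Prod.ext h1 h2
    have := congrArg E.symm hE0
    simpa using this
  · -- linear independence
    have hind₀ : LinearIndependent ℂ ht₀ := by
      rw [Fintype.linearIndependent_iff]
      intro a ha hk
      have ha1 : ∑ j, a j • (φ (h (Fin.castLE hpr (c j)))) = 0 := by
        have := congrArg Prod.fst ha
        simpa [Prod.fst_sum, hht₀1] using this
      have ha2 : ∑ j, a j • v j = 0 := by
        have := congrArg Prod.snd ha
        simpa [Prod.snd_sum, hht₀2] using this
      -- fiber sums vanish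
      have hfib : ∀ i : Fin p, ∑ j ∈ univ.filter (fun j => c j = i), a j = 0 := by
        have hφ : φ (∑ j, a j • h (Fin.castLE hpr (c j))) = 0 := by
          rw [map_sum]
          simpa [map_smul] using ha1
        have hz : ∑ j, a j • h (Fin.castLE hpr (c j)) = 0 := by
          have := congrArg φ.symm hφ; simpa using this
        have hregroup : ∑ i : Fin p,
            (∑ j ∈ univ.filter (fun j => c j = i), a j) • h (Fin.castLE hpr i) = 0 := by
          rw [← hz, ← Finset.sum_fiberwise univ c (fun j => a j • h (Fin.castLE hpr (c j)))]
          refine Finset.sum_congr rfl fun i _ => ?_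
          rw [Finset.sum_smul]
          exact Finset.sum_congr rfl fun j hj => by rw [(Finset.mem_filter.mp hj).2]
        have hcomp : LinearIndependent ℂ (h ∘ Fin.castLE hpr) :=
          hind.comp (Fin.castLE hpr) (Fin.castLE_injective hpr)
        intro i
        exact (Fintype.linearIndependent_iff.mp hcomp) _ hregroup i
      -- second component kills a
      have ha2' : ∑ j, a j • (Pi.single j 1 : Fin M → ℂ) = 0 := by
        have hsub : ∑ j, a j • ((m (c j) : ℂ)⁻¹ • w (c j)) = 0 := by
          rw [← Finset.sum_fiberwise univ c
            (fun j => a j • ((m (c j) : ℂ)⁻¹ • w (c j)))]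
          refine Finset.sum_eq_zero fun i _ => ?_
          have hcongr : ∑ j ∈ univ.filter (fun j => c j = i), a j • ((m (c j) : ℂ)⁻¹ • w (c j))
              = ∑ j ∈ univ.filter (fun j => c j = i), a j • ((m i : ℂ)⁻¹ • w i) :=
            Finset.sum_congr rfl fun j hj => by rw [(Finset.mem_filter.mp hj).2]
          rw [hcongr, ← Finset.sum_smul, hfib i, zero_smul]
        have hsplit : ∑ j, a j • v j
            = ∑ j, a j • (Pi.single j 1 : Fin M → ℂ)
              - ∑ j, a j • ((m (c j) : ℂ)⁻¹ • w (c j)) := by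
          rw [← Finset.sum_sub_distrib]
          exact Finset.sum_congr rfl fun j _ => by rw [← smul_sub]
        rw [hsplit, hsub, sub_zero] at ha2
        exact ha2
      have := congrFun ha2' hk
      simpa [Finset.sum_apply, Pi.single_apply, mul_ite, mul_one, mul_zero,
        Finset.sum_ite_eq, Finset.sum_ite_eq'] using this
    exact hind₀.map' E.symm.toLinearMap E.symm.ker
  · -- injectivity
    intro x y hxy
    have h1 := congrArg E hxy
    simp only [LinearMap.coe_comp, Function.comp_apply, LinearEquiv.coe_coe,
      LinearEquiv.apply_symm_apply] at h1
    rw [hs₀, hs₀] at h1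
    have h2 : φ x = φ y := congrArg Prod.fst h1
    exact φ.injective h2
  · -- (a)
    intro i
    have hsum : ∑ j ∈ univ.filter (fun j => c j = i), ht₀ j
        = ((m i : ℂ) • φ (h (Fin.castLE hpr i)), (0 : Fin M → ℂ)) := by
      rw [Prod.ext_iff]
      refine ⟨?_, ?_⟩
      · rw [Prod.fst_sum]
        simpa [hht₀1] using hhsum i
      · rw [Prod.snd_sum]
        simpa [hht₀2] using hvsum i
    have key : ((m i : ℂ))⁻¹ • ∑ j ∈ univ.filter (fun j => c j = i), E.symm (ht₀ j)
        = E.symm (φ (h (Fin.castLE hpr i)), 0) := by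
      rw [← map_sum, hsum, ← map_smul, Prod.smul_mk, smul_smul,
        inv_mul_cancel₀ (hmC i), one_smul, smul_zero]
    calc (E.symm.toLinearMap.comp s₀) (h (Fin.castLE hpr i))
        = E.symm (φ (h (Fin.castLE hpr i)), 0) := rfl
      _ = _ := key.symm
  · -- (b1)
    intro j x
    simp only [LinearMap.compl₁₂_apply, LinearEquiv.coe_coe, LinearMap.coe_comp,
      Function.comp_apply, LinearEquiv.apply_symm_apply, hB'', hs₀, hht₀1, hht₀2]
    simp
  · -- (b2)
    intro x y
    simp only [LinearMap.compl₁₂_apply, LinearEquiv.coe_coe, LinearMap.coe_comp,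
      Function.comp_apply, LinearEquiv.apply_symm_apply, hB'', hs₀]
    simp
end
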